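/- arXiv:0812.1363 — 10 statements merged into one kernel-verified Lean document; each statement's English description precedes it below -/
import Mathlib

section
/- Suppose R = 1, let P* > 0, and suppose β1(y0) > 0 for some y0 ∈ [0,m). Define F(s) = exp(−∫_0^s (γ'(y)+μ(y))/γ(y) dy). Then there exists a constant c > 0 such that the function p(s) = c·F(s)·∫_0^s β1(y)/(F(y)γ(y)) dy is continuously differentiable on [0,m], nonnegative, satisfies p(0) = 0, ∫_0^m p(s) ds = P*, and γ(s)p'(s) + (γ'(s)+μ(s))p(s) = β1(s)·∫_0^m β2(y)p(y) dy for all s ∈ [0,m]; i.e., p is an equilibrium profile of the separable model with total population size P*. -/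
open Set MeasureTheory intervalIntegral Filter

/-- If the frozen net reproduction number equals `1`, `P* > 0` and `β1` is positive
somewhere on `[0,m)`, then (a suitable positive multiple of)
`F(s)·∫_0^s β1(y)/(F(y)γ(y)) dy` is an equilibrium profile of the separable model
with total population size `P*`. -/
theorem exists_equilibrium_profile (m : ℝ) (hm : 0 < m)
    (γ γ' μ β1 β2 : ℝ → ℝ)
    (hγd : ∀ s ∈ Icc (0:ℝ) m, HasDerivWithinAt γ (γ' s) (Icc 0 m) s)
    (hγ'c : ContinuousOn γ' (Icc 0 m))
    (hγpos : ∀ s ∈ Icc (0:ℝ) m, 0 < γ s)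
    (hμc : ContinuousOn μ (Icc 0 m)) (hμnn : ∀ s ∈ Icc (0:ℝ) m, 0 ≤ μ s)
    (hβ1c : ContinuousOn β1 (Icc 0 m)) (hβ1nn : ∀ s ∈ Icc (0:ℝ) m, 0 ≤ β1 s)
    (hβ2c : ContinuousOn β2 (Icc 0 m)) (hβ2nn : ∀ s ∈ Icc (0:ℝ) m, 0 ≤ β2 s)
    (hR : (∫ s in (0:ℝ)..m, ∫ y in (0:ℝ)..s,
      (β1 y * β2 s / γ s) * Real.exp (-∫ z in y..s, μ z / γ z)) = 1)
    (Pstar : ℝ) (hPstar : 0 < Pstar)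
    (hβ1pos : ∃ y0 ∈ Ico (0:ℝ) m, 0 < β1 y0)
    (F : ℝ → ℝ)
    (hF : ∀ s, F s = Real.exp (-∫ y in (0:ℝ)..s, (γ' y + μ y) / γ y)) :
    ∃ c > (0:ℝ), ∃ p p' : ℝ → ℝ,
      (∀ s, p s = c * F s * ∫ y in (0:ℝ)..s, β1 y / (F y * γ y)) ∧
      ContinuousOn p' (Icc 0 m) ∧
      (∀ s ∈ Icc (0:ℝ) m, HasDerivWithinAt p (p' s) (Icc 0 m) s) ∧
      (∀ s ∈ Icc (0:ℝ) m, 0 ≤ p s) ∧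
      p 0 = 0 ∧
      (∫ s in (0:ℝ)..m, p s) = Pstar ∧
      (∀ s ∈ Icc (0:ℝ) m,
        γ s * p' s + (γ' s + μ s) * p s = β1 s * ∫ y in (0:ℝ)..m, β2 y * p y) := by
  have hγc : ContinuousOn γ (Icc 0 m) := fun s hs => (hγd s hs).continuousWithinAt
  -- basic nonvanishing
  have hγne : ∀ s ∈ Icc (0:ℝ) m, γ s ≠ 0 := fun s hs => (hγpos s hs).ne'
  have hFpos : ∀ s, 0 < F s := fun s => (hF s) ▸ Real.exp_pos _
  have hFne : ∀ s, F s ≠ 0 := fun s => (hFpos s).ne'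
  set h : ℝ → ℝ := fun y => (γ' y + μ y) / γ y with hh_def
  have hhc : ContinuousOn h (Icc 0 m) := ((hγ'c.add hμc).div hγc hγne)
  set g : ℝ → ℝ := fun y => β1 y / (F y * γ y) with hg_def
  -- continuity of F
  have hsub : ∀ a ∈ Icc (0:ℝ) m, ∀ b ∈ Icc (0:ℝ) m, uIcc a b ⊆ Icc 0 m := by
    intro a ha b hb
    rw [← uIcc_of_le hm.le]
    exact uIcc_subset_uIcc (by rwa [uIcc_of_le hm.le]) (by rwa [uIcc_of_le hm.le])
  have hmem0 : (0:ℝ) ∈ Icc (0:ℝ) m := ⟨le_refl _, hm.le⟩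
  have hmemm : m ∈ Icc (0:ℝ) m := ⟨hm.le, le_refl _⟩
  have hhint : ∀ a ∈ Icc (0:ℝ) m, ∀ b ∈ Icc (0:ℝ) m, IntervalIntegrable h volume a b :=
    fun a ha b hb => (hhc.mono (hsub a ha b hb)).intervalIntegrable
  -- the primitive A of h
  set A : ℝ → ℝ := fun s => ∫ y in (0:ℝ)..s, h y with hA_def
  have hAd : ∀ s ∈ Icc (0:ℝ) m, HasDerivWithinAt A (h s) (Icc 0 m) s := by
    intro s hs
    haveI : Fact (s ∈ Icc (0:ℝ) m) := ⟨hs⟩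
    exact intervalIntegral.integral_hasDerivWithinAt_right (hhint 0 hmem0 s hs)
      (hhc.stronglyMeasurableAtFilter_nhdsWithin measurableSet_Icc s) (hhc s hs)
  have hFeq : F = fun s => Real.exp (-(A s)) := funext hF
  have hFd : ∀ s ∈ Icc (0:ℝ) m, HasDerivWithinAt F (-h s * F s) (Icc 0 m) s := by
    intro s hs
    rw [hFeq]
    have := ((hAd s hs).neg).exp
    simpa [mul_comm] using this
  have hFc : ContinuousOn F (Icc 0 m) := fun s hs => (hFd s hs).continuousWithinAt
  -- g
  have hgc : ContinuousOn g (Icc 0 m) :=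
    hβ1c.div (hFc.mul hγc) (fun s hs => mul_ne_zero (hFne s) (hγne s hs))
  have hgnn : ∀ s ∈ Icc (0:ℝ) m, 0 ≤ g s := fun s hs =>
    div_nonneg (hβ1nn s hs) (mul_nonneg (hFpos s).le (hγpos s hs).le)
  have hgint : ∀ a ∈ Icc (0:ℝ) m, ∀ b ∈ Icc (0:ℝ) m, IntervalIntegrable g volume a b :=
    fun a ha b hb => (hgc.mono (hsub a ha b hb)).intervalIntegrable
  set I : ℝ → ℝ := fun s => ∫ y in (0:ℝ)..s, g y with hI_def
  have hId : ∀ s ∈ Icc (0:ℝ) m, HasDerivWithinAt I (g s) (Icc 0 m) s := by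
    intro s hs
    haveI : Fact (s ∈ Icc (0:ℝ) m) := ⟨hs⟩
    exact intervalIntegral.integral_hasDerivWithinAt_right (hgint 0 hmem0 s hs)
      (hgc.stronglyMeasurableAtFilter_nhdsWithin measurableSet_Icc s) (hgc s hs)
  have hIc : ContinuousOn I (Icc 0 m) := fun s hs => (hId s hs).continuousWithinAt
  have hInn : ∀ s ∈ Icc (0:ℝ) m, 0 ≤ I s := by
    intro s hs
    exact intervalIntegral.integral_nonneg hs.1
      (fun u hu => hgnn u ⟨hu.1, hu.2.trans hs.2⟩)
  -- G and its derivative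
  set G : ℝ → ℝ := fun s => F s * I s with hG_def
  set G' : ℝ → ℝ := fun s => -h s * F s * I s + F s * g s with hG'_def
  have hGd : ∀ s ∈ Icc (0:ℝ) m, HasDerivWithinAt G (G' s) (Icc 0 m) s :=
    fun s hs => (hFd s hs).mul (hId s hs)
  have hGc : ContinuousOn G (Icc 0 m) := hFc.mul hIc
  have hG'c : ContinuousOn G' (Icc 0 m) :=
    ((hhc.neg.mul hFc).mul hIc).add (hFc.mul hgc)
  have hGnn : ∀ s ∈ Icc (0:ℝ) m, 0 ≤ G s :=
    fun s hs => mul_nonneg (hFpos s).le (hInn s hs)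
  -- the pointwise ODE for G
  have hODE : ∀ s ∈ Icc (0:ℝ) m, γ s * G' s + (γ' s + μ s) * G s = β1 s := by
    intro s hs
    have h1 := hγne s hs
    have h2 := hFne s
    simp only [hG'_def, hG_def, hh_def, hg_def]
    field_simp
    ring
  -- log formula
  have hlog : ∀ y ∈ Icc (0:ℝ) m, ∀ s ∈ Icc (0:ℝ) m, y ≤ s →
      (∫ z in y..s, γ' z / γ z) = Real.log (γ s) - Real.log (γ y) := by
    intro y hy s hs hys
    have hsubset : Icc y s ⊆ Icc 0 m := Icc_subset_Icc hy.1 hs.2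
    apply intervalIntegral.integral_eq_sub_of_hasDeriv_right_of_le hys
    · exact fun x hx => ((Real.continuousOn_log.comp hγc
        (fun u hu => hγne u hu)).mono hsubset) x hx
    · intro x hx
      have hxm : x ∈ Icc (0:ℝ) m := hsubset (Ioo_subset_Icc_self hx)
      have hxint : Icc (0:ℝ) m ∈ nhds x := by
        refine Icc_mem_nhds ?_ ?_
        · exact lt_of_le_of_lt hy.1 hx.1
        · exact lt_of_lt_of_le hx.2 hs.2
      have := ((hγd x hxm).hasDerivAt hxint).log (hγne x hxm)
      exact this.hasDerivWithinAt
    · exact ((hγ'c.div hγc hγne).mono (hsub y hy s hs)).intervalIntegrable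
  -- F ratio formula
  have hFratio : ∀ y ∈ Icc (0:ℝ) m, ∀ s ∈ Icc (0:ℝ) m, y ≤ s →
      F s = F y * (γ y / γ s) * Real.exp (-∫ z in y..s, μ z / γ z) := by
    intro y hy s hs hys
    have hsubset : uIcc y s ⊆ Icc 0 m := hsub y hy s hs
    have hint1 : IntervalIntegrable (fun z => γ' z / γ z) volume y s :=
      ((hγ'c.div hγc hγne).mono hsubset).intervalIntegrable
    have hint2 : IntervalIntegrable (fun z => μ z / γ z) volume y s :=
      ((hμc.div hγc hγne).mono hsubset).intervalIntegrable
    have hsplit : A s = A y + ∫ z in y..s, h z := by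
      rw [hA_def]
      exact (intervalIntegral.integral_add_adjacent_intervals
        (hhint 0 hmem0 y hy) (hhint y hy s hs)).symm
    have hhsum : (∫ z in y..s, h z)
        = (∫ z in y..s, γ' z / γ z) + ∫ z in y..s, μ z / γ z := by
      rw [← intervalIntegral.integral_add hint1 hint2]
      apply intervalIntegral.integral_congr
      intro z hz
      simp only [hh_def]
      rw [add_div]
    rw [hF s, hF y]
    show Real.exp (-(A s)) = Real.exp (-(A y)) * (γ y / γ s) * Real.exp (-∫ z in y..s, μ z / γ z)
    rw [hsplit, hhsum, hlog y hy s hs hys]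
    have h1 : γ y / γ s = Real.exp (Real.log (γ y) - Real.log (γ s)) := by
      rw [Real.exp_sub, Real.exp_log (hγpos y hy), Real.exp_log (hγpos s hs)]
    rw [h1, ← Real.exp_add, ← Real.exp_add]
    congr 1
    ring
  -- the key identity: ∫ β2 G = R = 1
  have hRG : (∫ s in (0:ℝ)..m, β2 s * G s) = 1 := by
    rw [← hR]
    apply intervalIntegral.integral_congr
    intro s hs
    rw [uIcc_of_le hm.le] at hs
    show β2 s * G s = ∫ y in (0:ℝ)..s, β1 y * β2 s / γ s * Real.exp (-∫ z in y..s, μ z / γ z)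
    have e0 : β2 s * G s = ∫ y in (0:ℝ)..s, (β2 s * F s) * g y := by
      rw [intervalIntegral.integral_const_mul]
      simp only [hG_def, hI_def]; ring
    rw [e0]
    apply intervalIntegral.integral_congr
    intro y hy
    rw [uIcc_of_le hs.1] at hy
    have hym : y ∈ Icc (0:ℝ) m := ⟨hy.1, hy.2.trans hs.2⟩
    rw [hFratio y hym s hs hy.2]
    simp only [hg_def]
    field_simp [hFne y, hγne y hym, hγne s hs]
  -- positivity of J = ∫ G
  have hJ : 0 < ∫ s in (0:ℝ)..m, G s := by
    obtain ⟨y0, hy0, hβ1y0⟩ := hβ1pos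
    have hy0m : y0 ∈ Icc (0:ℝ) m := ⟨hy0.1, hy0.2.le⟩
    have hgy0 : 0 < g y0 := div_pos hβ1y0 (mul_pos (hFpos y0) (hγpos y0 hy0m))
    -- find b in (y0, m) with g > 0 on [y0, b]
    have hcont : ContinuousWithinAt g (Icc 0 m) y0 := hgc y0 hy0m
    have hev : ∀ᶠ x in nhdsWithin y0 (Icc 0 m), 0 < g x :=
      hcont.eventually (Filter.Tendsto.eventually_const_lt hgy0 tendsto_id) |>.mono (fun x hx => hx)
    obtain ⟨U, hU, hUpos⟩ := eventually_nhdsWithin_iff.mp hev |>.exists_mem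
    obtain ⟨δ, hδ, hball⟩ := Metric.mem_nhds_iff.mp hU
    set b : ℝ := min (y0 + δ/2) ((y0 + m)/2) with hb_def
    have hby0 : y0 < b := lt_min (by linarith) (by linarith [hy0.2])
    have hbm : b < m := lt_of_le_of_lt (min_le_right _ _) (by linarith [hy0.2])
    have hbmem : b ∈ Icc (0:ℝ) m := ⟨hy0.1.trans hby0.le, hbm.le⟩
    have hgpos : ∀ x ∈ Icc y0 b, 0 < g x := by
      intro x hx
      have hxm : x ∈ Icc (0:ℝ) m := ⟨hy0.1.trans hx.1, hx.2.trans hbm.le⟩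
      refine hUpos x ?_ hxm
      apply hball
      rw [Metric.mem_ball, Real.dist_eq, abs_lt]
      constructor
      · have := hx.1; linarith
      · have : x ≤ y0 + δ/2 := hx.2.trans (min_le_left _ _); linarith
    have hIb : 0 < ∫ y in y0..b, g y := by
      apply intervalIntegral.intervalIntegral_pos_of_pos_on
        (hgint y0 hy0m b hbmem) (fun x hx => hgpos x (Ioo_subset_Icc_self hx)) hby0
    have hIs : ∀ s ∈ Icc b m, 0 < I s := by
      intro s hsm
      have hsmem : s ∈ Icc (0:ℝ) m := ⟨hbmem.1.trans hsm.1, hsm.2⟩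
      have e1 : I s = (∫ y in (0:ℝ)..y0, g y) + ((∫ y in y0..b, g y) + ∫ y in b..s, g y) := by
        rw [intervalIntegral.integral_add_adjacent_intervals (hgint y0 hy0m b hbmem)
          (hgint b hbmem s hsmem),
          intervalIntegral.integral_add_adjacent_intervals (hgint 0 hmem0 y0 hy0m)
          (hgint y0 hy0m s hsmem)]
      have n1 : 0 ≤ ∫ y in (0:ℝ)..y0, g y :=
        intervalIntegral.integral_nonneg hy0.1
          (fun u hu => hgnn u ⟨hu.1, hu.2.trans hy0m.2⟩)
      have n2 : 0 ≤ ∫ y in b..s, g y :=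
        intervalIntegral.integral_nonneg hsm.1
          (fun u hu => hgnn u ⟨hbmem.1.trans hu.1, hu.2.trans hsm.2⟩)
      rw [e1]
      linarith
    have hsplitG : (∫ s in (0:ℝ)..m, G s)
        = (∫ s in (0:ℝ)..b, G s) + ∫ s in b..m, G s :=
      (intervalIntegral.integral_add_adjacent_intervals
        ((hGc.mono (hsub 0 hmem0 b hbmem)).intervalIntegrable)
        ((hGc.mono (hsub b hbmem m hmemm)).intervalIntegrable)).symm
    have hpos2 : 0 < ∫ s in b..m, G s := by
      apply intervalIntegral.intervalIntegral_pos_of_pos_on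
        ((hGc.mono (hsub b hbmem m hmemm)).intervalIntegrable)
        (fun x hx => mul_pos (hFpos x) (hIs x (Ioo_subset_Icc_self hx))) hbm
    have hpos1 : 0 ≤ ∫ s in (0:ℝ)..b, G s :=
      intervalIntegral.integral_nonneg hbmem.1
        (fun u hu => hGnn u ⟨hu.1, hu.2.trans hbmem.2⟩)
    rw [hsplitG]; linarith
  -- put everything together
  set J : ℝ := ∫ s in (0:ℝ)..m, G s with hJ_def
  set c : ℝ := Pstar / J with hc_def
  have hcpos : 0 < c := div_pos hPstar hJ
  refine ⟨c, hcpos, fun s => c * G s, fun s => c * G' s, ?_, ?_, ?_, ?_, ?_, ?_, ?_⟩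
  · intro s; simp only [hG_def, hI_def]; ring
  · exact continuousOn_const.mul hG'c
  · exact fun s hs => (hGd s hs).const_mul c
  · exact fun s hs => mul_nonneg hcpos.le (hGnn s hs)
  · simp [hG_def, hI_def]
  · rw [intervalIntegral.integral_const_mul, ← hJ_def, hc_def, div_mul_cancel₀ _ hJ.ne']
  · intro s hs
    have hβ2p : (∫ y in (0:ℝ)..m, β2 y * (c * G y)) = c := by
      have : (∫ y in (0:ℝ)..m, β2 y * (c * G y)) = ∫ y in (0:ℝ)..m, c * (β2 y * G y) := by
        apply intervalIntegral.integral_congr; intro y _; ring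
      rw [this, intervalIntegral.integral_const_mul, hRG, mul_one]
    rw [hβ2p]
    linear_combination c * hODE s hs
end

section
/- Suppose p : [0,m] → ℝ is continuously differentiable, nonnegative, not identically zero, satisfies p(0) = 0 and γ(s)p'(s) + (γ'(s)+μ(s))p(s) = β1(s)·∫_0^m β2(y)p(y) dy for all s ∈ [0,m]. Then ∫_0^m β2(y)p(y) dy > 0 and R = 1. -/
open Set MeasureTheory intervalIntegral Filter

/-- Necessity of the condition `R = 1`: if `p` is a nontrivial nonnegative
continuously differentiable solution of the equilibrium equation with `p(0) = 0`,
then `∫_0^m β2 p > 0` and the frozen net reproduction number equals `1`. -/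
theorem equilibrium_implies_R_eq_one (m : ℝ) (hm : 0 < m)
    (γ γ' μ β1 β2 : ℝ → ℝ)
    (hγd : ∀ s ∈ Icc (0:ℝ) m, HasDerivWithinAt γ (γ' s) (Icc 0 m) s)
    (hγ'c : ContinuousOn γ' (Icc 0 m))
    (hγpos : ∀ s ∈ Icc (0:ℝ) m, 0 < γ s)
    (hμc : ContinuousOn μ (Icc 0 m)) (hμnn : ∀ s ∈ Icc (0:ℝ) m, 0 ≤ μ s)
    (hβ1c : ContinuousOn β1 (Icc 0 m)) (hβ1nn : ∀ s ∈ Icc (0:ℝ) m, 0 ≤ β1 s)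
    (hβ2c : ContinuousOn β2 (Icc 0 m)) (hβ2nn : ∀ s ∈ Icc (0:ℝ) m, 0 ≤ β2 s)
    (p p' : ℝ → ℝ)
    (hp'c : ContinuousOn p' (Icc 0 m))
    (hpd : ∀ s ∈ Icc (0:ℝ) m, HasDerivWithinAt p (p' s) (Icc 0 m) s)
    (hpnn : ∀ s ∈ Icc (0:ℝ) m, 0 ≤ p s)
    (hpne : ∃ s ∈ Icc (0:ℝ) m, p s ≠ 0)
    (hp0 : p 0 = 0)
    (hode : ∀ s ∈ Icc (0:ℝ) m,
      γ s * p' s + (γ' s + μ s) * p s = β1 s * ∫ y in (0:ℝ)..m, β2 y * p y) :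
    (0 < ∫ y in (0:ℝ)..m, β2 y * p y) ∧
    (∫ s in (0:ℝ)..m, ∫ y in (0:ℝ)..s,
      (β1 y * β2 s / γ s) * Real.exp (-∫ z in y..s, μ z / γ z)) = 1 := by
  set c : ℝ := ∫ y in (0:ℝ)..m, β2 y * p y with hcdef
  -- projection onto [0, m]
  set π : ℝ → ℝ := fun z => max 0 (min z m) with hπdef
  have hπcont : Continuous π := continuous_const.max (continuous_id.min continuous_const)
  have hπmem : ∀ z, π z ∈ Icc (0:ℝ) m := fun z =>
    ⟨le_max_left _ _, max_le hm.le (min_le_right z m)⟩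
  have hπeq : ∀ z ∈ Icc (0:ℝ) m, π z = z := by
    intro z hz
    simp only [hπdef]
    rw [min_eq_left hz.2, max_eq_right hz.1]
  have hγc : ContinuousOn γ (Icc 0 m) := fun s hs => (hγd s hs).continuousWithinAt
  have hpc : ContinuousOn p (Icc 0 m) := fun s hs => (hpd s hs).continuousWithinAt
  have hγπ : Continuous (fun z => γ (π z)) := hγc.comp_continuous hπcont hπmem
  have hμπ : Continuous (fun z => μ (π z)) := hμc.comp_continuous hπcont hπmem
  have hb1 : Continuous (fun z => β1 (π z)) := hβ1c.comp_continuous hπcont hπmem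
  have hγπpos : ∀ z, (0:ℝ) < γ (π z) := fun z => hγpos _ (hπmem z)
  set h : ℝ → ℝ := fun z => μ (π z) / γ (π z) with hhdef
  have hhcont : Continuous h := hμπ.div hγπ fun z => (hγπpos z).ne'
  set F : ℝ → ℝ := fun s => ∫ z in (0:ℝ)..s, h z with hFdef
  have hFd : ∀ s, HasDerivAt F (h s) s := fun s =>
    (hhcont.integral_hasStrictDerivAt 0 s).hasDerivAt
  set E : ℝ → ℝ := fun s => Real.exp (F s) with hEdef
  have hEpos : ∀ s, 0 < E s := fun s => Real.exp_pos _
  have hEd : ∀ s, HasDerivAt E (h s * E s) s := fun s => by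
    simpa [hEdef, mul_comm] using (hFd s).exp
  have hEcont : Continuous E := continuous_iff_continuousAt.2 fun s => (hEd s).continuousAt
  set w : ℝ → ℝ := fun s => E s * (γ s * p s) with hwdef
  have hwd : ∀ s ∈ Icc (0:ℝ) m, HasDerivWithinAt w (E s * (β1 s * c)) (Icc 0 m) s := by
    intro s hs
    have h1 := (hEd s).hasDerivWithinAt.mul ((hγd s hs).mul (hpd s hs))
    have hγne : γ s ≠ 0 := (hγpos s hs).ne'
    have hhs : h s = μ s / γ s := by simp only [hhdef]; rw [hπeq s hs]
    have heq : h s * E s * (γ s * p s) + E s * (γ' s * p s + γ s * p' s)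
        = E s * (β1 s * c) := by
      rw [hhs]
      have hode' := hode s hs
      field_simp
      linear_combination E s * hode'
    rw [← heq]
    exact h1
  have hwcont : ContinuousOn w (Icc 0 m) := fun s hs => (hwd s hs).continuousWithinAt
  have hw0 : w 0 = 0 := by simp [hwdef, hp0]
  -- the solution formula
  have key : ∀ s ∈ Icc (0:ℝ) m, w s = c * ∫ y in (0:ℝ)..s, E y * β1 (π y) := by
    intro s hs
    have hsub : Icc (0:ℝ) s ⊆ Icc 0 m := Icc_subset_Icc le_rfl hs.2
    have hgcont : Continuous fun y => E y * (β1 (π y) * c) :=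
      hEcont.mul (hb1.mul continuous_const)
    have ftc := intervalIntegral.integral_eq_sub_of_hasDeriv_right_of_le hs.1
      (hwcont.mono hsub)
      (fun x hx => by
        have hx0 : (0:ℝ) < x := hx.1
        have hxm : x < m := lt_of_lt_of_le hx.2 hs.2
        have hxmem : x ∈ Icc (0:ℝ) m := ⟨hx0.le, hxm.le⟩
        have hd := (hwd x hxmem).hasDerivAt (Icc_mem_nhds hx0 hxm)
        rw [hπeq x hxmem]
        exact hd.hasDerivWithinAt)
      (hgcont.intervalIntegrable 0 s)
    rw [hw0, sub_zero] at ftc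
    rw [← ftc]
    rw [show (fun y => E y * (β1 (π y) * c)) = fun y => c * (E y * β1 (π y)) from
      funext fun y => by ring]
    rw [intervalIntegral.integral_const_mul]
  -- c > 0
  have hc0 : 0 ≤ c := intervalIntegral.integral_nonneg hm.le fun u hu =>
    mul_nonneg (hβ2nn u hu) (hpnn u hu)
  have hcne : c ≠ 0 := by
    intro h0
    obtain ⟨s0, hs0, hps0⟩ := hpne
    have hk := key s0 hs0
    rw [h0, zero_mul] at hk
    have : E s0 * (γ s0 * p s0) = 0 := hk
    rcases mul_eq_zero.1 this with h' | h'
    · exact (hEpos s0).ne' h'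
    · rcases mul_eq_zero.1 h' with h'' | h''
      · exact (hγpos s0 hs0).ne' h''
      · exact hps0 h''
  have hcpos : 0 < c := lt_of_le_of_ne hc0 (Ne.symm hcne)
  refine ⟨hcpos, ?_⟩
  -- inner integral identity
  have hinner : ∀ s ∈ Icc (0:ℝ) m,
      (∫ y in (0:ℝ)..s, (β1 y * β2 s / γ s) * Real.exp (-∫ z in y..s, μ z / γ z))
        = β2 s * p s / c := by
    intro s hs
    have hγne : γ s ≠ 0 := (hγpos s hs).ne'
    have hEne : E s ≠ 0 := (hEpos s).ne'
    have hcongr : EqOn (fun y => (β1 y * β2 s / γ s) * Real.exp (-∫ z in y..s, μ z / γ z))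
        (fun y => (β2 s / (γ s * E s)) * (E y * β1 (π y))) (uIcc 0 s) := by
      intro y hy
      rw [uIcc_of_le hs.1] at hy
      have hymem : y ∈ Icc (0:ℝ) m := ⟨hy.1, hy.2.trans hs.2⟩
      have hys : y ≤ s := hy.2
      have hInt : (∫ z in y..s, μ z / γ z) = F s - F y := by
        have h1 : (∫ z in y..s, μ z / γ z) = ∫ z in y..s, h z := by
          apply intervalIntegral.integral_congr
          intro z hz
          rw [uIcc_of_le hys] at hz
          have hzmem : z ∈ Icc (0:ℝ) m := ⟨hy.1.trans hz.1, hz.2.trans hs.2⟩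
          simp only [hhdef]
          rw [hπeq z hzmem]
        rw [h1]
        rw [intervalIntegral.integral_interval_sub_left (hhcont.intervalIntegrable 0 s)
          (hhcont.intervalIntegrable 0 y)]
      simp only
      rw [hInt, neg_sub, Real.exp_sub, hπeq y hymem]
      show (β1 y * β2 s / γ s) * (E y / E s) = (β2 s / (γ s * E s)) * (E y * β1 y)
      field_simp
    rw [intervalIntegral.integral_congr hcongr, intervalIntegral.integral_const_mul]
    have hk := key s hs
    have hI : (∫ y in (0:ℝ)..s, E y * β1 (π y)) = E s * (γ s * p s) / c := by
      rw [eq_div_iff hcne]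
      have hk' : E s * (γ s * p s) = c * ∫ y in (0:ℝ)..s, E y * β1 (π y) := hk
      rw [hk']; ring
    rw [hI]
    field_simp
  have hfinal : (∫ s in (0:ℝ)..m, ∫ y in (0:ℝ)..s,
      (β1 y * β2 s / γ s) * Real.exp (-∫ z in y..s, μ z / γ z))
      = ∫ s in (0:ℝ)..m, β2 s * p s / c := by
    apply intervalIntegral.integral_congr
    intro s hsu
    rw [uIcc_of_le hm.le] at hsu
    exact hinner s hsu
  rw [hfinal]
  rw [intervalIntegral.integral_div]
  rw [← hcdef]
  exact div_self hcne
end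

section
/- Define K(λ) = ∫_0^m b2(s) ∫_0^s (b1(y)/γ(y)) · exp(−∫_y^s (λ+γ'(z)+μ(z))/γ(z) dz) dy ds for λ ∈ ℝ. Assume there exist y0 < s0 in [0,m] with b1(y0)·b2(s0) > 0. Then K is strictly decreasing on ℝ, K(λ) → 0 as λ → +∞, K(λ) → +∞ as λ → −∞, and the characteristic equation K(λ) = 1 has a unique real solution λ0; moreover λ0 > 0 if K(0) > 1, and λ0 < 0 if K(0) < 1. -/
open Set MeasureTheory intervalIntegral Filter

set_option maxHeartbeats 1000000

lemma exists_subinterval_ge {f : ℝ → ℝ} {p q x : ℝ} (hx : x ∈ Icc p q)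
    (hf : ContinuousOn f (Icc p q)) (hfx : 0 < f x) (hlt : p < q) :
    ∃ u v, p ≤ u ∧ u < v ∧ v ≤ q ∧ x ∈ Icc u v ∧ ∀ z ∈ Icc u v, f x / 2 ≤ f z := by
  have hev : {z | f x / 2 < f z} ∈ nhdsWithin x (Icc p q) :=
    (hf x hx).eventually (eventually_gt_nhds (by linarith))
  rcases Metric.mem_nhdsWithin_iff.mp hev with ⟨ε, hε, hsub⟩
  have hball : ∀ z, z ∈ Icc p q → dist z x < ε → f x / 2 < f z := fun z hz hd =>
    hsub ⟨Metric.mem_ball.mpr hd, hz⟩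
  rcases lt_or_eq_of_le hx.2 with hxq | hxq
  · refine ⟨x, min q (x + ε/2), hx.1, ?_, min_le_left _ _, ⟨le_refl x, ?_⟩, ?_⟩
    · exact lt_min hxq (by linarith)
    · exact le_min hxq.le (by linarith)
    · intro z hz
      have hzq : z ∈ Icc p q := ⟨hx.1.trans hz.1, hz.2.trans (min_le_left _ _)⟩
      have hd : dist z x < ε := by
        rw [Real.dist_eq, abs_of_nonneg (by linarith [hz.1])]
        have := hz.2.trans (min_le_right _ _)
        linarith
      exact (hball z hzq hd).le
  · have hpx : p < x := hxq ▸ hlt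
    refine ⟨max p (x - ε/2), x, le_max_left _ _, ?_, hxq ▸ hx.2, ⟨?_, le_refl x⟩, ?_⟩
    · exact max_lt hpx (by linarith)
    · exact max_le hx.1 (by linarith)
    · intro z hz
      have hzq : z ∈ Icc p q := ⟨le_trans (le_max_left _ _) hz.1, hz.2.trans hx.2⟩
      have hd : dist z x < ε := by
        rw [Real.dist_eq, abs_of_nonpos (by linarith [hz.2])]
        have := le_trans (le_max_right _ _) hz.1
        linarith
      exact (hball z hzq hd).le

lemma integral_pos_of_pos_at {f : ℝ → ℝ} {p q x : ℝ} (hx : x ∈ Icc p q)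
    (hf : ContinuousOn f (Icc p q)) (hnn : ∀ z ∈ Icc p q, 0 ≤ f z)
    (hfx : 0 < f x) (hlt : p < q) : 0 < ∫ z in p..q, f z := by
  obtain ⟨u, v, hpu, huv, hvq, -, hge⟩ := exists_subinterval_ge hx hf hfx hlt
  have hiI : ∀ a b : ℝ, p ≤ a → a ≤ b → b ≤ q → IntervalIntegrable f volume a b := by
    intro a b h1 h2 h3
    exact (hf.mono (by rw [uIcc_of_le h2]; exact Icc_subset_Icc h1 h3)).intervalIntegrable
  have e1 : (∫ z in p..u, f z) + ∫ z in u..q, f z = ∫ z in p..q, f z :=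
    integral_add_adjacent_intervals (hiI p u le_rfl hpu (huv.le.trans hvq))
      (hiI u q hpu (huv.le.trans hvq) le_rfl)
  have e2 : (∫ z in u..v, f z) + ∫ z in v..q, f z = ∫ z in u..q, f z :=
    integral_add_adjacent_intervals (hiI u v hpu huv.le hvq) (hiI v q (hpu.trans huv.le) hvq le_rfl)
  have n1 : 0 ≤ ∫ z in p..u, f z :=
    intervalIntegral.integral_nonneg hpu (fun z hz => hnn z ⟨hz.1, hz.2.trans (huv.le.trans hvq)⟩)
  have n2 : 0 ≤ ∫ z in v..q, f z :=
    intervalIntegral.integral_nonneg hvq (fun z hz => hnn z ⟨(hpu.trans (huv.le.trans hz.1)), hz.2⟩)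
  have n3 : (v - u) * f x / 2 ≤ ∫ z in u..v, f z := by
    have := intervalIntegral.integral_mono_on (f := fun _ => f x / 2) huv.le
      intervalIntegrable_const (hiI u v hpu huv.le hvq) (fun z hz => hge z hz)
    simpa [intervalIntegral.integral_const, smul_eq_mul] using this
  nlinarith [sub_pos.mpr huv]


lemma exists_cont_ext {m : ℝ} (hm : (0:ℝ) ≤ m) {f : ℝ → ℝ} (hf : ContinuousOn f (Icc 0 m)) :
    ∃ g : ℝ → ℝ, Continuous g ∧ ∀ x ∈ Icc (0:ℝ) m, g x = f x :=
  ⟨IccExtend hm (restrict (Icc 0 m) f),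
   Continuous.Icc_extend' (continuousOn_iff_continuous_restrict.mp hf),
   fun x hx => by rw [IccExtend_of_mem hm _ hx]; rfl⟩

lemma core_char (m : ℝ) (hm : 0 < m) (a b c d : ℝ → ℝ)
    (ha : Continuous a) (hb : Continuous b) (hc : Continuous c) (hd : Continuous d)
    (hamono : StrictMonoOn a (Icc 0 m))
    (hcnn : ∀ y ∈ Icc (0:ℝ) m, 0 ≤ c y) (hdnn : ∀ s ∈ Icc (0:ℝ) m, 0 ≤ d s)
    (y0 s0 : ℝ) (hy0 : y0 ∈ Icc (0:ℝ) m) (hs0 : s0 ∈ Icc (0:ℝ) m) (hys : y0 < s0)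
    (hcpos : 0 < c y0) (hdpos : 0 < d s0) (K : ℝ → ℝ)
    (hK : ∀ lam, K lam = ∫ s in (0:ℝ)..m, d s * ∫ y in (0:ℝ)..s,
      c y * Real.exp (-(lam * (a s - a y) + (b s - b y)))) :
    StrictAnti K ∧ Tendsto K atTop (nhds 0) ∧ Tendsto K atBot atTop ∧
    ∃ lam0 : ℝ, K lam0 = 1 ∧ (∀ lam, K lam = 1 → lam = lam0) ∧
      (1 < K 0 → 0 < lam0) ∧ (K 0 < 1 → lam0 < 0) := by
  set E : ℝ → ℝ → ℝ → ℝ := fun lam y s => c y * Real.exp (-(lam * (a s - a y) + (b s - b y)))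
    with hE
  set Q : ℝ → ℝ → ℝ := fun lam s => ∫ y in (0:ℝ)..s, E lam y s with hQ
  have hKQ : ∀ lam, K lam = ∫ s in (0:ℝ)..m, d s * Q lam s := hK
  -- continuity
  have hEc : Continuous fun p : (ℝ × ℝ) × ℝ => E p.1.1 p.2 p.1.2 := by
    simp only [hE]; fun_prop
  have hQc : Continuous fun p : ℝ × ℝ => Q p.1 p.2 := by
    exact intervalIntegral.continuous_parametric_intervalIntegral_of_continuous
      (f := fun (p : ℝ × ℝ) y => E p.1 y p.2) hEc continuous_snd
  have hEcy : ∀ lam s, Continuous fun y => E lam y s := by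
    intro lam s; simp only [hE]; fun_prop
  have hQcs : ∀ lam, Continuous fun s => Q lam s := fun lam => by
    have h2 : Continuous fun s : ℝ => ((lam, s) : ℝ × ℝ) := Continuous.prodMk_right lam
    have h3 := hQc.comp h2
    exact h3
  have hEi : ∀ lam (s u v : ℝ), IntervalIntegrable (fun y => E lam y s) volume u v :=
    fun lam s u v => (hEcy lam s).intervalIntegrable u v
  have hDQi : ∀ lam (u v : ℝ), IntervalIntegrable (fun s => d s * Q lam s) volume u v :=
    fun lam u v => (hd.mul (hQcs lam)).intervalIntegrable u v
  -- nonnegativity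
  have hEnn : ∀ lam s, ∀ y ∈ Icc (0:ℝ) m, 0 ≤ E lam y s := fun lam s y hy =>
    mul_nonneg (hcnn y hy) (Real.exp_nonneg _)
  have hQnn : ∀ lam, ∀ s ∈ Icc (0:ℝ) m, 0 ≤ Q lam s := by
    intro lam s hs
    exact intervalIntegral.integral_nonneg hs.1
      (fun y hy => hEnn lam s y ⟨hy.1, hy.2.trans hs.2⟩)
  -- monotone comparison
  have hEmono : ∀ {l1 l2 : ℝ}, l1 ≤ l2 → ∀ s ∈ Icc (0:ℝ) m, ∀ y ∈ Icc (0:ℝ) s,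
      E l2 y s ≤ E l1 y s := by
    intro l1 l2 hl s hs y hy
    have hyI : y ∈ Icc (0:ℝ) m := ⟨hy.1, hy.2.trans hs.2⟩
    have hA : 0 ≤ a s - a y := sub_nonneg.2 (hamono.monotoneOn hyI hs hy.2)
    have h1 : l1 * (a s - a y) ≤ l2 * (a s - a y) := mul_le_mul_of_nonneg_right hl hA
    exact mul_le_mul_of_nonneg_left (Real.exp_le_exp.mpr (by linarith)) (hcnn y hyI)
  have hanti : StrictAnti K := by
    intro l1 l2 hl
    have hs0pos : 0 < s0 := lt_of_le_of_lt hy0.1 hys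
    have hdiff : ∀ s ∈ Icc (0:ℝ) m, Q l2 s ≤ Q l1 s := by
      intro s hs
      exact intervalIntegral.integral_mono_on hs.1 (hEi l2 s 0 s) (hEi l1 s 0 s)
        (fun y hy => hEmono hl.le s hs y hy)
    have hpt : Q l2 s0 < Q l1 s0 := by
      have hpos : 0 < ∫ y in (0:ℝ)..s0, (E l1 y s0 - E l2 y s0) := by
        apply integral_pos_of_pos_at (x := y0) ⟨hy0.1, hys.le⟩
          ((hEcy l1 s0).sub (hEcy l2 s0)).continuousOn
          (fun z hz => sub_nonneg.2 (hEmono hl.le s0 hs0 z hz)) ?_ hs0pos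
        have hA : 0 < a s0 - a y0 := sub_pos.2 (hamono hy0 hs0 hys)
        have h1 : l1 * (a s0 - a y0) < l2 * (a s0 - a y0) := by nlinarith
        have hexp : Real.exp (-(l2 * (a s0 - a y0) + (b s0 - b y0))) <
            Real.exp (-(l1 * (a s0 - a y0) + (b s0 - b y0))) :=
          Real.exp_lt_exp.mpr (by linarith)
        show 0 < E l1 y0 s0 - E l2 y0 s0
        simp only [hE]
        nlinarith [hexp, hcpos]
      have heq : Q l1 s0 - Q l2 s0 = ∫ y in (0:ℝ)..s0, (E l1 y s0 - E l2 y s0) :=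
        (intervalIntegral.integral_sub (hEi l1 s0 0 s0) (hEi l2 s0 0 s0)).symm
      linarith
    have houter : 0 < ∫ s in (0:ℝ)..m, (d s * Q l1 s - d s * Q l2 s) := by
      apply integral_pos_of_pos_at (x := s0) hs0
        (((hd.mul (hQcs l1)).sub (hd.mul (hQcs l2))).continuousOn) ?_ ?_ hm
      · intro s hs
        have h1 := hdiff s hs
        have h2 := hdnn s hs
        show 0 ≤ d s * Q l1 s - d s * Q l2 s
        nlinarith
      · show 0 < d s0 * Q l1 s0 - d s0 * Q l2 s0
        nlinarith [hdpos, hpt]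
    have heq2 : K l1 - K l2 = ∫ s in (0:ℝ)..m, (d s * Q l1 s - d s * Q l2 s) := by
      rw [hKQ l1, hKQ l2]
      exact (intervalIntegral.integral_sub (hDQi l1 0 m) (hDQi l2 0 m)).symm
    linarith
  -- bounds
  obtain ⟨Cc, hCc⟩ := isCompact_Icc.exists_bound_of_continuousOn (hc.continuousOn (s := Icc (0:ℝ) m))
  obtain ⟨Cb, hCb⟩ := isCompact_Icc.exists_bound_of_continuousOn (hb.continuousOn (s := Icc (0:ℝ) m))
  obtain ⟨Cd, hCd⟩ := isCompact_Icc.exists_bound_of_continuousOn (hd.continuousOn (s := Icc (0:ℝ) m))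
  have hCc0 : 0 ≤ Cc := le_trans (norm_nonneg _) (hCc 0 ⟨le_rfl, hm.le⟩)
  have hCd0 : 0 ≤ Cd := le_trans (norm_nonneg _) (hCd 0 ⟨le_rfl, hm.le⟩)
  set Ce : ℝ := Real.exp (2 * Cb) with hCe
  have hCe0 : 0 < Ce := Real.exp_pos _
  have hEbd : ∀ lam : ℝ, 0 ≤ lam → ∀ s ∈ Icc (0:ℝ) m, ∀ y ∈ Icc (0:ℝ) s,
      E lam y s ≤ Cc * Ce := by
    intro lam hlam s hs y hy
    have hyI : y ∈ Icc (0:ℝ) m := ⟨hy.1, hy.2.trans hs.2⟩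
    have hA : 0 ≤ a s - a y := sub_nonneg.2 (hamono.monotoneOn hyI hs hy.2)
    have hBs := abs_le.mp ((Real.norm_eq_abs _) ▸ hCb s hs)
    have hBy := abs_le.mp ((Real.norm_eq_abs _) ▸ hCb y hyI)
    have hmul : 0 ≤ lam * (a s - a y) := mul_nonneg hlam hA
    have hexp : Real.exp (-(lam * (a s - a y) + (b s - b y))) ≤ Ce := by
      rw [hCe]
      exact Real.exp_le_exp.mpr (by linarith)
    have hcy : c y ≤ Cc := le_trans (le_abs_self _) ((Real.norm_eq_abs _) ▸ hCc y hyI)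
    exact mul_le_mul hcy hexp (Real.exp_nonneg _) hCc0
  have hQbd : ∀ lam : ℝ, 0 ≤ lam → ∀ s ∈ Icc (0:ℝ) m, Q lam s ≤ Cc * Ce * m := by
    intro lam hlam s hs
    have h1 : Q lam s ≤ ∫ _ in (0:ℝ)..s, Cc * Ce :=
      intervalIntegral.integral_mono_on hs.1 (hEi lam s 0 s) intervalIntegrable_const
        (fun y hy => hEbd lam hlam s hs y hy)
    have h2 : (∫ _ in (0:ℝ)..s, Cc * Ce) = s * (Cc * Ce) := by
      simp [intervalIntegral.integral_const, smul_eq_mul]; ring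
    nlinarith [mul_nonneg hCc0 hCe0.le, hs.2]
  -- limit at +infinity
  have htop : Tendsto K atTop (nhds 0) := by
    have hQlim : ∀ s ∈ Ioc (0:ℝ) m, Tendsto (fun lam => Q lam s) atTop (nhds 0) := by
      intro s hs
      have hsI : s ∈ Icc (0:ℝ) m := ⟨hs.1.le, hs.2⟩
      have hqe : (fun lam => Q lam s) = fun lam => ∫ y in Ioc (0:ℝ) s, E lam y s := by
        funext lam
        rw [hQ]
        exact intervalIntegral.integral_of_le hs.1.le
      rw [hqe]
      have hne : ∀ᵐ y ∂(volume.restrict (Ioc (0:ℝ) s)), y ≠ s := by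
        rw [ae_iff]
        have hset : {y : ℝ | ¬ y ≠ s} = {s} := by ext y; simp
        rw [hset]
        exact le_antisymm (le_trans (Measure.restrict_apply_le _ _) (by simp))
          zero_le
      have hdct := MeasureTheory.tendsto_integral_filter_of_dominated_convergence
        (μ := volume.restrict (Ioc (0:ℝ) s)) (F := fun lam y => E lam y s)
        (f := fun _ => (0:ℝ)) (bound := fun _ => Cc * Ce) (l := atTop)
        (Eventually.of_forall fun lam => ((hEcy lam s).aestronglyMeasurable).restrict)
        ?_ ?_ ?_
      · simpa using hdct
      · filter_upwards [eventually_ge_atTop (0:ℝ)] with lam hlam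
        filter_upwards [self_mem_ae_restrict measurableSet_Ioc] with y hy
        have hyIcc : y ∈ Icc (0:ℝ) s := ⟨hy.1.le, hy.2⟩
        have hyI : y ∈ Icc (0:ℝ) m := ⟨hy.1.le, hy.2.trans hs.2⟩
        rw [Real.norm_eq_abs, abs_of_nonneg (hEnn lam s y hyI)]
        exact hEbd lam hlam s hsI y hyIcc
      · exact integrableOn_const measure_Ioc_lt_top.ne
      · filter_upwards [self_mem_ae_restrict measurableSet_Ioc, hne] with y hy hys
        have hyI : y ∈ Icc (0:ℝ) m := ⟨hy.1.le, hy.2.trans hs.2⟩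
        have hA : 0 < a s - a y := sub_pos.2 (hamono hyI hsI (lt_of_le_of_ne hy.2 hys))
        have h1 : Tendsto (fun lam : ℝ => lam * (a s - a y)) atTop atTop :=
          tendsto_id.atTop_mul_const hA
        have h2 : Tendsto (fun lam : ℝ => lam * (a s - a y) + (b s - b y)) atTop atTop :=
          tendsto_atTop_add_const_right _ _ h1
        have h3 : Tendsto (fun lam : ℝ => -(lam * (a s - a y) + (b s - b y))) atTop atBot :=
          tendsto_neg_atTop_atBot.comp h2
        have h4 : Tendsto (fun lam : ℝ => Real.exp (-(lam * (a s - a y) + (b s - b y))))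
            atTop (nhds 0) := Real.tendsto_exp_atBot.comp h3
        have h5 := h4.const_mul (c y)
        simpa [hE] using h5
    have hKset : K = fun lam => ∫ s in Ioc (0:ℝ) m, d s * Q lam s := by
      funext lam
      rw [hKQ lam, intervalIntegral.integral_of_le hm.le]
    rw [hKset]
    have hdct := MeasureTheory.tendsto_integral_filter_of_dominated_convergence
      (μ := volume.restrict (Ioc (0:ℝ) m)) (F := fun lam s => d s * Q lam s)
      (f := fun _ => (0:ℝ)) (bound := fun _ => Cd * (Cc * Ce * m)) (l := atTop)
      (Eventually.of_forall fun lam => ((hd.mul (hQcs lam)).aestronglyMeasurable).restrict)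
      ?_ ?_ ?_
    · simpa using hdct
    · filter_upwards [eventually_ge_atTop (0:ℝ)] with lam hlam
      filter_upwards [self_mem_ae_restrict measurableSet_Ioc] with s hs
      have hsI : s ∈ Icc (0:ℝ) m := ⟨hs.1.le, hs.2⟩
      have hQn := hQnn lam s hsI
      have hQb := hQbd lam hlam s hsI
      have hds : |d s| ≤ Cd := by simpa [Real.norm_eq_abs] using hCd s hsI
      rw [Real.norm_eq_abs, abs_mul, abs_of_nonneg hQn]
      exact mul_le_mul hds hQb hQn hCd0
    · exact integrableOn_const measure_Ioc_lt_top.ne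
    · filter_upwards [self_mem_ae_restrict measurableSet_Ioc] with s hs
      have h5 := (hQlim s hs).const_mul (d s)
      simpa using h5
  -- limit at -infinity
  have hbot : Tendsto K atBot atTop := by
    have hy00 : 0 ≤ y0 := hy0.1
    set q1 : ℝ := y0 + (s0 - y0)/3 with hq1
    set q2 : ℝ := y0 + 2*((s0 - y0)/3) with hq2
    have hyq1 : y0 < q1 := by rw [hq1]; linarith
    have hq12 : q1 < q2 := by rw [hq1, hq2]; linarith
    have hq2s : q2 < s0 := by rw [hq2]; linarith
    obtain ⟨u1, v1, hu1, huv1, hv1, -, hge1⟩ := exists_subinterval_ge (f := c) (p := 0) (q := q1)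
      ⟨hy00, hyq1.le⟩ hc.continuousOn hcpos (lt_of_le_of_lt hy00 hyq1)
    obtain ⟨u2, v2, hu2, huv2, hv2, -, hge2⟩ := exists_subinterval_ge (f := d) (p := q2) (q := m)
      ⟨hq2s.le, hs0.2⟩ hd.continuousOn hdpos (lt_of_lt_of_le hq2s hs0.2)
    have hq20 : 0 ≤ q2 := by rw [hq2]; linarith
    have hv1u2 : v1 < u2 := lt_of_le_of_lt hv1 (lt_of_lt_of_le hq12 hu2)
    have hu1I : u1 ∈ Icc (0:ℝ) m := ⟨hu1, le_trans (huv1.le.trans hv1) (by linarith [hq2s, hs0.2] : q1 ≤ m)⟩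
    have hv1I : v1 ∈ Icc (0:ℝ) m := ⟨hu1.trans huv1.le, le_trans hv1 (by linarith [hq2s, hs0.2] : q1 ≤ m)⟩
    have hu2I : u2 ∈ Icc (0:ℝ) m := ⟨hq20.trans hu2, huv2.le.trans hv2⟩
    have hv2I : v2 ∈ Icc (0:ℝ) m := ⟨hq20.trans (hu2.trans huv2.le), hv2⟩
    set α : ℝ := a u2 - a v1 with hα
    have hαpos : 0 < α := sub_pos.2 (hamono hv1I hu2I hv1u2)
    set ε1 : ℝ := c y0 / 2 with hε1
    set ε2 : ℝ := d s0 / 2 with hε2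
    have hε1p : 0 < ε1 := by rw [hε1]; linarith
    have hε2p : 0 < ε2 := by rw [hε2]; linarith
    set φ : ℝ → ℝ := fun lam =>
      (v2 - u2) * (ε2 * ((v1 - u1) * (ε1 * Real.exp (-(lam * α) - 2*Cb)))) with hφdef
    have hlow : ∀ lam : ℝ, lam ≤ 0 → φ lam ≤ K lam := by
      intro lam hlam
      have hElow : ∀ s ∈ Icc u2 v2, ∀ y ∈ Icc u1 v1,
          ε1 * Real.exp (-(lam * α) - 2*Cb) ≤ E lam y s := by
        intro s hsu y hyu
        have hyI : y ∈ Icc (0:ℝ) m := ⟨hu1I.1.trans hyu.1, hyu.2.trans hv1I.2⟩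
        have hsI : s ∈ Icc (0:ℝ) m := ⟨hu2I.1.trans hsu.1, hsu.2.trans hv2I.2⟩
        have hav : a y ≤ a v1 := hamono.monotoneOn hyI hv1I hyu.2
        have hau : a u2 ≤ a s := hamono.monotoneOn hu2I hsI hsu.1
        have hA : α ≤ a s - a y := by rw [hα]; linarith
        have hBs := abs_le.mp (by simpa [Real.norm_eq_abs] using hCb s hsI)
        have hBy := abs_le.mp (by simpa [Real.norm_eq_abs] using hCb y hyI)
        have hexp : Real.exp (-(lam * α) - 2*Cb) ≤
            Real.exp (-(lam * (a s - a y) + (b s - b y))) := by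
          apply Real.exp_le_exp.mpr
          have : lam * (a s - a y) ≤ lam * α := by nlinarith
          linarith
        have hcy : ε1 ≤ c y := hge1 y hyu
        exact mul_le_mul hcy hexp (Real.exp_nonneg _) (hcnn y hyI)
      show (v2 - u2) * (ε2 * ((v1 - u1) * (ε1 * Real.exp (-(lam * α) - 2*Cb)))) ≤ K lam
      set β : ℝ := ε1 * Real.exp (-(lam * α) - 2*Cb) with hβ
      have hβnn : 0 ≤ β := by rw [hβ]; positivity
      have hQlow : ∀ s ∈ Icc u2 v2, (v1 - u1) * β ≤ Q lam s := by
        intro s hsu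
        have hsI : s ∈ Icc (0:ℝ) m := ⟨hu2I.1.trans hsu.1, hsu.2.trans hv2I.2⟩
        have hv1s : v1 ≤ s := hv1u2.le.trans hsu.1
        have e1 : (∫ y in (0:ℝ)..u1, E lam y s) + ∫ y in u1..s, E lam y s = Q lam s := by
          rw [hQ]; exact integral_add_adjacent_intervals (hEi lam s 0 u1) (hEi lam s u1 s)
        have e2 : (∫ y in u1..v1, E lam y s) + ∫ y in v1..s, E lam y s
            = ∫ y in u1..s, E lam y s :=
          integral_add_adjacent_intervals (hEi lam s u1 v1) (hEi lam s v1 s)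
        have n1 : 0 ≤ ∫ y in (0:ℝ)..u1, E lam y s :=
          intervalIntegral.integral_nonneg hu1
            (fun y hy => hEnn lam s y ⟨hy.1, hy.2.trans hu1I.2⟩)
        have n2 : 0 ≤ ∫ y in v1..s, E lam y s :=
          intervalIntegral.integral_nonneg hv1s
            (fun y hy => hEnn lam s y ⟨hv1I.1.trans hy.1, hy.2.trans hsI.2⟩)
        have n3 : (v1 - u1) * β ≤ ∫ y in u1..v1, E lam y s := by
          have hmono := intervalIntegral.integral_mono_on (f := fun _ => β) huv1.le
            intervalIntegrable_const (hEi lam s u1 v1) (fun y hy => hElow s hsu y hy)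
          rwa [intervalIntegral.integral_const, smul_eq_mul] at hmono
        linarith
      have e1 : (∫ s in (0:ℝ)..u2, d s * Q lam s) + ∫ s in u2..m, d s * Q lam s = K lam := by
        rw [hKQ]; exact integral_add_adjacent_intervals (hDQi lam 0 u2) (hDQi lam u2 m)
      have e2 : (∫ s in u2..v2, d s * Q lam s) + ∫ s in v2..m, d s * Q lam s
          = ∫ s in u2..m, d s * Q lam s :=
        integral_add_adjacent_intervals (hDQi lam u2 v2) (hDQi lam v2 m)
      have n1 : 0 ≤ ∫ s in (0:ℝ)..u2, d s * Q lam s :=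
        intervalIntegral.integral_nonneg hu2I.1 (fun s hsx =>
          mul_nonneg (hdnn s ⟨hsx.1, hsx.2.trans hu2I.2⟩) (hQnn lam s ⟨hsx.1, hsx.2.trans hu2I.2⟩))
      have n2 : 0 ≤ ∫ s in v2..m, d s * Q lam s :=
        intervalIntegral.integral_nonneg hv2I.2 (fun s hsx =>
          mul_nonneg (hdnn s ⟨hv2I.1.trans hsx.1, hsx.2⟩) (hQnn lam s ⟨hv2I.1.trans hsx.1, hsx.2⟩))
      have n3 : (v2 - u2) * (ε2 * ((v1 - u1) * β)) ≤ ∫ s in u2..v2, d s * Q lam s := by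
        have hc2 : ∀ s ∈ Icc u2 v2, ε2 * ((v1 - u1) * β) ≤ d s * Q lam s := by
          intro s hsu
          have hsI : s ∈ Icc (0:ℝ) m := ⟨hu2I.1.trans hsu.1, hsu.2.trans hv2I.2⟩
          exact mul_le_mul (hge2 s hsu) (hQlow s hsu)
            (mul_nonneg (by linarith : (0:ℝ) ≤ v1 - u1) hβnn) (hdnn s hsI)
        have hmono := intervalIntegral.integral_mono_on
          (f := fun _ => ε2 * ((v1 - u1) * β)) huv2.le
          intervalIntegrable_const (hDQi lam u2 v2) hc2
        rwa [intervalIntegral.integral_const, smul_eq_mul] at hmono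
      linarith
    have hφt : Tendsto φ atBot atTop := by
      have h1 : Tendsto (fun lam : ℝ => lam * α) atBot atBot :=
        tendsto_id.atBot_mul_const hαpos
      have h2 : Tendsto (fun lam : ℝ => -(lam * α)) atBot atTop :=
        tendsto_neg_atBot_atTop.comp h1
      have h3 : Tendsto (fun lam : ℝ => -(lam * α) - 2*Cb) atBot atTop :=
        tendsto_atTop_add_const_right _ _ h2
      have h4 : Tendsto (fun lam : ℝ => Real.exp (-(lam * α) - 2*Cb)) atBot atTop :=
        Real.tendsto_exp_atTop.comp h3
      have h5 : Tendsto (fun lam : ℝ => ε1 * Real.exp (-(lam * α) - 2*Cb)) atBot atTop :=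
        h4.const_mul_atTop hε1p
      have h6 := h5.const_mul_atTop (by linarith : (0:ℝ) < v1 - u1)
      have h7 := h6.const_mul_atTop hε2p
      have h8 := h7.const_mul_atTop (by linarith : (0:ℝ) < v2 - u2)
      exact hφdef ▸ h8
    exact tendsto_atTop_mono' atBot
      ((eventually_le_atBot (0:ℝ)).mono fun lam hlam => hlow lam hlam) hφt
  -- existence and uniqueness
  have hKcont : Continuous K := by
    rw [show K = fun lam => ∫ s in (0:ℝ)..m, d s * Q lam s from funext hKQ]
    exact intervalIntegral.continuous_parametric_intervalIntegral_of_continuous'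
      (f := fun (lam : ℝ) s => d s * Q lam s) (μ := volume)
      (by exact (hd.comp continuous_snd).mul hQc) 0 m
  obtain ⟨l2, hl2⟩ : ∃ l2 : ℝ, K l2 < 1 :=
    (htop.eventually_lt_const (by norm_num : (0:ℝ) < 1)).exists
  obtain ⟨l1, hl1⟩ : ∃ l1 : ℝ, 1 < K l1 := (hbot.eventually_gt_atTop 1).exists
  have hl12 : l1 < l2 := by
    by_contra hcon
    push_neg at hcon
    rcases eq_or_lt_of_le hcon with heq | hlt
    · rw [heq] at hl2; linarith
    · have := hanti hlt; linarith
  obtain ⟨lam0, -, hlam0⟩ := intermediate_value_Icc' hl12.le hKcont.continuousOn ⟨hl2.le, hl1.le⟩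
  refine ⟨hanti, htop, hbot, lam0, hlam0,
    fun lam hlam => hanti.injective (by rw [hlam, hlam0]), ?_, ?_⟩
  · intro h1
    by_contra hcon
    push_neg at hcon
    rcases eq_or_lt_of_le hcon with heq | hlt
    · rw [heq] at hlam0; linarith
    · have := hanti hlt; linarith
  · intro h1
    by_contra hcon
    push_neg at hcon
    rcases eq_or_lt_of_le hcon with heq | hlt
    · rw [← heq] at hlam0; linarith
    · have := hanti hlt; linarith

/-- Properties of the characteristic function `K` of the linear operator with
separable fertility: `K` is strictly decreasing, tends to `0` at `+∞` and to `+∞`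
at `−∞`, and the characteristic equation `K(λ) = 1` has a unique real solution,
which is positive if `K(0) > 1` and negative if `K(0) < 1`. -/
theorem characteristic_equation_separable (m : ℝ) (hm : 0 < m)
    (γ γ' μ b1 b2 : ℝ → ℝ)
    (hγd : ∀ s ∈ Icc (0:ℝ) m, HasDerivWithinAt γ (γ' s) (Icc 0 m) s)
    (hγ'c : ContinuousOn γ' (Icc 0 m))
    (hγpos : ∀ s ∈ Icc (0:ℝ) m, 0 < γ s)
    (hμc : ContinuousOn μ (Icc 0 m)) (hμnn : ∀ s ∈ Icc (0:ℝ) m, 0 ≤ μ s)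
    (hb1c : ContinuousOn b1 (Icc 0 m)) (hb1nn : ∀ s ∈ Icc (0:ℝ) m, 0 ≤ b1 s)
    (hb2c : ContinuousOn b2 (Icc 0 m)) (hb2nn : ∀ s ∈ Icc (0:ℝ) m, 0 ≤ b2 s)
    (hpos : ∃ y0 ∈ Icc (0:ℝ) m, ∃ s0 ∈ Icc (0:ℝ) m, y0 < s0 ∧ 0 < b1 y0 * b2 s0)
    (K : ℝ → ℝ)
    (hK : ∀ lam, K lam = ∫ s in (0:ℝ)..m, b2 s * ∫ y in (0:ℝ)..s,
      (b1 y / γ y) * Real.exp (-∫ z in y..s, (lam + γ' z + μ z) / γ z)) :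
    StrictAnti K ∧
    Tendsto K atTop (nhds 0) ∧
    Tendsto K atBot atTop ∧
    ∃ lam0 : ℝ, K lam0 = 1 ∧ (∀ lam, K lam = 1 → lam = lam0) ∧
      (1 < K 0 → 0 < lam0) ∧ (K 0 < 1 → lam0 < 0) := by
  obtain ⟨y0, hy0, s0, hs0, hys, hprod⟩ := hpos
  have hγc : ContinuousOn γ (Icc 0 m) := fun x hx => (hγd x hx).continuousWithinAt
  have hγne : ∀ x ∈ Icc (0:ℝ) m, γ x ≠ 0 := fun x hx => (hγpos x hx).ne'
  -- continuous extensions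
  obtain ⟨hh, hhc, hhe⟩ := exists_cont_ext hm.le
    (f := fun z => 1 / γ z) (continuousOn_const.div hγc hγne)
  obtain ⟨gg, hgc, hge⟩ := exists_cont_ext hm.le
    (f := fun z => (γ' z + μ z) / γ z) ((hγ'c.add hμc).div hγc hγne)
  obtain ⟨c, hcc, hce⟩ := exists_cont_ext hm.le
    (f := fun y => b1 y / γ y) (hb1c.div hγc hγne)
  obtain ⟨d, hdc, hde⟩ := exists_cont_ext hm.le hb2c
  -- primitives
  set a : ℝ → ℝ := fun t => ∫ z in (0:ℝ)..t, hh z with hadef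
  set b : ℝ → ℝ := fun t => ∫ z in (0:ℝ)..t, gg z with hbdef
  have hac : Continuous a :=
    intervalIntegral.continuous_primitive (fun u v => hhc.intervalIntegrable u v) 0
  have hbc : Continuous b :=
    intervalIntegral.continuous_primitive (fun u v => hgc.intervalIntegrable u v) 0
  have hamono : StrictMonoOn a (Icc 0 m) := by
    intro x hx y hy hxy
    have hsub : a y - a x = ∫ z in x..y, hh z := by
      rw [hadef]
      exact integral_interval_sub_left (hhc.intervalIntegrable 0 y) (hhc.intervalIntegrable 0 x)
    have hpos' : 0 < ∫ z in x..y, hh z := by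
      apply intervalIntegral_pos_of_pos_on (hhc.intervalIntegrable x y) _ hxy
      intro z hz
      have hzI : z ∈ Icc (0:ℝ) m := ⟨hx.1.trans hz.1.le, hz.2.le.trans hy.2⟩
      rw [hhe z hzI]
      exact div_pos one_pos (hγpos z hzI)
    have : a x < a y := by linarith
    exact this
  -- positivity data
  have hb1pos : 0 < b1 y0 := by
    rcases mul_pos_iff.mp hprod with ⟨h1, -⟩ | ⟨-, h2⟩
    · exact h1
    · linarith [hb2nn s0 hs0]
  have hb2pos : 0 < b2 s0 := by
    rcases mul_pos_iff.mp hprod with ⟨-, h2⟩ | ⟨h1, -⟩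
    · exact h2
    · linarith [hb1nn y0 hy0]
  have hcnn : ∀ y ∈ Icc (0:ℝ) m, 0 ≤ c y := fun y hy => by
    rw [hce y hy]; exact div_nonneg (hb1nn y hy) (hγpos y hy).le
  have hdnn : ∀ s ∈ Icc (0:ℝ) m, 0 ≤ d s := fun s hs => by
    rw [hde s hs]; exact hb2nn s hs
  have hcpos : 0 < c y0 := by
    rw [hce y0 hy0]; exact div_pos hb1pos (hγpos y0 hy0)
  have hdpos : 0 < d s0 := by rw [hde s0 hs0]; exact hb2pos
  -- transfer the formula
  have hK' : ∀ lam, K lam = ∫ s in (0:ℝ)..m, d s * ∫ y in (0:ℝ)..s,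
      c y * Real.exp (-(lam * (a s - a y) + (b s - b y))) := by
    intro lam
    rw [hK lam]
    apply intervalIntegral.integral_congr
    intro s hs
    beta_reduce
    rw [uIcc_of_le hm.le] at hs
    have hinner : (∫ y in (0:ℝ)..s, (b1 y / γ y) *
        Real.exp (-∫ z in y..s, (lam + γ' z + μ z) / γ z))
        = ∫ y in (0:ℝ)..s, c y * Real.exp (-(lam * (a s - a y) + (b s - b y))) := by
      apply intervalIntegral.integral_congr
      intro y hy
      beta_reduce
      rw [uIcc_of_le hs.1] at hy
      have hyI : y ∈ Icc (0:ℝ) m := ⟨hy.1, hy.2.trans hs.2⟩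
      have hexp : (∫ z in y..s, (lam + γ' z + μ z) / γ z)
          = lam * (a s - a y) + (b s - b y) := by
        have hsub : uIcc y s ⊆ Icc (0:ℝ) m := by
          rw [uIcc_of_le hy.2]
          exact Icc_subset_Icc hy.1 hs.2
        have e1 : (∫ z in y..s, (lam + γ' z + μ z) / γ z)
            = ∫ z in y..s, (lam * hh z + gg z) := by
          apply intervalIntegral.integral_congr
          intro z hz
          beta_reduce
          have hzI : z ∈ Icc (0:ℝ) m := hsub hz
          rw [hhe z hzI, hge z hzI]
          have hγz : γ z ≠ 0 := hγne z hzI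
          field_simp
          ring
        have e2 : (∫ z in y..s, (lam * hh z + gg z))
            = lam * (∫ z in y..s, hh z) + ∫ z in y..s, gg z := by
          rw [intervalIntegral.integral_add ((hhc.intervalIntegrable y s).const_mul lam)
            (hgc.intervalIntegrable y s), intervalIntegral.integral_const_mul]
        have e3 : (∫ z in y..s, hh z) = a s - a y :=
          (integral_interval_sub_left (hhc.intervalIntegrable 0 s)
            (hhc.intervalIntegrable 0 y)).symm
        have e4 : (∫ z in y..s, gg z) = b s - b y :=
          (integral_interval_sub_left (hgc.intervalIntegrable 0 s)
            (hgc.intervalIntegrable 0 y)).symm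
        rw [e1, e2, e3, e4]
      rw [hce y hyI, hexp]
    rw [hinner, hde s hs]
  exact core_char m hm a b c d hac hbc hcc hdc hamono hcnn hdnn
    y0 s0 hy0 hs0 hys hcpos hdpos K hK'
end

section
/- Let ε > 0 and define K(λ) = ε ∫_0^m exp(−∫_0^s (λ+γ'(σ)+μ(σ))/γ(σ) dσ) · ∫_0^s (1/γ(y)) exp(∫_0^y (λ+γ'(σ)+μ(σ))/γ(σ) dσ) dy ds for λ ∈ ℝ. Then K is strictly decreasing, K(λ) → 0 as λ → +∞, and if K(0) > 1 then there exists a unique λ > 0 with K(λ) = 1. -/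
open Set MeasureTheory intervalIntegral Filter

set_option maxHeartbeats 1000000

noncomputable def CharPrim (f : ℝ → ℝ) (s : ℝ) : ℝ := ∫ t in (0:ℝ)..s, f t

noncomputable def CharJ (q p : ℝ → ℝ) (lam s : ℝ) : ℝ :=
  ∫ y in (0:ℝ)..s, q y *
    Real.exp (lam * (CharPrim q y - CharPrim q s) + (CharPrim p y - CharPrim p s))

@[fun_prop]
theorem charPrim_continuous {q : ℝ → ℝ} (hqc : Continuous q) : Continuous (CharPrim q) :=
  intervalIntegral.continuous_primitive (fun a b => hqc.intervalIntegrable a b) 0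

theorem charPrim_lt {q : ℝ → ℝ} (hqc : Continuous q) (hqpos : ∀ x, 0 < q x) {y s : ℝ}
    (hys : y < s) : CharPrim q y < CharPrim q s := by
  have h1 : CharPrim q s - CharPrim q y = ∫ t in y..s, q t :=
    intervalIntegral.integral_interval_sub_left (hqc.intervalIntegrable 0 s)
      (hqc.intervalIntegrable 0 y)
  have h2 : 0 < ∫ t in y..s, q t :=
    intervalIntegral.intervalIntegral_pos_of_pos (hqc.intervalIntegrable y s) hqpos hys
  linarith

theorem charJ_integrand_continuous {q p : ℝ → ℝ} (hqc : Continuous q) (hpc : Continuous p) :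
    Continuous (Function.uncurry fun (pa : ℝ × ℝ) y => q y *
      Real.exp (pa.1 * (CharPrim q y - CharPrim q pa.2) +
        (CharPrim p y - CharPrim p pa.2))) := by
  rw [Function.uncurry_def]
  have hQ := charPrim_continuous hqc
  have hP := charPrim_continuous hpc
  exact (hqc.comp continuous_snd).mul (Real.continuous_exp.comp
    (((continuous_fst.fst).mul ((hQ.comp continuous_snd).sub
      (hQ.comp continuous_fst.snd))).add
      ((hP.comp continuous_snd).sub (hP.comp continuous_fst.snd))))

theorem charJ_continuous {q p : ℝ → ℝ} (hqc : Continuous q) (hpc : Continuous p) :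
    Continuous fun pa : ℝ × ℝ => CharJ q p pa.1 pa.2 := by
  have h := intervalIntegral.continuous_parametric_primitive_of_continuous
    (μ := volume) (X := ℝ × ℝ) (a₀ := 0)
    (f := fun (pa : ℝ × ℝ) y => q y *
      Real.exp (pa.1 * (CharPrim q y - CharPrim q pa.2) + (CharPrim p y - CharPrim p pa.2)))
    (charJ_integrand_continuous hqc hpc)
  have h2 := h.comp (continuous_id.prodMk (continuous_snd : Continuous fun pa : ℝ × ℝ => pa.2))
  simp only [CharJ]
  exact h2

theorem charJ_continuous_left {q p : ℝ → ℝ} (hqc : Continuous q) (hpc : Continuous p)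
    (lam : ℝ) : Continuous fun s => CharJ q p lam s := by
  have hQ := charPrim_continuous hqc
  have hP := charPrim_continuous hpc
  have hf : Continuous (Function.uncurry fun (s : ℝ) y => q y *
      Real.exp (lam * (CharPrim q y - CharPrim q s) + (CharPrim p y - CharPrim p s))) := by
    rw [Function.uncurry_def]
    exact (hqc.comp continuous_snd).mul (Real.continuous_exp.comp
      ((continuous_const.mul ((hQ.comp continuous_snd).sub (hQ.comp continuous_fst))).add
        ((hP.comp continuous_snd).sub (hP.comp continuous_fst))))
  have h := intervalIntegral.continuous_parametric_intervalIntegral_of_continuous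
    (μ := volume) (a₀ := 0) hf continuous_id
  simp only [CharJ]
  exact h

theorem charJ_pos {q p : ℝ → ℝ} (hqc : Continuous q) (hpc : Continuous p)
    (hqpos : ∀ x, 0 < q x) (lam : ℝ) {s : ℝ} (hs : 0 < s) : 0 < CharJ q p lam s := by
  apply intervalIntegral.intervalIntegral_pos_of_pos _ _ hs
  · exact (Continuous.mul hqc (Real.continuous_exp.comp (by fun_prop))).intervalIntegrable 0 s
  · intro y
    exact mul_pos (hqpos y) (Real.exp_pos _)

theorem charJ_nonneg {q p : ℝ → ℝ} (hqpos : ∀ x, 0 < q x) (lam : ℝ) {s : ℝ} (hs : 0 ≤ s) :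
    0 ≤ CharJ q p lam s := by
  apply intervalIntegral.integral_nonneg hs
  intro y _
  exact le_of_lt (mul_pos (hqpos y) (Real.exp_pos _))

theorem char_aux (m ε : ℝ) (hm : 0 < m) (hε : 0 < ε) (q p : ℝ → ℝ)
    (hqc : Continuous q) (hpc : Continuous p) (hqpos : ∀ x, 0 < q x)
    (K : ℝ → ℝ) (hK : ∀ lam, K lam = ε * ∫ s in (0:ℝ)..m, CharJ q p lam s) :
    StrictAnti K ∧ Tendsto K atTop (nhds 0) ∧
      (1 < K 0 → ∃! lam : ℝ, 0 < lam ∧ K lam = 1) := by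
  have hJint : ∀ lam, IntervalIntegrable (fun s => CharJ q p lam s) volume 0 m :=
    fun lam => (charJ_continuous_left hqc hpc lam).intervalIntegrable 0 m
  have hjcont : ∀ lam s : ℝ, Continuous (fun y => q y *
      Real.exp (lam * (CharPrim q y - CharPrim q s) + (CharPrim p y - CharPrim p s))) := by
    intro lam s
    exact hqc.mul (Real.continuous_exp.comp (by fun_prop))
  -- strict antitonicity
  have hanti : StrictAnti K := by
    intro a b hab
    rw [hK a, hK b]
    have key : 0 < ∫ s in (0:ℝ)..m, (CharJ q p a s - CharJ q p b s) := by
      apply intervalIntegral.intervalIntegral_pos_of_pos_on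
      · exact ((charJ_continuous_left hqc hpc a).sub
          (charJ_continuous_left hqc hpc b)).intervalIntegrable 0 m
      · intro s hs
        have h1 : CharJ q p a s - CharJ q p b s = ∫ y in (0:ℝ)..s,
            (q y * Real.exp (a * (CharPrim q y - CharPrim q s) +
              (CharPrim p y - CharPrim p s)) -
             q y * Real.exp (b * (CharPrim q y - CharPrim q s) +
              (CharPrim p y - CharPrim p s))) := by
          rw [CharJ, CharJ, intervalIntegral.integral_sub
            ((hjcont a s).intervalIntegrable 0 s) ((hjcont b s).intervalIntegrable 0 s)]
        rw [h1]
        apply intervalIntegral.intervalIntegral_pos_of_pos_on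
        · exact ((hjcont a s).sub (hjcont b s)).intervalIntegrable 0 s
        · intro y hy
          have hQy : CharPrim q y < CharPrim q s := charPrim_lt hqc hqpos hy.2
          have h2 : b * (CharPrim q y - CharPrim q s) < a * (CharPrim q y - CharPrim q s) :=
            mul_lt_mul_of_neg_right hab (by linarith)
          have hexp : Real.exp (b * (CharPrim q y - CharPrim q s) +
              (CharPrim p y - CharPrim p s)) < Real.exp (a * (CharPrim q y - CharPrim q s) +
              (CharPrim p y - CharPrim p s)) :=
            Real.exp_lt_exp.2 (by linarith)
          have := mul_lt_mul_of_pos_left hexp (hqpos y)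
          linarith
        · exact hs.1
      · exact hm
    rw [intervalIntegral.integral_sub (hJint a) (hJint b)] at key
    nlinarith
  -- tendsto 0
  have htend : Tendsto K atTop (nhds 0) := by
    -- constants
    obtain ⟨x1, hx1, hmax⟩ := isCompact_Icc.exists_isMaxOn 
      ⟨0, left_mem_Icc.2 hm.le⟩ hqc.continuousOn
    obtain ⟨x0, hx0, hmin⟩ := isCompact_Icc.exists_isMinOn 
      ⟨0, left_mem_Icc.2 hm.le⟩ hqc.continuousOn
    obtain ⟨u, hu, hPmax⟩ := isCompact_Icc.exists_isMaxOn 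
      ⟨0, left_mem_Icc.2 hm.le⟩ (charPrim_continuous hpc).continuousOn
    obtain ⟨l, hl, hPmin⟩ := isCompact_Icc.exists_isMinOn 
      ⟨0, left_mem_Icc.2 hm.le⟩ (charPrim_continuous hpc).continuousOn
    set δ : ℝ := q x0 with hδdef
    have hδpos : 0 < δ := hqpos x0
    set C : ℝ := q x1 * Real.exp (CharPrim p u - CharPrim p l) with hCdef
    have hCpos : 0 < C := mul_pos (hqpos x1) (Real.exp_pos _)
    set D : ℝ := ε * (m * C) / δ with hDdef
    -- the main bound
    have hbound : ∀ lam : ℝ, 0 < lam → K lam ≤ D / lam := by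
      intro lam hlam
      set k : ℝ := lam * δ with hkdef
      have hkpos : 0 < k := mul_pos hlam hδpos
      have hexpint : ∀ s : ℝ, (∫ y in (0:ℝ)..s, Real.exp (-(k * (s - y)))) =
          (1 - Real.exp (-(k * s))) / k := by
        intro s
        have hder : ∀ y ∈ uIcc (0:ℝ) s, HasDerivAt (fun y => Real.exp (k * y - k * s) / k)
            (Real.exp (-(k * (s - y)))) y := by
          intro y _
          have h := (((hasDerivAt_id y).const_mul k).sub_const (k * s)).exp.div_const k
          refine h.congr_deriv (Eq.symm ?_)
          rw [mul_one]
          rw [show -(k * (s - y)) = k * y - k * s by ring]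
          field_simp
          rfl
        rw [intervalIntegral.integral_eq_sub_of_hasDerivAt hder
          ((Real.continuous_exp.comp (by fun_prop)).intervalIntegrable 0 s)]
        rw [show k * s - k * s = 0 by ring, Real.exp_zero]
        rw [show k * 0 - k * s = -(k * s) by ring]
        ring
      have hJbound : ∀ s ∈ Icc (0:ℝ) m, CharJ q p lam s ≤ C / k := by
        intro s hs
        have step1 : CharJ q p lam s ≤ ∫ y in (0:ℝ)..s, C * Real.exp (-(k * (s - y))) := by
          rw [CharJ]
          apply intervalIntegral.integral_mono_on hs.1
            ((hjcont lam s).intervalIntegrable 0 s)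
            ((continuous_const.mul (Real.continuous_exp.comp (by fun_prop))).intervalIntegrable
              0 s)
          intro y hy
          have hymem : y ∈ Icc (0:ℝ) m := ⟨hy.1, hy.2.trans hs.2⟩
          have hq1 : q y ≤ q x1 := hmax hymem
          have hQdiff : δ * (s - y) ≤ CharPrim q s - CharPrim q y := by
            have h1 : CharPrim q s - CharPrim q y = ∫ t in y..s, q t :=
              intervalIntegral.integral_interval_sub_left (hqc.intervalIntegrable 0 s)
                (hqc.intervalIntegrable 0 y)
            have h2 : (∫ t in y..s, (δ : ℝ)) ≤ ∫ t in y..s, q t := by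
              apply intervalIntegral.integral_mono_on hy.2
                (intervalIntegrable_const) (hqc.intervalIntegrable y s)
              intro t ht
              exact hmin ⟨hymem.1.trans ht.1, ht.2.trans hs.2⟩
            rw [intervalIntegral.integral_const, smul_eq_mul] at h2
            rw [h1]
            linarith [h2]
          have hPdiff : CharPrim p y - CharPrim p s ≤ CharPrim p u - CharPrim p l :=
            sub_le_sub (hPmax hymem) (hPmin ⟨hs.1, hs.2⟩)
          have hexparg : lam * (CharPrim q y - CharPrim q s) + (CharPrim p y - CharPrim p s)
              ≤ -(k * (s - y)) + (CharPrim p u - CharPrim p l) := by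
            have := mul_le_mul_of_nonneg_left hQdiff hlam.le
            rw [hkdef]
            nlinarith
          calc q y * Real.exp (lam * (CharPrim q y - CharPrim q s) +
                (CharPrim p y - CharPrim p s))
              ≤ q x1 * Real.exp (-(k * (s - y)) + (CharPrim p u - CharPrim p l)) := by
                apply mul_le_mul hq1 (Real.exp_le_exp.2 hexparg) (Real.exp_pos _).le
                  (hqpos x1).le
            _ = C * Real.exp (-(k * (s - y))) := by
                rw [hCdef, Real.exp_add]; ring
        rw [intervalIntegral.integral_const_mul, hexpint s] at step1
        have hle1 : (1 - Real.exp (-(k * s))) / k ≤ 1 / k :=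
          (div_le_div_iff_of_pos_right hkpos).2 (by linarith [Real.exp_pos (-(k * s))])
        calc CharJ q p lam s ≤ C * ((1 - Real.exp (-(k * s))) / k) := step1
          _ ≤ C * (1 / k) := mul_le_mul_of_nonneg_left hle1 hCpos.le
          _ = C / k := by ring
      have h3 : (∫ s in (0:ℝ)..m, CharJ q p lam s) ≤ ∫ _s in (0:ℝ)..m, C / k :=
        intervalIntegral.integral_mono_on hm.le (hJint lam) intervalIntegrable_const hJbound
      rw [intervalIntegral.integral_const, smul_eq_mul, sub_zero] at h3
      rw [hK lam]
      calc ε * ∫ s in (0:ℝ)..m, CharJ q p lam s ≤ ε * (m * (C / k)) :=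
            mul_le_mul_of_nonneg_left h3 hε.le
        _ = D / lam := by
            rw [hDdef, hkdef]
            field_simp
    have hKnn : ∀ lam, 0 ≤ K lam := by
      intro lam
      rw [hK lam]
      apply mul_nonneg hε.le
      apply intervalIntegral.integral_nonneg hm.le
      intro s hs
      exact charJ_nonneg hqpos lam hs.1
    have hDtend : Tendsto (fun lam : ℝ => D / lam) atTop (nhds 0) :=
      tendsto_const_nhds.div_atTop tendsto_id
    apply tendsto_of_tendsto_of_tendsto_of_le_of_le' tendsto_const_nhds hDtend
      (Eventually.of_forall hKnn)
    filter_upwards [eventually_gt_atTop 0] with lam h using hbound lam h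
  refine ⟨hanti, htend, ?_⟩
  intro h1
  have hev : ∀ᶠ lam in atTop, K lam < 1 ∧ 0 < lam :=
    (htend.eventually_lt_const one_pos).and (eventually_gt_atTop 0)
  obtain ⟨Λ, hΛlt, hΛpos⟩ := hev.exists
  have hKcont : Continuous K := by
    have hKeq : K = fun lam => ε * ∫ s in (0:ℝ)..m, CharJ q p lam s := funext hK
    rw [hKeq]
    apply continuous_const.mul
    have hf : Continuous (Function.uncurry fun (lam : ℝ) s => CharJ q p lam s) := by
      rw [Function.uncurry_def]
      exact charJ_continuous hqc hpc
    exact intervalIntegral.continuous_parametric_intervalIntegral_of_continuous'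
      (μ := volume) hf 0 m
  have hIVT := intermediate_value_Icc' hΛpos.le hKcont.continuousOn
    (show (1:ℝ) ∈ Icc (K Λ) (K 0) from ⟨hΛlt.le, h1.le⟩)
  obtain ⟨lam, hlam, hlameq⟩ := hIVT
  have hlampos : 0 < lam := by
    rcases lt_or_eq_of_le hlam.1 with h | h
    · exact h
    · exfalso; rw [← h] at hlameq; linarith
  refine ⟨lam, ⟨hlampos, hlameq⟩, ?_⟩
  intro y hy
  exact hanti.injective (hy.2.trans hlameq.symm)

/-- The characteristic function of the rank-one perturbed transport operator
`(A+B+F_ε)u = −(γu)' − μu + ε∫_0^m u` is strictly decreasing, tends to `0` at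
`+∞`, and if `K(0) > 1` then `K(λ) = 1` has a unique positive solution. -/
theorem characteristic_equation_rank_one (m : ℝ) (hm : 0 < m)
    (γ γ' μ : ℝ → ℝ)
    (hγd : ∀ s ∈ Icc (0:ℝ) m, HasDerivWithinAt γ (γ' s) (Icc 0 m) s)
    (hγ'c : ContinuousOn γ' (Icc 0 m))
    (hγpos : ∀ s ∈ Icc (0:ℝ) m, 0 < γ s)
    (hμc : ContinuousOn μ (Icc 0 m)) (hμnn : ∀ s ∈ Icc (0:ℝ) m, 0 ≤ μ s)
    (ε : ℝ) (hε : 0 < ε)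
    (K : ℝ → ℝ)
    (hK : ∀ lam, K lam = ε * ∫ s in (0:ℝ)..m,
      Real.exp (-∫ σ in (0:ℝ)..s, (lam + γ' σ + μ σ) / γ σ) *
      ∫ y in (0:ℝ)..s, (1 / γ y) *
        Real.exp (∫ σ in (0:ℝ)..y, (lam + γ' σ + μ σ) / γ σ)) :
    StrictAnti K ∧
    Tendsto K atTop (nhds 0) ∧
    (1 < K 0 → ∃! lam : ℝ, 0 < lam ∧ K lam = 1) := by
  have hγc : ContinuousOn γ (Icc 0 m) := fun s hs => (hγd s hs).continuousWithinAt
  set π : ℝ → ℝ := fun x => max 0 (min x m) with hπdef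
  have hπc : Continuous π := continuous_const.max (continuous_id.min continuous_const)
  have hπmem : ∀ x, π x ∈ Icc (0:ℝ) m := fun x =>
    ⟨le_max_left _ _, max_le hm.le (min_le_right _ _)⟩
  have hπeq : ∀ x ∈ Icc (0:ℝ) m, π x = x := by
    intro x hx
    simp only [hπdef]
    rw [min_eq_left hx.2, max_eq_right hx.1]
  set q : ℝ → ℝ := fun x => 1 / γ (π x) with hqdef
  set p : ℝ → ℝ := fun x => (γ' (π x) + μ (π x)) / γ (π x) with hpdef
  have hγπc : Continuous fun x => γ (π x) := hγc.comp_continuous hπc hπmem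
  have hγπpos : ∀ x, 0 < γ (π x) := fun x => hγpos _ (hπmem x)
  have hqc : Continuous q := continuous_const.div hγπc fun x => (hγπpos x).ne'
  have hqpos : ∀ x, 0 < q x := fun x => by
    simp only [hqdef]; exact div_pos one_pos (hγπpos x)
  have hpc : Continuous p :=
    ((hγ'c.comp_continuous hπc hπmem).add (hμc.comp_continuous hπc hπmem)).div hγπc
      fun x => (hγπpos x).ne'
  apply char_aux m ε hm hε q p hqc hpc hqpos K
  intro lam
  have hFeq : ∀ x ∈ Icc (0:ℝ) m,
      (∫ σ in (0:ℝ)..x, (lam + γ' σ + μ σ) / γ σ) = lam * CharPrim q x + CharPrim p x := by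
    intro x hx
    have hsubx : uIcc (0:ℝ) x ⊆ Icc 0 m := by
      rw [uIcc_of_le hx.1]; exact Icc_subset_Icc le_rfl hx.2
    have h1 : (∫ σ in (0:ℝ)..x, (lam + γ' σ + μ σ) / γ σ)
        = ∫ σ in (0:ℝ)..x, (lam * q σ + p σ) := by
      apply intervalIntegral.integral_congr
      intro σ hσ
      have hσ' : σ ∈ Icc (0:ℝ) m := hsubx hσ
      simp only [hqdef, hpdef, hπeq σ hσ']
      have hne : γ σ ≠ 0 := (hγpos σ hσ').ne'
      field_simp
      ring
    rw [h1, intervalIntegral.integral_add ((hqc.intervalIntegrable 0 x).const_mul lam)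
      (hpc.intervalIntegrable 0 x), intervalIntegral.integral_const_mul]
    rfl
  rw [hK lam]
  congr 1
  apply intervalIntegral.integral_congr
  intro s hs
  have hs' : s ∈ Icc (0:ℝ) m := by rwa [uIcc_of_le hm.le] at hs
  have hsub : uIcc (0:ℝ) s ⊆ Icc 0 m := by
    rw [uIcc_of_le hs'.1]; exact Icc_subset_Icc le_rfl hs'.2
  have hinner : (∫ y in (0:ℝ)..s, (1 / γ y) *
      Real.exp (∫ σ in (0:ℝ)..y, (lam + γ' σ + μ σ) / γ σ))
      = ∫ y in (0:ℝ)..s, q y * Real.exp (lam * CharPrim q y + CharPrim p y) := by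
    apply intervalIntegral.integral_congr
    intro y hy
    have hy' : y ∈ Icc (0:ℝ) m := hsub hy
    beta_reduce
    rw [hFeq y hy']
    simp only [hqdef, hπeq y hy']
  beta_reduce
  rw [hinner, hFeq s hs']
  rw [CharJ, ← intervalIntegral.integral_const_mul]
  apply intervalIntegral.integral_congr
  intro y _
  beta_reduce
  have hexp : Real.exp (-(lam * CharPrim q s + CharPrim p s)) *
      Real.exp (lam * CharPrim q y + CharPrim p y)
      = Real.exp (lam * (CharPrim q y - CharPrim q s) + (CharPrim p y - CharPrim p s)) := by
    rw [← Real.exp_add]; congr 1; ring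
  calc Real.exp (-(lam * CharPrim q s + CharPrim p s)) *
        (q y * Real.exp (lam * CharPrim q y + CharPrim p y))
      = q y * (Real.exp (-(lam * CharPrim q s + CharPrim p s)) *
        Real.exp (lam * CharPrim q y + CharPrim p y)) := by ring
    _ = q y * Real.exp (lam * (CharPrim q y - CharPrim q s) +
        (CharPrim p y - CharPrim p s)) := by rw [hexp]
end

section
/- Let ε > 0 and λ ∈ ℝ satisfy ε ∫_0^m exp(−∫_0^s (λ+γ'+μ)/γ) ∫_0^s (1/γ(y)) exp(∫_0^y (λ+γ'+μ)/γ) dy ds = 1. Then the function u(s) = ε · exp(−∫_0^s (λ+γ'(σ)+μ(σ))/γ(σ) dσ) · ∫_0^s (1/γ(y)) exp(∫_0^y (λ+γ'(σ)+μ(σ))/γ(σ) dσ) dy is continuously differentiable, nonnegative, not identically zero, satisfies u(0) = 0, ∫_0^m u(s) ds = 1, and −(γu)'(s) − μ(s)u(s) + ε∫_0^m u(y) dy = λu(s) for all s ∈ [0,m]; i.e., λ is an eigenvalue of the operator u ↦ −(γu)' − μu + ε∫_0^m u with positive eigenfunction u. -/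
open Set MeasureTheory intervalIntegral Filter

/-- If `λ` solves the characteristic equation of the rank-one perturbed transport
operator, then the explicit formula gives a nonnegative nontrivial eigenfunction
`u` with eigenvalue `λ`, normalised by `∫_0^m u = 1`. -/
theorem eigenfunction_rank_one (m : ℝ) (hm : 0 < m)
    (γ γ' μ : ℝ → ℝ)
    (hγd : ∀ s ∈ Icc (0:ℝ) m, HasDerivWithinAt γ (γ' s) (Icc 0 m) s)
    (hγ'c : ContinuousOn γ' (Icc 0 m))
    (hγpos : ∀ s ∈ Icc (0:ℝ) m, 0 < γ s)
    (hμc : ContinuousOn μ (Icc 0 m)) (hμnn : ∀ s ∈ Icc (0:ℝ) m, 0 ≤ μ s)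
    (ε : ℝ) (hε : 0 < ε) (lam : ℝ)
    (hchar : ε * (∫ s in (0:ℝ)..m,
      Real.exp (-∫ σ in (0:ℝ)..s, (lam + γ' σ + μ σ) / γ σ) *
      ∫ y in (0:ℝ)..s, (1 / γ y) *
        Real.exp (∫ σ in (0:ℝ)..y, (lam + γ' σ + μ σ) / γ σ)) = 1)
    (u : ℝ → ℝ)
    (hu : ∀ s, u s = ε * Real.exp (-∫ σ in (0:ℝ)..s, (lam + γ' σ + μ σ) / γ σ) *
      ∫ y in (0:ℝ)..s, (1 / γ y) *
        Real.exp (∫ σ in (0:ℝ)..y, (lam + γ' σ + μ σ) / γ σ)) :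
    ∃ u' : ℝ → ℝ, ContinuousOn u' (Icc 0 m) ∧
      (∀ s ∈ Icc (0:ℝ) m, HasDerivWithinAt u (u' s) (Icc 0 m) s) ∧
      (∀ s ∈ Icc (0:ℝ) m, 0 ≤ u s) ∧
      (∃ s ∈ Icc (0:ℝ) m, u s ≠ 0) ∧
      u 0 = 0 ∧
      (∫ s in (0:ℝ)..m, u s) = 1 ∧
      (∀ s ∈ Icc (0:ℝ) m,
        -(γ' s * u s + γ s * u' s) - μ s * u s + ε * ∫ y in (0:ℝ)..m, u y
          = lam * u s) := by
  -- projection onto [0,m]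
  set p : ℝ → ℝ := fun x => max 0 (min x m) with hp
  have hpc : Continuous p := continuous_const.max (continuous_id.min continuous_const)
  have hpmem : ∀ x, p x ∈ Icc (0:ℝ) m := fun x =>
    ⟨le_max_left _ _, max_le hm.le (min_le_right _ _)⟩
  have hpid : ∀ x ∈ Icc (0:ℝ) m, p x = x := fun x hx => by
    simp [hp, min_eq_left hx.2, max_eq_right hx.1]
  have hγc : ContinuousOn γ (Icc 0 m) := fun x hx => (hγd x hx).continuousWithinAt
  -- extended coefficients
  set γe : ℝ → ℝ := fun x => γ (p x) with hγe
  set γ'e : ℝ → ℝ := fun x => γ' (p x) with hγ'e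
  set μe : ℝ → ℝ := fun x => μ (p x) with hμe
  have hγec : Continuous γe := hγc.comp_continuous hpc hpmem
  have hγ'ec : Continuous γ'e := hγ'c.comp_continuous hpc hpmem
  have hμec : Continuous μe := hμc.comp_continuous hpc hpmem
  have hγepos : ∀ x, 0 < γe x := fun x => hγpos _ (hpmem x)
  set f : ℝ → ℝ := fun σ => (lam + γ'e σ + μe σ) / γe σ with hfdef
  have hfc : Continuous f :=
    ((continuous_const.add hγ'ec).add hμec).div hγec fun x => (hγepos x).ne'
  set F : ℝ → ℝ := fun s => ∫ σ in (0:ℝ)..s, f σ with hFdef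
  have hFd : ∀ s, HasDerivAt F (f s) s := fun s =>
    (hfc.integral_hasStrictDerivAt 0 s).hasDerivAt
  have hFc : Continuous F := continuous_iff_continuousAt.2 fun s => (hFd s).continuousAt
  set g : ℝ → ℝ := fun y => (1 / γe y) * Real.exp (F y) with hgdef
  have hgc : Continuous g :=
    ((continuous_const.div hγec fun x => (hγepos x).ne').mul (Real.continuous_exp.comp hFc))
  set G : ℝ → ℝ := fun s => ∫ y in (0:ℝ)..s, g y with hGdef
  have hGd : ∀ s, HasDerivAt G (g s) s := fun s =>
    (hgc.integral_hasStrictDerivAt 0 s).hasDerivAt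
  have hGc : Continuous G := continuous_iff_continuousAt.2 fun s => (hGd s).continuousAt
  set v : ℝ → ℝ := fun s => ε * Real.exp (-F s) * G s with hvdef
  set v' : ℝ → ℝ := fun s => -f s * v s + ε / γe s with hv'def
  have hvc : Continuous v :=
    (continuous_const.mul (Real.continuous_exp.comp hFc.neg)).mul hGc
  have hv'c : Continuous v' :=
    ((hfc.neg.mul hvc).add (continuous_const.div hγec fun x => (hγepos x).ne'))
  -- v has derivative v'
  have hvd : ∀ s, HasDerivAt v (v' s) s := by
    intro s
    have h1 : HasDerivAt (fun t => Real.exp (-F t)) (-f s * Real.exp (-F s)) s := by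
      have := (Real.hasDerivAt_exp (-F s)).comp s ((hFd s).neg)
      simpa [mul_comm, Function.comp_def] using this
    have h2 := (h1.const_mul ε).mul (hGd s)
    have heq : v' s = ε * (-f s * Real.exp (-F s)) * G s + ε * Real.exp (-F s) * g s := by
      rw [hv'def, hvdef, hgdef]
      simp only
      rw [Real.exp_neg]
      have h0 : Real.exp (F s) ≠ 0 := (Real.exp_pos _).ne'
      field_simp
    rw [heq]
    exact h2
  -- agreement with the original data on [0,m]
  have hfeq : ∀ x ∈ Icc (0:ℝ) m, f x = (lam + γ' x + μ x) / γ x := by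
    intro x hx
    rw [hfdef]
    simp only [hγ'e, hμe, hγe, hpid x hx]
  have hFeq : ∀ s ∈ Icc (0:ℝ) m,
      F s = ∫ σ in (0:ℝ)..s, (lam + γ' σ + μ σ) / γ σ := by
    intro s hs
    rw [hFdef]
    apply intervalIntegral.integral_congr
    intro x hx
    rw [uIcc_of_le hs.1] at hx
    exact hfeq x ⟨hx.1, hx.2.trans hs.2⟩
  have hgeq : ∀ y ∈ Icc (0:ℝ) m,
      g y = (1 / γ y) * Real.exp (∫ σ in (0:ℝ)..y, (lam + γ' σ + μ σ) / γ σ) := by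
    intro y hy
    rw [hgdef]
    simp only [hγe, hpid y hy]
    rw [hFeq y hy]
  have hGeq : ∀ s ∈ Icc (0:ℝ) m,
      G s = ∫ y in (0:ℝ)..s, (1 / γ y) *
        Real.exp (∫ σ in (0:ℝ)..y, (lam + γ' σ + μ σ) / γ σ) := by
    intro s hs
    rw [hGdef]
    apply intervalIntegral.integral_congr
    intro x hx
    rw [uIcc_of_le hs.1] at hx
    exact hgeq x ⟨hx.1, hx.2.trans hs.2⟩
  have hueq : ∀ s ∈ Icc (0:ℝ) m, u s = v s := by
    intro s hs
    rw [hu s, hvdef]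
    simp only
    rw [hFeq s hs, hGeq s hs]
  -- the normalisation
  have hint : (∫ s in (0:ℝ)..m, u s) = 1 := by
    have h1 : (∫ s in (0:ℝ)..m, u s)
        = ε * ∫ s in (0:ℝ)..m,
          (Real.exp (-∫ σ in (0:ℝ)..s, (lam + γ' σ + μ σ) / γ σ) *
            ∫ y in (0:ℝ)..s, (1 / γ y) *
              Real.exp (∫ σ in (0:ℝ)..y, (lam + γ' σ + μ σ) / γ σ)) := by
      rw [← intervalIntegral.integral_const_mul]
      apply intervalIntegral.integral_congr
      intro x _
      rw [hu x]; ring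
    rw [h1, hchar]
  -- nonnegativity
  have hnn : ∀ s ∈ Icc (0:ℝ) m, 0 ≤ u s := by
    intro s hs
    rw [hu s]
    apply mul_nonneg (mul_nonneg hε.le (Real.exp_pos _).le)
    apply intervalIntegral.integral_nonneg hs.1
    intro y hy
    have hy' : y ∈ Icc (0:ℝ) m := ⟨hy.1, hy.2.trans hs.2⟩
    exact mul_nonneg (div_pos one_pos (hγpos y hy')).le (Real.exp_pos _).le
  refine ⟨v', hv'c.continuousOn, ?_, hnn, ?_, ?_, hint, ?_⟩
  · intro s hs
    exact ((hvd s).hasDerivWithinAt).congr (fun y hy => hueq y hy) (hueq s hs)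
  · by_contra h
    push_neg at h
    have h0 : (∫ s in (0:ℝ)..m, u s) = 0 := by
      have heq0 : EqOn u (fun _ => (0:ℝ)) (uIcc 0 m) := by
        intro x hx
        rw [uIcc_of_le hm.le] at hx
        exact h x hx
      rw [intervalIntegral.integral_congr heq0]
      simp
    rw [hint] at h0
    exact one_ne_zero h0
  · rw [hu 0]; simp
  · intro s hs
    have hγne : γ s ≠ 0 := (hγpos s hs).ne'
    have hv's : v' s = -((lam + γ' s + μ s) / γ s) * u s + ε / γ s := by
      rw [hv'def]
      simp only
      rw [hfeq s hs, ← hueq s hs, hγe]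
      simp only [hpid s hs]
    rw [hint, hv's]
    field_simp
    ring
end

section
/- Let ε > 0, let λ ∈ ℝ be such that ε ∫_0^m exp(−∫_0^s (λ+γ'+μ)/γ) ∫_0^s (1/γ(y)) exp(∫_0^y (λ+γ'+μ)/γ) dy ds < 1, and let f : [0,m] → ℝ be continuous with f ≥ 0. Then there is a unique continuously differentiable u : [0,m] → ℝ with u(0) = 0 satisfying λu(s) + (γu)'(s) + μ(s)u(s) − ε∫_0^m u(y) dy = f(s) for all s ∈ [0,m], and this u is nonnegative. (Positivity of the resolvent of the rank-one perturbed transport operator.) -/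
open Set MeasureTheory intervalIntegral Filter

/-- FTC for a continuous integrand on `ℝ`. -/
lemma primitive_hasDerivAt {h : ℝ → ℝ} (hc : Continuous h) (b : ℝ) :
    HasDerivAt (fun s => ∫ t in (0:ℝ)..s, h t) (h b) b :=
  intervalIntegral.integral_hasDerivAt_right (hc.intervalIntegrable _ _)
    (hc.stronglyMeasurableAtFilter _ _) hc.continuousAt

lemma primitive_continuous {h : ℝ → ℝ} (hc : Continuous h) :
    Continuous (fun s => ∫ t in (0:ℝ)..s, h t) :=
  continuous_iff_continuousAt.2 fun b => (primitive_hasDerivAt hc b).continuousAt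

set_option maxHeartbeats 1000000 in
/-- Positivity of the resolvent of the rank-one perturbed transport operator:
if the characteristic value at `λ` is below `1`, then for every continuous
`f ≥ 0` the resolvent equation has a unique continuously differentiable solution
with `u(0) = 0`, and this solution is nonnegative. -/
theorem resolvent_positive_rank_one (m : ℝ) (hm : 0 < m)
    (γ γ' μ : ℝ → ℝ)
    (hγd : ∀ s ∈ Icc (0:ℝ) m, HasDerivWithinAt γ (γ' s) (Icc 0 m) s)
    (hγ'c : ContinuousOn γ' (Icc 0 m))
    (hγpos : ∀ s ∈ Icc (0:ℝ) m, 0 < γ s)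
    (hμc : ContinuousOn μ (Icc 0 m)) (hμnn : ∀ s ∈ Icc (0:ℝ) m, 0 ≤ μ s)
    (ε : ℝ) (hε : 0 < ε) (lam : ℝ)
    (hchar : ε * (∫ s in (0:ℝ)..m,
      Real.exp (-∫ σ in (0:ℝ)..s, (lam + γ' σ + μ σ) / γ σ) *
      ∫ y in (0:ℝ)..s, (1 / γ y) *
        Real.exp (∫ σ in (0:ℝ)..y, (lam + γ' σ + μ σ) / γ σ)) < 1)
    (f : ℝ → ℝ) (hfc : ContinuousOn f (Icc 0 m))
    (hfnn : ∀ s ∈ Icc (0:ℝ) m, 0 ≤ f s) :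
    ∃ u u' : ℝ → ℝ,
      ContinuousOn u' (Icc 0 m) ∧
      (∀ s ∈ Icc (0:ℝ) m, HasDerivWithinAt u (u' s) (Icc 0 m) s) ∧
      u 0 = 0 ∧
      (∀ s ∈ Icc (0:ℝ) m,
        lam * u s + (γ' s * u s + γ s * u' s) + μ s * u s
          - ε * ∫ y in (0:ℝ)..m, u y = f s) ∧
      (∀ s ∈ Icc (0:ℝ) m, 0 ≤ u s) ∧
      (∀ v v' : ℝ → ℝ, ContinuousOn v' (Icc 0 m) →
        (∀ s ∈ Icc (0:ℝ) m, HasDerivWithinAt v (v' s) (Icc 0 m) s) →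
        v 0 = 0 →
        (∀ s ∈ Icc (0:ℝ) m,
          lam * v s + (γ' s * v s + γ s * v' s) + μ s * v s
            - ε * ∫ y in (0:ℝ)..m, v y = f s) →
        ∀ s ∈ Icc (0:ℝ) m, v s = u s) := by
  -- clamping to [0, m]
  set cl : ℝ → ℝ := fun s => max 0 (min s m) with hcl
  have hclmem : ∀ s, cl s ∈ Icc (0:ℝ) m := fun s =>
    ⟨le_max_left _ _, max_le hm.le (min_le_right _ _)⟩
  have hclid : ∀ s ∈ Icc (0:ℝ) m, cl s = s := by
    intro s hs
    simp only [hcl, min_eq_left hs.2, max_eq_right hs.1]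
  have hclcont : Continuous cl :=
    continuous_const.max (continuous_id.min continuous_const)
  -- continuity of γ on Icc
  have hγc : ContinuousOn γ (Icc 0 m) := fun s hs => (hγd s hs).continuousWithinAt
  -- global versions
  set G : ℝ → ℝ := fun s => γ (cl s) with hG
  have hGc : Continuous G := hγc.comp_continuous hclcont hclmem
  have hGpos : ∀ s, 0 < G s := fun s => hγpos _ (hclmem s)
  set A : ℝ → ℝ := fun s => (lam + γ' (cl s) + μ (cl s)) / G s with hA
  have hAc : Continuous A :=
    ((continuous_const.add (hγ'c.comp_continuous hclcont hclmem)).add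
        (hμc.comp_continuous hclcont hclmem)).div hGc fun s => (hGpos s).ne'
  set F : ℝ → ℝ := fun s => f (cl s) with hF
  have hFc : Continuous F := hfc.comp_continuous hclcont hclmem
  have hFnn : ∀ s, 0 ≤ F s := fun s => hfnn _ (hclmem s)
  -- on Icc, A agrees with the original coefficient
  have hAid : ∀ s ∈ Icc (0:ℝ) m, A s = (lam + γ' s + μ s) / γ s := by
    intro s hs; simp only [hA, hG, hclid s hs]
  have hGid : ∀ s ∈ Icc (0:ℝ) m, G s = γ s := fun s hs => by
    simp only [hG, hclid s hs]
  have hFid : ∀ s ∈ Icc (0:ℝ) m, F s = f s := fun s hs => by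
    simp only [hF, hclid s hs]
  -- integrating factor
  set I : ℝ → ℝ := fun s => ∫ t in (0:ℝ)..s, A t with hIdef
  have hI : ∀ s, HasDerivAt I (A s) s := primitive_hasDerivAt hAc
  have hIc : Continuous I := primitive_continuous hAc
  have hI0 : I 0 = 0 := intervalIntegral.integral_same
  -- on Icc, I agrees with the integral of the original coefficient
  have hIid : ∀ s ∈ Icc (0:ℝ) m,
      (∫ σ in (0:ℝ)..s, (lam + γ' σ + μ σ) / γ σ) = I s := by
    intro s hs
    apply intervalIntegral.integral_congr
    intro σ hσ
    rw [uIcc_of_le hs.1] at hσ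
    exact (hAid σ ⟨hσ.1, hσ.2.trans hs.2⟩).symm
  set E : ℝ → ℝ := fun s => Real.exp (I s) with hE
  have hEc : Continuous E := Real.continuous_exp.comp hIc
  have hEpos : ∀ s, 0 < E s := fun s => Real.exp_pos _
  -- the two basic kernels
  set q0 : ℝ → ℝ := fun y => (1 / G y) * E y with hq0
  have hq0c : Continuous q0 := (continuous_const.div hGc fun s => (hGpos s).ne').mul hEc
  have hq0nn : ∀ y, 0 ≤ q0 y := fun y =>
    mul_nonneg (one_div_nonneg.2 (hGpos y).le) (hEpos y).le
  set qf : ℝ → ℝ := fun y => (F y / G y) * E y with hqf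
  have hqfc : Continuous qf := (hFc.div hGc fun s => (hGpos s).ne').mul hEc
  have hqfnn : ∀ y, 0 ≤ qf y :=
    fun y => mul_nonneg (div_nonneg (hFnn y) (hGpos y).le) (hEpos y).le
  set Q : ℝ → ℝ := fun s => ∫ y in (0:ℝ)..s, q0 y with hQdef
  set Pf : ℝ → ℝ := fun s => ∫ y in (0:ℝ)..s, qf y with hPf
  have hQc : Continuous Q := primitive_continuous hq0c
  have hPfc : Continuous Pf := primitive_continuous hqfc
  have hQnn : ∀ s ∈ Icc (0:ℝ) m, 0 ≤ Q s := fun s hs =>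
    intervalIntegral.integral_nonneg hs.1 fun y _ => hq0nn y
  have hPfnn : ∀ s ∈ Icc (0:ℝ) m, 0 ≤ Pf s := fun s hs =>
    intervalIntegral.integral_nonneg hs.1 fun y _ => hqfnn y
  set z : ℝ → ℝ := fun s => Real.exp (-(I s)) * Q s with hz
  set w : ℝ → ℝ := fun s => Real.exp (-(I s)) * Pf s with hw
  have hzc : Continuous z := (Real.continuous_exp.comp hIc.neg).mul hQc
  have hwc : Continuous w := (Real.continuous_exp.comp hIc.neg).mul hPfc
  have hznn : ∀ s ∈ Icc (0:ℝ) m, 0 ≤ z s := fun s hs =>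
    mul_nonneg (Real.exp_pos _).le (hQnn s hs)
  have hwnn : ∀ s ∈ Icc (0:ℝ) m, 0 ≤ w s := fun s hs =>
    mul_nonneg (Real.exp_pos _).le (hPfnn s hs)
  set Z : ℝ := ∫ s in (0:ℝ)..m, z s with hZ
  set W : ℝ := ∫ s in (0:ℝ)..m, w s with hW
  -- the characteristic bound transfers to Z
  have hεZ : ε * Z < 1 := by
    have hcongr : (∫ s in (0:ℝ)..m,
        Real.exp (-∫ σ in (0:ℝ)..s, (lam + γ' σ + μ σ) / γ σ) *
        ∫ y in (0:ℝ)..s, (1 / γ y) *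
          Real.exp (∫ σ in (0:ℝ)..y, (lam + γ' σ + μ σ) / γ σ)) = Z := by
      rw [hZ]
      apply intervalIntegral.integral_congr
      intro s hs
      rw [uIcc_of_le hm.le] at hs
      show Real.exp (-∫ σ in (0:ℝ)..s, (lam + γ' σ + μ σ) / γ σ) *
        (∫ y in (0:ℝ)..s, (1 / γ y) *
          Real.exp (∫ σ in (0:ℝ)..y, (lam + γ' σ + μ σ) / γ σ)) = z s
      have h1 : (∫ y in (0:ℝ)..s, (1 / γ y) *
          Real.exp (∫ σ in (0:ℝ)..y, (lam + γ' σ + μ σ) / γ σ)) = Q s := by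
        rw [hQdef]
        apply intervalIntegral.integral_congr
        intro y hy
        rw [uIcc_of_le hs.1] at hy
        have hym : y ∈ Icc (0:ℝ) m := ⟨hy.1, hy.2.trans hs.2⟩
        show (1 / γ y) * Real.exp (∫ σ in (0:ℝ)..y, (lam + γ' σ + μ σ) / γ σ)
          = (1 / G y) * E y
        rw [hIid y hym, hGid y hym, hE]
      rw [hIid s hs, h1, hz]
    rw [hcongr] at hchar
    exact hchar
  have hZnn : 0 ≤ Z := intervalIntegral.integral_nonneg hm.le hznn
  have hWnn : 0 ≤ W := intervalIntegral.integral_nonneg hm.le hwnn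
  have h1Z : 0 < 1 - ε * Z := by linarith
  set c : ℝ := W / (1 - ε * Z) with hcdef
  have hcnn : 0 ≤ c := div_nonneg hWnn h1Z.le
  have hceq : c = W + ε * c * Z := by
    have h : c * (1 - ε * Z) = W := by
      rw [hcdef]; exact div_mul_cancel₀ W h1Z.ne'
    linear_combination h
  -- the solution
  set q : ℝ → ℝ := fun y => ((F y + ε * c) / G y) * E y with hq
  have hqc : Continuous q :=
    ((hFc.add continuous_const).div hGc fun s => (hGpos s).ne').mul hEc
  have hqnn : ∀ y, 0 ≤ q y := fun y =>
    mul_nonneg (div_nonneg (add_nonneg (hFnn y) (mul_nonneg hε.le hcnn)) (hGpos y).le)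
      (hEpos y).le
  set P : ℝ → ℝ := fun s => ∫ y in (0:ℝ)..s, q y with hPdef
  have hPc : Continuous P := primitive_continuous hqc
  set u : ℝ → ℝ := fun s => Real.exp (-(I s)) * P s with hu
  have huc : Continuous u := (Real.continuous_exp.comp hIc.neg).mul hPc
  set u' : ℝ → ℝ := fun s => (F s + ε * c) / G s - A s * u s with hu'
  have hu'c : Continuous u' :=
    ((hFc.add continuous_const).div hGc fun s => (hGpos s).ne').sub (hAc.mul huc)
  -- q = qf + ε c q0 pointwise
  have hqsplit : ∀ y, q y = qf y + ε * c * q0 y := by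
    intro y
    simp only [hq, hqf, hq0]
    rw [add_div]
    ring
  -- P = Pf + ε c Q
  have hPsplit : ∀ s, P s = Pf s + ε * c * Q s := by
    intro s
    simp only [hPdef, hPf, hQdef]
    rw [← intervalIntegral.integral_const_mul, ← intervalIntegral.integral_add
      (hqfc.intervalIntegrable _ _) ((continuous_const.mul hq0c).intervalIntegrable _ _) (g := fun y => ε * c * q0 y)]
    exact intervalIntegral.integral_congr fun y _ => hqsplit y
  -- u = w + ε c z
  have husplit : ∀ s, u s = w s + ε * c * z s := by
    intro s
    simp only [hu, hw, hz, hPsplit s]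
    ring
  -- ∫ u = c
  have huint : (∫ y in (0:ℝ)..m, u y) = c := by
    have h : (∫ y in (0:ℝ)..m, u y) = W + ε * c * Z := by
      rw [hW, hZ, ← intervalIntegral.integral_const_mul, ← intervalIntegral.integral_add
        (hwc.intervalIntegrable _ _) ((continuous_const.mul hzc).intervalIntegrable _ _) (g := fun y => ε * c * z y)]
      exact intervalIntegral.integral_congr fun y _ => husplit y
    rw [h]
    exact hceq.symm
  -- derivative of u
  have hud : ∀ s, HasDerivAt u (u' s) s := by
    intro s
    have h1 : HasDerivAt (fun t => Real.exp (-(I t))) (Real.exp (-(I s)) * (-A s)) s :=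
      ((hI s).neg).exp
    have h2 : HasDerivAt P (q s) s := primitive_hasDerivAt hqc s
    have h3 : HasDerivAt (fun t => Real.exp (-(I t)) * P t) _ s := h1.mul h2
    rw [hu]
    convert h3 using 1
    simp only [hu', hu, hq]
    rw [Real.exp_neg]
    field_simp
    ring
  have hu0 : u 0 = 0 := by
    simp [hu, hPdef, intervalIntegral.integral_same]
  -- u satisfies the equation
  have hueq : ∀ s ∈ Icc (0:ℝ) m,
      lam * u s + (γ' s * u s + γ s * u' s) + μ s * u s
        - ε * ∫ y in (0:ℝ)..m, u y = f s := by
    intro s hs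
    rw [huint]
    have hγne : γ s ≠ 0 := (hγpos s hs).ne'
    simp only [hu', hAid s hs, hGid s hs, hFid s hs]
    field_simp
    ring
  refine ⟨u, u', hu'c.continuousOn, fun s _ => (hud s).hasDerivWithinAt, hu0, hueq,
    fun s hs => by
      rw [husplit s]
      exact add_nonneg (hwnn s hs) (mul_nonneg (mul_nonneg hε.le hcnn) (hznn s hs)), ?_⟩
  -- uniqueness
  intro v v' hv'c hvd hv0 hveq
  set d : ℝ → ℝ := fun s => v s - u s with hd
  have hvc : ContinuousOn v (Icc 0 m) := fun s hs => (hvd s hs).continuousWithinAt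
  have hdc : ContinuousOn d (Icc 0 m) := hvc.sub huc.continuousOn
  set k : ℝ := (∫ y in (0:ℝ)..m, v y) - c with hk
  -- the difference satisfies the homogeneous equation
  have hdeq : ∀ s ∈ Icc (0:ℝ) m,
      v' s - u' s = ε * k / G s - A s * d s := by
    intro s hs
    have h1 := hveq s hs
    have h2 := hueq s hs
    rw [huint] at h2
    have hγne : γ s ≠ 0 := (hγpos s hs).ne'
    have h3 : γ s * (v' s - u' s) = ε * k - (lam + γ' s + μ s) * d s := by
      simp only [hk, hd]
      linear_combination h1 - h2
    rw [hGid s hs, hAid s hs, div_mul_eq_mul_div, ← sub_div, eq_div_iff hγne]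
    linear_combination h3
  -- auxiliary function g: constant on Icc
  set g : ℝ → ℝ := fun s => E s * d s - ε * k * Q s with hg
  have hgc : ContinuousOn g (Icc 0 m) :=
    (hEc.continuousOn.mul hdc).sub (continuous_const.mul hQc).continuousOn
  have hgeq : g = fun s => Real.exp (I s) * (v s - u s) - ε * k * Q s := by
    funext t; simp only [hg, hE, hd]
  have hgd : ∀ x ∈ Ico (0:ℝ) m, HasDerivWithinAt g 0 (Ici x) x := by
    intro x hx
    have hxm : x ∈ Icc (0:ℝ) m := ⟨hx.1, hx.2.le⟩
    have h1 : HasDerivAt (fun s => Real.exp (I s)) (Real.exp (I x) * A x) x := (hI x).exp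
    have h2 : HasDerivWithinAt (fun s => v s - u s) (v' x - u' x) (Icc 0 m) x :=
      (hvd x hxm).sub (hud x).hasDerivWithinAt
    have h3 : HasDerivAt (fun s => ε * k * Q s) (ε * k * q0 x) x :=
      HasDerivAt.const_mul (ε * k) (primitive_hasDerivAt hq0c x)
    have h4 : HasDerivWithinAt (fun s => Real.exp (I s) * (v s - u s) - ε * k * Q s)
        (Real.exp (I x) * A x * (v x - u x) + Real.exp (I x) * (v' x - u' x)
          - ε * k * q0 x) (Icc 0 m) x :=
      (h1.hasDerivWithinAt.mul h2).sub h3.hasDerivWithinAt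
    have h5 : Real.exp (I x) * A x * (v x - u x) + Real.exp (I x) * (v' x - u' x)
        - ε * k * q0 x = 0 := by
      rw [hdeq x hxm]
      simp only [hd, hq0, hE]
      have hGne : G x ≠ 0 := (hGpos x).ne'
      field_simp
      ring
    rw [hgeq]
    rw [h5] at h4
    exact h4.mono_of_mem_nhdsWithin (Icc_mem_nhdsGE_of_mem hx)
  have hg0 : g 0 = 0 := by
    simp [hg, hE, hI0, hd, hv0, hu0, hQdef, intervalIntegral.integral_same]
  have hgconst : ∀ x ∈ Icc (0:ℝ) m, g x = 0 := by
    intro x hxm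
    rw [← hg0]
    exact constant_of_has_deriv_right_zero hgc hgd x hxm
  -- hence d = ε k z on Icc
  have hdz : ∀ s ∈ Icc (0:ℝ) m, d s = ε * k * z s := by
    intro s hs
    have h0 := hgconst s hs
    simp only [hg] at h0
    have hEne : E s ≠ 0 := (hEpos s).ne'
    have h2 : d s = ε * k * Q s / E s := by
      rw [eq_div_iff hEne]
      linear_combination h0
    rw [h2]
    simp only [hz, hE, Real.exp_neg, div_eq_mul_inv]
    ring
  -- k = ε k Z
  have h2' : (∫ y in (0:ℝ)..m, d y) = ε * k * Z := by
    rw [hZ, ← intervalIntegral.integral_const_mul]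
    apply intervalIntegral.integral_congr
    intro y hy
    rw [uIcc_of_le hm.le] at hy
    exact hdz y hy
  have hvint : (∫ y in (0:ℝ)..m, d y) = k := by
    rw [hk, ← huint]
    simp only [hd]
    exact intervalIntegral.integral_sub (hvc.intervalIntegrable_of_Icc hm.le)
      (huc.intervalIntegrable _ _)
  have hkz : k = ε * k * Z := by
    rw [← h2']
    exact hvint.symm
  have hk0 : k = 0 := by
    have h : k * (1 - ε * Z) = 0 := by linear_combination hkz
    rcases mul_eq_zero.1 h with h' | h'
    · exact h'
    · linarith
  intro s hs
  have h := hdz s hs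
  rw [hk0] at h
  simp only [hd, mul_zero, zero_mul] at h
  linarith
end

section
/- Let λ ∈ ℂ. Define F(λ,s) = exp(−∫_0^s (λ+γ'(y)+μ(y))/γ(y) dy), and set a1(λ) = −∫_0^m F(λ,s)∫_0^s g(y)/F(λ,y) dy ds, a2(λ) = −∫_0^m F(λ,s)∫_0^s b1(y)/(γ(y)F(λ,y)) dy ds, a3(λ) = −∫_0^m b2(s)F(λ,s)∫_0^s g(y)/F(λ,y) dy ds, a4(λ) = −∫_0^m b2(s)F(λ,s)∫_0^s b1(y)/(γ(y)F(λ,y)) dy ds. Then there exists a continuously differentiable U : [0,m] → ℂ, not identically zero, with U(0) = 0 and γ(s)U'(s) + (λ+γ'(s)+μ(s))U(s) = γ(s)g(s)·∫_0^m U(y) dy + b1(s)·∫_0^m b2(y)U(y) dy for all s ∈ [0,m], if and only if (1+a1(λ))(1+a4(λ)) − a2(λ)a3(λ) = 0. -/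
open Set MeasureTheory intervalIntegral Filter

/-- FTC: the primitive of a function continuous on `Icc a b` has the integrand as
derivative within `Icc a b` at every point of `Icc a b` (including endpoints). -/
lemma primitive_hasDerivWithinAt_Icc {f : ℝ → ℂ} {a b : ℝ}
    (hf : ContinuousOn f (Icc a b)) {x : ℝ} (hx : x ∈ Icc a b) :
    HasDerivWithinAt (fun u => ∫ y in a..u, f y) (f x) (Icc a b) x := by
  haveI : Fact (x ∈ Icc a b) := ⟨hx⟩
  have hint : IntervalIntegrable f volume a x := by
    apply ContinuousOn.intervalIntegrable
    apply hf.mono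
    rw [uIcc_of_le hx.1]
    exact Icc_subset_Icc le_rfl hx.2
  exact intervalIntegral.integral_hasDerivWithinAt_right hint
    (hf.stronglyMeasurableAtFilter_nhdsWithin measurableSet_Icc x)
    (hf x hx)


/-- Continuity of a primitive on `Icc a b`. -/
lemma primitive_continuousOn_Icc {f : ℝ → ℂ} {a b : ℝ} (hab : a ≤ b)
    (hf : ContinuousOn f (Icc a b)) :
    ContinuousOn (fun s => ∫ y in a..s, f y) (Icc a b) := by
  have h := intervalIntegral.continuousOn_primitive_interval (μ := volume) (f := f)
    (a := a) (b := b) (by rw [uIcc_of_le hab]; exact hf.integrableOn_Icc)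
  rwa [uIcc_of_le hab] at h

/-- Characteristic equation for the linearisation with separable fertility:
`λ ∈ ℂ` is an eigenvalue (i.e. the eigenvalue problem has a nontrivial
continuously differentiable solution `U` with `U(0) = 0`) if and only if the
`2×2` determinant `(1+a1(λ))(1+a4(λ)) − a2(λ)a3(λ)` vanishes. -/
theorem eigenvalue_iff_det_eq_zero (m : ℝ) (hm : 0 < m)
    (γ γ' μ g b1 b2 : ℝ → ℝ)
    (hγd : ∀ s ∈ Icc (0:ℝ) m, HasDerivWithinAt γ (γ' s) (Icc 0 m) s)
    (hγ'c : ContinuousOn γ' (Icc 0 m))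
    (hγpos : ∀ s ∈ Icc (0:ℝ) m, 0 < γ s)
    (hμc : ContinuousOn μ (Icc 0 m))
    (hgc : ContinuousOn g (Icc 0 m))
    (hb1c : ContinuousOn b1 (Icc 0 m))
    (hb2c : ContinuousOn b2 (Icc 0 m))
    (lam : ℂ)
    (F : ℝ → ℂ)
    (hF : ∀ s, F s = Complex.exp
      (-∫ y in (0:ℝ)..s, (lam + (γ' y : ℂ) + (μ y : ℂ)) / (γ y : ℂ)))
    (a1 a2 a3 a4 : ℂ)
    (ha1 : a1 = -∫ s in (0:ℝ)..m, F s * ∫ y in (0:ℝ)..s, (g y : ℂ) / F y)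
    (ha2 : a2 = -∫ s in (0:ℝ)..m, F s * ∫ y in (0:ℝ)..s,
      (b1 y : ℂ) / ((γ y : ℂ) * F y))
    (ha3 : a3 = -∫ s in (0:ℝ)..m, (b2 s : ℂ) * F s *
      ∫ y in (0:ℝ)..s, (g y : ℂ) / F y)
    (ha4 : a4 = -∫ s in (0:ℝ)..m, (b2 s : ℂ) * F s *
      ∫ y in (0:ℝ)..s, (b1 y : ℂ) / ((γ y : ℂ) * F y)) :
    (∃ U U' : ℝ → ℂ, ContinuousOn U' (Icc 0 m) ∧
      (∀ s ∈ Icc (0:ℝ) m, HasDerivWithinAt U (U' s) (Icc 0 m) s) ∧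
      (∃ s ∈ Icc (0:ℝ) m, U s ≠ 0) ∧
      U 0 = 0 ∧
      (∀ s ∈ Icc (0:ℝ) m,
        (γ s : ℂ) * U' s + (lam + (γ' s : ℂ) + (μ s : ℂ)) * U s
          = (γ s : ℂ) * (g s : ℂ) * (∫ y in (0:ℝ)..m, U y)
            + (b1 s : ℂ) * ∫ y in (0:ℝ)..m, (b2 y : ℂ) * U y))
    ↔ (1 + a1) * (1 + a4) - a2 * a3 = 0 := by
  have hm' : (0:ℝ) ≤ m := hm.le
  have h0I : (0:ℝ) ∈ Icc (0:ℝ) m := ⟨le_rfl, hm'⟩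
  -- basic continuity facts
  have hγc : ContinuousOn γ (Icc 0 m) := fun s hs => (hγd s hs).continuousWithinAt
  have hγne : ∀ s ∈ Icc (0:ℝ) m, (γ s : ℂ) ≠ 0 := fun s hs =>
    Complex.ofReal_ne_zero.mpr (ne_of_gt (hγpos s hs))
  set q : ℝ → ℂ := fun y => (lam + (γ' y : ℂ) + (μ y : ℂ)) / (γ y : ℂ) with hqdef
  have hqc : ContinuousOn q (Icc 0 m) := by
    apply ContinuousOn.div
    · exact (continuousOn_const.add
        (Complex.continuous_ofReal.comp_continuousOn hγ'c)).add
        (Complex.continuous_ofReal.comp_continuousOn hμc)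
    · exact Complex.continuous_ofReal.comp_continuousOn hγc
    · exact hγne
  -- the integrating factor F
  have hFeq : F = fun s => Complex.exp (-∫ y in (0:ℝ)..s, q y) := funext hF
  have hFne : ∀ s, F s ≠ 0 := fun s => by rw [hF]; exact Complex.exp_ne_zero _
  have hGc : ContinuousOn (fun s => ∫ y in (0:ℝ)..s, q y) (Icc 0 m) :=
    primitive_continuousOn_Icc hm' hqc
  have hFc : ContinuousOn F (Icc 0 m) := by
    rw [hFeq]
    exact Complex.continuous_exp.comp_continuousOn hGc.neg
  have hFd : ∀ s ∈ Icc (0:ℝ) m, HasDerivWithinAt F (-q s * F s) (Icc 0 m) s := by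
    intro s hs
    have h1 : HasDerivWithinAt (fun u => ∫ y in (0:ℝ)..u, q y) (q s) (Icc 0 m) s :=
      primitive_hasDerivWithinAt_Icc hqc hs
    have h2 := h1.neg.cexp
    rw [hFeq]
    convert h2 using 1
    show -q s * Complex.exp (-∫ y in (0:ℝ)..s, q y) = _
    ring
    rfl
    rfl
  -- the two kernels and their primitives
  set f1 : ℝ → ℂ := fun y => (g y : ℂ) / F y with hf1def
  set f2 : ℝ → ℂ := fun y => (b1 y : ℂ) / ((γ y : ℂ) * F y) with hf2def
  have hf1c : ContinuousOn f1 (Icc 0 m) :=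
    (Complex.continuous_ofReal.comp_continuousOn hgc).div hFc (fun s hs => hFne s)
  have hf2c : ContinuousOn f2 (Icc 0 m) := by
    apply (Complex.continuous_ofReal.comp_continuousOn hb1c).div
      ((Complex.continuous_ofReal.comp_continuousOn hγc).mul hFc)
    exact fun s hs => mul_ne_zero (hγne s hs) (hFne s)
  set P1 : ℝ → ℂ := fun s => ∫ y in (0:ℝ)..s, f1 y with hP1def
  set P2 : ℝ → ℂ := fun s => ∫ y in (0:ℝ)..s, f2 y with hP2def
  have hP1c : ContinuousOn P1 (Icc 0 m) := primitive_continuousOn_Icc hm' hf1c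
  have hP2c : ContinuousOn P2 (Icc 0 m) := primitive_continuousOn_Icc hm' hf2c
  have hP1d : ∀ s ∈ Icc (0:ℝ) m, HasDerivWithinAt P1 (f1 s) (Icc 0 m) s :=
    fun s hs => primitive_hasDerivWithinAt_Icc hf1c hs
  have hP2d : ∀ s ∈ Icc (0:ℝ) m, HasDerivWithinAt P2 (f2 s) (Icc 0 m) s :=
    fun s hs => primitive_hasDerivWithinAt_Icc hf2c hs
  have hP10 : P1 0 = 0 := intervalIntegral.integral_same
  have hP20 : P2 0 = 0 := intervalIntegral.integral_same
  -- the explicit solution and its derivative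
  set V : ℂ → ℂ → ℝ → ℂ := fun c₁ c₂ s => F s * (c₁ * P1 s + c₂ * P2 s) with hVdef
  set V' : ℂ → ℂ → ℝ → ℂ := fun c₁ c₂ s =>
    -q s * F s * (c₁ * P1 s + c₂ * P2 s) + F s * (c₁ * f1 s + c₂ * f2 s) with hV'def
  have hVd : ∀ c₁ c₂, ∀ s ∈ Icc (0:ℝ) m,
      HasDerivWithinAt (V c₁ c₂) (V' c₁ c₂ s) (Icc 0 m) s := by
    intro c₁ c₂ s hs
    exact (hFd s hs).mul
      (((hP1d s hs).const_mul c₁).add ((hP2d s hs).const_mul c₂))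
  have hV'c : ∀ c₁ c₂, ContinuousOn (V' c₁ c₂) (Icc 0 m) := by
    intro c₁ c₂
    apply ContinuousOn.add
    · exact (hqc.neg.mul hFc).mul
        ((continuousOn_const.mul hP1c).add (continuousOn_const.mul hP2c))
    · exact hFc.mul
        ((continuousOn_const.mul hf1c).add (continuousOn_const.mul hf2c))
  -- the solution satisfies the ODE with constants c₁, c₂ on the RHS
  have hVode : ∀ c₁ c₂, ∀ s ∈ Icc (0:ℝ) m,
      (γ s : ℂ) * V' c₁ c₂ s + (lam + (γ' s : ℂ) + (μ s : ℂ)) * V c₁ c₂ s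
        = (γ s : ℂ) * (g s : ℂ) * c₁ + (b1 s : ℂ) * c₂ := by
    intro c₁ c₂ s hs
    have hγn := hγne s hs
    have hFn := hFne s
    simp only [hVdef, hV'def, hqdef, hf1def, hf2def]
    field_simp
    ring
  -- values of the two integrals of the explicit solution
  have hintFP1 : IntervalIntegrable (fun s => F s * P1 s) volume 0 m := by
    apply ContinuousOn.intervalIntegrable; rw [uIcc_of_le hm']; exact hFc.mul hP1c
  have hintFP2 : IntervalIntegrable (fun s => F s * P2 s) volume 0 m := by
    apply ContinuousOn.intervalIntegrable; rw [uIcc_of_le hm']; exact hFc.mul hP2c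
  have hb2cc : ContinuousOn (fun s => (b2 s : ℂ)) (Icc 0 m) :=
    Complex.continuous_ofReal.comp_continuousOn hb2c
  have hintBP1 : IntervalIntegrable (fun s => (b2 s : ℂ) * F s * P1 s) volume 0 m := by
    apply ContinuousOn.intervalIntegrable; rw [uIcc_of_le hm']
    exact (hb2cc.mul hFc).mul hP1c
  have hintBP2 : IntervalIntegrable (fun s => (b2 s : ℂ) * F s * P2 s) volume 0 m := by
    apply ContinuousOn.intervalIntegrable; rw [uIcc_of_le hm']
    exact (hb2cc.mul hFc).mul hP2c
  have hVint : ∀ c₁ c₂, (∫ y in (0:ℝ)..m, V c₁ c₂ y) = -(c₁ * a1) - c₂ * a2 := by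
    intro c₁ c₂
    have e : ∀ y, V c₁ c₂ y = c₁ * (F y * P1 y) + c₂ * (F y * P2 y) := by
      intro y; simp only [hVdef]; ring
    calc (∫ y in (0:ℝ)..m, V c₁ c₂ y)
        = ∫ y in (0:ℝ)..m, (c₁ * (F y * P1 y) + c₂ * (F y * P2 y)) := by
          exact intervalIntegral.integral_congr (fun y _ => e y)
      _ = (∫ y in (0:ℝ)..m, c₁ * (F y * P1 y)) + ∫ y in (0:ℝ)..m, c₂ * (F y * P2 y) :=
          intervalIntegral.integral_add (hintFP1.const_mul c₁) (hintFP2.const_mul c₂)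
      _ = c₁ * (∫ y in (0:ℝ)..m, F y * P1 y) + c₂ * (∫ y in (0:ℝ)..m, F y * P2 y) := by
          rw [intervalIntegral.integral_const_mul, intervalIntegral.integral_const_mul]
      _ = -(c₁ * a1) - c₂ * a2 := by rw [ha1, ha2]; ring
  have hVintb : ∀ c₁ c₂,
      (∫ y in (0:ℝ)..m, (b2 y : ℂ) * V c₁ c₂ y) = -(c₁ * a3) - c₂ * a4 := by
    intro c₁ c₂
    have e : ∀ y, (b2 y : ℂ) * V c₁ c₂ y
        = c₁ * ((b2 y : ℂ) * F y * P1 y) + c₂ * ((b2 y : ℂ) * F y * P2 y) := by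
      intro y; simp only [hVdef]; ring
    calc (∫ y in (0:ℝ)..m, (b2 y : ℂ) * V c₁ c₂ y)
        = ∫ y in (0:ℝ)..m,
            (c₁ * ((b2 y : ℂ) * F y * P1 y) + c₂ * ((b2 y : ℂ) * F y * P2 y)) :=
          intervalIntegral.integral_congr (fun y _ => e y)
      _ = (∫ y in (0:ℝ)..m, c₁ * ((b2 y : ℂ) * F y * P1 y))
            + ∫ y in (0:ℝ)..m, c₂ * ((b2 y : ℂ) * F y * P2 y) :=
          intervalIntegral.integral_add (hintBP1.const_mul c₁) (hintBP2.const_mul c₂)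
      _ = c₁ * (∫ y in (0:ℝ)..m, (b2 y : ℂ) * F y * P1 y)
            + c₂ * (∫ y in (0:ℝ)..m, (b2 y : ℂ) * F y * P2 y) := by
          rw [intervalIntegral.integral_const_mul, intervalIntegral.integral_const_mul]
      _ = -(c₁ * a3) - c₂ * a4 := by rw [ha3, ha4]; ring
  -- uniqueness: any solution of the ODE with RHS constants c₁ c₂ and U 0 = 0 equals V c₁ c₂
  have huniq : ∀ (U U' : ℝ → ℂ) (c₁ c₂ : ℂ),
      (∀ s ∈ Icc (0:ℝ) m, HasDerivWithinAt U (U' s) (Icc 0 m) s) → U 0 = 0 →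
      (∀ s ∈ Icc (0:ℝ) m,
        (γ s : ℂ) * U' s + (lam + (γ' s : ℂ) + (μ s : ℂ)) * U s
          = (γ s : ℂ) * (g s : ℂ) * c₁ + (b1 s : ℂ) * c₂) →
      ∀ s ∈ Icc (0:ℝ) m, U s = V c₁ c₂ s := by
    intro U U' c₁ c₂ hUd hU0 hODE
    set W : ℝ → ℂ := fun s => U s / F s - (c₁ * P1 s + c₂ * P2 s) with hWdef
    have hWd : ∀ s ∈ Icc (0:ℝ) m, HasDerivWithinAt W 0 (Icc 0 m) s := by
      intro s hs
      have hγn := hγne s hs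
      have hFn := hFne s
      have h2 := ((hUd s hs).div (hFd s hs) hFn).sub
        (((hP1d s hs).const_mul c₁).add ((hP2d s hs).const_mul c₂))
      convert h2 using 1
      case e'_4 => rfl
      case e'_8 => rfl
      have key := hODE s hs
      have hU' : U' s = ((γ s : ℂ) * (g s : ℂ) * c₁ + (b1 s : ℂ) * c₂
          - (lam + (γ' s : ℂ) + (μ s : ℂ)) * U s) / (γ s : ℂ) := by
        field_simp
        linear_combination key
      rw [hU']
      simp only [hqdef, hf1def, hf2def]
      field_simp
      ring
    have hW0 : W 0 = 0 := by
      simp only [hWdef, hU0, hP10, hP20, zero_mul, mul_zero, add_zero, zero_sub, neg_eq_zero]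
      ring
    have hWconst : ∀ s ∈ Icc (0:ℝ) m, W s = 0 := by
      intro s hs
      have hWdiff : DifferentiableOn ℝ W (Icc 0 m) :=
        fun x hx => (hWd x hx).differentiableWithinAt
      have := (convex_Icc (0:ℝ) m).is_const_of_fderivWithin_eq_zero hWdiff
        (fun x hx => by
          have h := (hWd x hx).hasFDerivWithinAt.fderivWithin (uniqueDiffOn_Icc hm x hx)
          rw [h]; ext; simp) hs h0I
      rw [this, hW0]
    intro s hs
    have h := hWconst s hs
    have hFn := hFne s
    simp only [hWdef, sub_eq_zero] at h
    simp only [hVdef]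
    field_simp at h
    rw [h]
  constructor
  · -- forward direction
    rintro ⟨U, U', hU'c, hUd, ⟨s0, hs0, hUs0⟩, hU0, hODE⟩
    set c₁ : ℂ := ∫ y in (0:ℝ)..m, U y with hc₁def
    set c₂ : ℂ := ∫ y in (0:ℝ)..m, (b2 y : ℂ) * U y with hc₂def
    have hEq : ∀ s ∈ Icc (0:ℝ) m, U s = V c₁ c₂ s :=
      huniq U U' c₁ c₂ hUd hU0 hODE
    have hEq' : EqOn U (V c₁ c₂) (uIcc (0:ℝ) m) := by
      rw [uIcc_of_le hm']; exact hEq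
    have ht1 : (∫ y in (0:ℝ)..m, U y) = -(c₁ * a1) - c₂ * a2 := by
      rw [intervalIntegral.integral_congr hEq', hVint]
    have hz2 : EqOn (fun y => (b2 y : ℂ) * U y) (fun y => (b2 y : ℂ) * V c₁ c₂ y)
        (uIcc (0:ℝ) m) := by
      intro y hy
      simp only []
      rw [hEq' hy]
    have ht2 : (∫ y in (0:ℝ)..m, (b2 y : ℂ) * U y) = -(c₁ * a3) - c₂ * a4 := by
      rw [intervalIntegral.integral_congr hz2, hVintb]
    have e1 : (1 + a1) * c₁ + a2 * c₂ = 0 := by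
      have h := hc₁def.trans ht1
      linear_combination h
    have e2 : a3 * c₁ + (1 + a4) * c₂ = 0 := by
      have h := hc₂def.trans ht2
      linear_combination h
    have hne : ¬(c₁ = 0 ∧ c₂ = 0) := by
      rintro ⟨h1, h2⟩
      apply hUs0
      rw [hEq s0 hs0, hVdef]
      simp [h1, h2]
    by_cases hc : c₁ = 0
    · have hc2 : c₂ ≠ 0 := fun h => hne ⟨hc, h⟩
      have : ((1 + a1) * (1 + a4) - a2 * a3) * c₂ = 0 := by
        linear_combination (1 + a1) * e2 - a3 * e1
      exact (mul_eq_zero.mp this).resolve_right hc2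
    · have : ((1 + a1) * (1 + a4) - a2 * a3) * c₁ = 0 := by
        linear_combination (1 + a4) * e1 - a2 * e2
      exact (mul_eq_zero.mp this).resolve_right hc
  · -- backward direction
    intro hdet
    -- choose a nonzero solution (c₁, c₂) of the linear system
    obtain ⟨c₁, c₂, hne, e1, e2⟩ : ∃ c₁ c₂ : ℂ, ¬(c₁ = 0 ∧ c₂ = 0) ∧
        (1 + a1) * c₁ + a2 * c₂ = 0 ∧ a3 * c₁ + (1 + a4) * c₂ = 0 := by
      by_cases h4 : 1 + a4 = 0 ∧ a3 = 0
      · by_cases h1 : 1 + a1 = 0 ∧ a2 = 0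
        · exact ⟨1, 0, by simp, by rw [h1.1, h1.2]; ring, by rw [h4.1, h4.2]; ring⟩
        · refine ⟨-a2, 1 + a1, ?_, by ring, by linear_combination hdet⟩
          rintro ⟨hh1, hh2⟩
          exact h1 ⟨hh2, by simpa using hh1⟩
      · refine ⟨1 + a4, -a3, ?_, by linear_combination hdet, by ring⟩
        rintro ⟨hh1, hh2⟩
        exact h4 ⟨hh1, by simpa using hh2⟩
    have hI1 : (∫ y in (0:ℝ)..m, V c₁ c₂ y) = c₁ := by
      rw [hVint]; linear_combination -e1
    have hI2 : (∫ y in (0:ℝ)..m, (b2 y : ℂ) * V c₁ c₂ y) = c₂ := by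
      rw [hVintb]; linear_combination -e2
    refine ⟨V c₁ c₂, V' c₁ c₂, hV'c c₁ c₂, hVd c₁ c₂, ?_, ?_, ?_⟩
    · -- nontriviality
      by_contra h
      push_neg at h
      have hz : EqOn (V c₁ c₂) (fun _ => (0:ℂ)) (uIcc (0:ℝ) m) := by
        rw [uIcc_of_le hm']; exact fun y hy => h y hy
      have hc1 : c₁ = 0 := by
        rw [← hI1, intervalIntegral.integral_congr hz]
        simp
      have hz2 : EqOn (fun y => (b2 y : ℂ) * V c₁ c₂ y) (fun _ => (0:ℂ))
          (uIcc (0:ℝ) m) := by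
        rw [uIcc_of_le hm']
        intro y hy
        simp [h y hy]
      have hc2 : c₂ = 0 := by
        rw [← hI2, intervalIntegral.integral_congr hz2]
        simp
      exact hne ⟨hc1, hc2⟩
    · -- initial condition
      simp only [hVdef, hP10, hP20]
      ring
    · -- the ODE
      intro s hs
      rw [hI1, hI2]
      exact hVode c₁ c₂ s hs
end

section
/- Let h : [0,m] → ℝ be continuous with h ≥ 0 and h(y0) > 0 for some y0 ∈ [0,m). Define H(λ) = ∫_0^m ∫_0^s exp(−∫_y^s (λ+γ'(r)+μ(r))/γ(r) dr) · (h(y)/γ(y)) dy ds for λ ∈ ℝ. Then H is strictly decreasing, H(λ) → 0 as λ → +∞, H(λ) → +∞ as λ → −∞, the equation H(λ) = 1 has a unique real solution λ0, and λ0 < 0 if and only if H(0) < 1. -/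
open Set MeasureTheory intervalIntegral Filter

/-- Positivity of an interval integral of a continuous nonnegative function that is
positive at some point of the interval. -/
lemma my_integral_pos_of_nonneg_of_pos {f : ℝ → ℝ} {a b x0 : ℝ} (hab : a < b)
    (hf : Continuous f) (hnn : ∀ x ∈ Icc a b, 0 ≤ f x) (hx0 : x0 ∈ Icc a b)
    (hpos : 0 < f x0) : 0 < ∫ x in a..b, f x := by
  obtain ⟨δ, hδ, hball⟩ : ∃ δ > 0, ∀ x ∈ Metric.ball x0 δ, 0 < f x := by
    have := hf.continuousAt (x := x0)
    rcases Metric.continuousAt_iff.mp this (f x0) hpos with ⟨δ, hδ, hδ'⟩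
    exact ⟨δ, hδ, fun x hx => by
      have := hδ' (Metric.mem_ball.mp hx)
      have : |f x - f x0| < f x0 := by simpa [Real.dist_eq] using this
      linarith [abs_lt.mp this |>.1]⟩
  set a' := max a (x0 - δ/2) with ha'
  set b' := min b (x0 + δ/2) with hb'
  have haa' : a ≤ a' := le_max_left _ _
  have hb'b : b' ≤ b := min_le_left _ _
  have ha'x0 : a' ≤ x0 := max_le hx0.1 (by linarith)
  have hx0b' : b' ≤ x0 + δ/2 := min_le_right _ _
  have ha'b' : a' < b' := by
    rcases lt_or_eq_of_le hx0.2 with hlt | heq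
    · have : x0 < b' := lt_min hlt (by linarith)
      linarith
    · have hb'x : b' = x0 := by rw [hb', ← heq]; exact min_eq_left (by linarith [hx0.2])
      have : a' < x0 := by
        apply max_lt
        · rw [← heq] at hab; exact hab
        · linarith
      linarith [hb'x ▸ this]
  have hsub : Ioo a' b' ⊆ Metric.ball x0 δ := by
    intro x hx
    rw [Metric.mem_ball, Real.dist_eq, abs_lt]
    constructor
    · have : x0 - δ/2 ≤ a' := le_max_right _ _
      have := hx.1; nlinarith
    · have := hx.2; nlinarith
  have hint : ∀ u v : ℝ, IntervalIntegrable f volume u v := fun u v =>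
    hf.intervalIntegrable u v
  have hsplit : (∫ x in a..b, f x) = (∫ x in a..a', f x) + (∫ x in a'..b', f x)
      + (∫ x in b'..b, f x) := by
    rw [integral_add_adjacent_intervals (hint a a') (hint a' b'),
      integral_add_adjacent_intervals (hint a b') (hint b' b)]
  have h1 : 0 ≤ ∫ x in a..a', f x :=
    intervalIntegral.integral_nonneg haa' (fun u hu => hnn u ⟨hu.1, le_trans hu.2 (by linarith)⟩)
  have h3 : 0 ≤ ∫ x in b'..b, f x :=
    intervalIntegral.integral_nonneg hb'b (fun u hu => hnn u ⟨le_trans (by linarith) hu.1, hu.2⟩)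
  have h2 : 0 < ∫ x in a'..b', f x :=
    intervalIntegral_pos_of_pos_on (hint a' b') (fun x hx => hball x (hsub hx)) ha'b'
  linarith [hsplit]

set_option maxHeartbeats 1000000 in
theorem my_aux_main (m : ℝ) (hm : 0 < m) (P Q c : ℝ → ℝ)
    (hP : Continuous P) (hQ : Continuous Q) (hc : Continuous c)
    (hPmono : StrictMonoOn P (Icc 0 m))
    (hcnn : ∀ y ∈ Icc (0:ℝ) m, 0 ≤ c y)
    (y0 : ℝ) (hy0 : y0 ∈ Ico (0:ℝ) m) (hc0 : 0 < c y0)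
    (H : ℝ → ℝ)
    (hH : ∀ lam, H lam = ∫ s in (0:ℝ)..m, ∫ y in (0:ℝ)..s,
       Real.exp (-(lam * (P s - P y) + (Q s - Q y))) * c y) :
    StrictAnti H ∧ Tendsto H atTop (nhds 0) ∧ Tendsto H atBot atTop ∧
    ∃ lam0 : ℝ, H lam0 = 1 ∧ (∀ lam, H lam = 1 → lam = lam0) ∧
      (lam0 < 0 ↔ H 0 < 1) := by
  -- notation
  set v : ℝ → ℝ → ℝ → ℝ := fun lam s y =>
    Real.exp (-(lam * (P s - P y) + (Q s - Q y))) * c y with hv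
  set J : ℝ → ℝ → ℝ := fun lam s => ∫ y in (0:ℝ)..s, v lam s y with hJ
  have hvcont : ∀ lam s, Continuous (v lam s) := by intro lam s; fun_prop
  have hvint : ∀ lam s a b, IntervalIntegrable (v lam s) volume a b := fun lam s a b =>
    (hvcont lam s).intervalIntegrable a b
  have hHJ : ∀ lam, H lam = ∫ s in (0:ℝ)..m, J lam s := hH
  -- factorization of the inner integral
  have hvfact : ∀ lam s y, v lam s y =
      Real.exp (-(lam * P s + Q s)) * (Real.exp (lam * P y + Q y) * c y) := by
    intro lam s y
    have harg : -(lam * (P s - P y) + (Q s - Q y))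
        = (-(lam * P s + Q s)) + (lam * P y + Q y) := by ring
    rw [hv]; dsimp only; rw [harg, Real.exp_add, mul_assoc]
  have hJfact : ∀ lam s, J lam s = Real.exp (-(lam * P s + Q s)) *
      ∫ y in (0:ℝ)..s, Real.exp (lam * P y + Q y) * c y := by
    intro lam s
    rw [hJ]; dsimp only
    rw [← intervalIntegral.integral_const_mul]
    exact intervalIntegral.integral_congr fun y _ => hvfact lam s y
  have hucont : Continuous (Function.uncurry fun (lam y : ℝ) =>
      Real.exp (lam * P y + Q y) * c y) := by fun_prop
  have hJcont : ∀ lam, Continuous (J lam) := by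
    intro lam
    have : Continuous fun s => ∫ y in (0:ℝ)..s, Real.exp (lam * P y + Q y) * c y :=
      intervalIntegral.continuous_primitive
        (fun a b => (by fun_prop : Continuous fun y =>
          Real.exp (lam * P y + Q y) * c y).intervalIntegrable a b) 0
    have : Continuous fun s => Real.exp (-(lam * P s + Q s)) *
        ∫ y in (0:ℝ)..s, Real.exp (lam * P y + Q y) * c y := by fun_prop
    exact continuous_congr (fun s => (hJfact lam s).symm) |>.mp this
  have hJint : ∀ lam a b, IntervalIntegrable (J lam) volume a b := fun lam a b =>
    (hJcont lam).intervalIntegrable a b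
  -- nonnegativity
  have hvnn : ∀ lam s, ∀ y ∈ Icc (0:ℝ) m, 0 ≤ v lam s y := by
    intro lam s y hy
    exact mul_nonneg (Real.exp_pos _).le (hcnn y hy)
  have hJnn : ∀ lam, ∀ s ∈ Icc (0:ℝ) m, 0 ≤ J lam s := by
    intro lam s hs
    exact intervalIntegral.integral_nonneg hs.1
      (fun y hy => hvnn lam s y ⟨hy.1, hy.2.trans hs.2⟩)
  -- an interval [a, b] ⊆ [y0, m) on which c is positive
  obtain ⟨b, hy0b, hbm, hcb⟩ : ∃ b : ℝ, y0 < b ∧ b < m ∧ ∀ x ∈ Icc y0 b, 0 < c x := by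
    rcases Metric.continuousAt_iff.mp (hc.continuousAt (x := y0)) (c y0) hc0 with ⟨δ, hδ, hδ'⟩
    refine ⟨min (y0 + δ/2) ((y0 + m)/2), ?_, ?_, ?_⟩
    · exact lt_min (by linarith) (by linarith [hy0.1, hy0.2])
    · exact lt_of_le_of_lt (min_le_right _ _) (by linarith [hy0.2])
    · intro x hx
      have hxd : dist x y0 < δ := by
        rw [Real.dist_eq, abs_lt]
        have := hx.1
        have h2 := hx.2.trans (min_le_left _ _)
        constructor <;> linarith
      have := hδ' hxd
      have : |c x - c y0| < c y0 := by simpa [Real.dist_eq] using this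
      linarith [abs_lt.mp this |>.1]
  have hy0m : y0 ∈ Icc (0:ℝ) m := ⟨hy0.1, hy0.2.le⟩
  have hbmem : b ∈ Icc (0:ℝ) m := ⟨hy0.1.trans hy0b.le, hbm.le⟩
  -- pointwise monotonicity in lam of the inner integrand
  have hvmono : ∀ lam1 lam2, lam1 ≤ lam2 → ∀ s ∈ Icc (0:ℝ) m, ∀ y ∈ Icc (0:ℝ) s,
      v lam2 s y ≤ v lam1 s y := by
    intro lam1 lam2 h12 s hs y hy
    have hym : y ∈ Icc (0:ℝ) m := ⟨hy.1, hy.2.trans hs.2⟩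
    have hD : 0 ≤ P s - P y := by
      rcases eq_or_lt_of_le hy.2 with rfl | hlt
      · simp
      · exact (sub_pos.mpr (hPmono hym hs hlt)).le
    have : lam1 * (P s - P y) ≤ lam2 * (P s - P y) :=
      mul_le_mul_of_nonneg_right h12 hD
    exact mul_le_mul_of_nonneg_right (Real.exp_le_exp.mpr (by linarith)) (hcnn y hym)
  -- monotonicity of inner integral
  have hJmono : ∀ lam1 lam2, lam1 ≤ lam2 → ∀ s ∈ Icc (0:ℝ) m, J lam2 s ≤ J lam1 s := by
    intro lam1 lam2 h12 s hs
    exact intervalIntegral.integral_mono_on hs.1 (hvint _ _ _ _) (hvint _ _ _ _)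
      (fun y hy => hvmono lam1 lam2 h12 s hs y hy)
  -- strict antitonicity
  have hmmem : m ∈ Icc (0:ℝ) m := ⟨hm.le, le_refl m⟩
  have hstrict : StrictAnti H := by
    intro lam1 lam2 h12
    rw [hHJ lam1, hHJ lam2]
    have hpt : 0 < J lam1 m - J lam2 m := by
      rw [hJ]; dsimp only
      rw [← intervalIntegral.integral_sub (hvint _ _ _ _) (hvint _ _ _ _)]
      apply my_integral_pos_of_nonneg_of_pos hm
        ((hvcont lam1 m).sub (hvcont lam2 m))
        (fun x hx => sub_nonneg.mpr (hvmono lam1 lam2 h12.le m hmmem x hx))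
        hy0m
      have hD : 0 < P m - P y0 := sub_pos.mpr (hPmono hy0m hmmem hy0.2)
      have hlt : lam1 * (P m - P y0) < lam2 * (P m - P y0) :=
        mul_lt_mul_of_pos_right h12 hD
      have := Real.exp_lt_exp.mpr (show -(lam2 * (P m - P y0) + (Q m - Q y0))
          < -(lam1 * (P m - P y0) + (Q m - Q y0)) by linarith)
      exact sub_pos.mpr (mul_lt_mul_of_pos_right this hc0)
    have hle : ∀ s ∈ Icc (0:ℝ) m, 0 ≤ J lam1 s - J lam2 s := fun s hs =>
      sub_nonneg.mpr (hJmono lam1 lam2 h12.le s hs)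
    have := my_integral_pos_of_nonneg_of_pos hm ((hJcont lam1).sub (hJcont lam2))
      hle hmmem hpt
    simp only [Pi.sub_apply] at this
    rw [intervalIntegral.integral_sub (hJint _ _ _) (hJint _ _ _)] at this
    linarith
  -- continuity of H
  have hJointJ : Continuous fun p : ℝ × ℝ => J p.1 p.2 := by
    have h1 : Continuous fun p : ℝ × ℝ =>
        ∫ y in (0:ℝ)..p.2, Real.exp (p.1 * P y + Q y) * c y :=
      intervalIntegral.continuous_parametric_primitive_of_continuous
        (f := fun lam y => Real.exp (lam * P y + Q y) * c y) hucont
    have h2 : Continuous fun p : ℝ × ℝ => Real.exp (-(p.1 * P p.2 + Q p.2)) *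
        ∫ y in (0:ℝ)..p.2, Real.exp (p.1 * P y + Q y) * c y :=
      (by fun_prop : Continuous fun p : ℝ × ℝ =>
        Real.exp (-(p.1 * P p.2 + Q p.2))).mul h1
    exact h2.congr fun p => (hJfact p.1 p.2).symm
  have hHcont : Continuous H := by
    have h1 : Continuous fun lam : ℝ => ∫ s in (0:ℝ)..m, J lam s :=
      intervalIntegral.continuous_parametric_intervalIntegral_of_continuous
        (f := J) (μ := volume) hJointJ continuous_const
    exact h1.congr fun lam => (hHJ lam).symm
  -- limit at +infinity
  have htop : Tendsto H atTop (nhds 0) := by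
    have hmain : Tendsto (fun lam => ∫ s in (0:ℝ)..m, J lam s) atTop
        (nhds (∫ s in (0:ℝ)..m, (0:ℝ))) := by
      apply intervalIntegral.tendsto_integral_filter_of_dominated_convergence
        (bound := fun s => J 0 s)
      · filter_upwards with lam using (hJcont lam).aestronglyMeasurable
      · filter_upwards [eventually_ge_atTop (0:ℝ)] with lam hlam
        filter_upwards with s hs
        have hs' : s ∈ Icc (0:ℝ) m := by
          rw [uIoc_of_le hm.le] at hs; exact ⟨hs.1.le, hs.2⟩
        rw [Real.norm_eq_abs, abs_of_nonneg (hJnn lam s hs')]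
        exact hJmono 0 lam hlam s hs'
      · exact hJint 0 0 m
      · filter_upwards with s hsmem
        have hs' : s ∈ Icc (0:ℝ) m := by
          rw [uIoc_of_le hm.le] at hsmem; exact ⟨hsmem.1.le, hsmem.2⟩
        have hinner : Tendsto (fun lam => ∫ y in (0:ℝ)..s, v lam s y) atTop
            (nhds (∫ y in (0:ℝ)..s, (0:ℝ))) := by
          apply intervalIntegral.tendsto_integral_filter_of_dominated_convergence
            (bound := fun y => v 0 s y)
          · filter_upwards with lam using (hvcont lam s).aestronglyMeasurable
          · filter_upwards [eventually_ge_atTop (0:ℝ)] with lam hlam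
            filter_upwards with y hy
            have hy' : y ∈ Icc (0:ℝ) s := by
              rw [uIoc_of_le hs'.1] at hy; exact ⟨hy.1.le, hy.2⟩
            have hym : y ∈ Icc (0:ℝ) m := ⟨hy'.1, hy'.2.trans hs'.2⟩
            rw [Real.norm_eq_abs, abs_of_nonneg (hvnn lam s y hym)]
            exact hvmono 0 lam hlam s hs' y hy'
          · exact hvint 0 s 0 s
          · have hae : ∀ᵐ y : ℝ, y ≠ s := by
              refine (MeasureTheory.ae_iff).mpr ?_
              simpa using measure_singleton s
            filter_upwards [hae] with y hy hymem
            have hy' : y ∈ Ioc 0 s := by rwa [uIoc_of_le hs'.1] at hymem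
            have hys : y < s := lt_of_le_of_ne hy'.2 hy
            have hym : y ∈ Icc (0:ℝ) m := ⟨hy'.1.le, hys.le.trans hs'.2⟩
            have hD : 0 < P s - P y := sub_pos.mpr (hPmono hym hs' hys)
            have h1 : Tendsto (fun lam : ℝ => lam * (P s - P y) + (Q s - Q y))
                atTop atTop :=
              tendsto_atTop_add_const_right _ _ (Tendsto.atTop_mul_const hD tendsto_id)
            have h2 : Tendsto (fun lam : ℝ =>
                Real.exp (-(lam * (P s - P y) + (Q s - Q y)))) atTop (nhds 0) :=
              Real.tendsto_exp_atBot.comp (tendsto_neg_atTop_atBot.comp h1)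
            have h3 := h2.mul_const (c y)
            rw [zero_mul] at h3
            exact h3
        rw [hJ]; dsimp only
        simpa using hinner
    have hz : (∫ s in (0:ℝ)..m, (0:ℝ)) = 0 := by simp
    rw [hz] at hmain
    exact hmain.congr fun lam => (hHJ lam).symm
  -- limit at -infinity
  have hbot : Tendsto H atBot atTop := by
    set b' : ℝ := (b + m) / 2 with hb'def
    have hbb' : b < b' := by rw [hb'def]; linarith
    have hb'm : b' < m := by rw [hb'def]; linarith
    have hb'mem : b' ∈ Icc (0:ℝ) m := ⟨(hy0.1.trans hy0b.le).trans hbb'.le, hb'm.le⟩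
    set ε : ℝ := P b' - P b with hεdef
    have hε : 0 < ε := sub_pos.mpr (hPmono hbmem hb'mem hbb')
    set W : ℝ × ℝ → ℝ := fun p => Real.exp (-(Q p.2 - Q p.1)) * c p.1 with hWdef
    have hWcont : Continuous W := by rw [hWdef]; fun_prop
    obtain ⟨p0, hp0mem, hp0min⟩ :=
      (isCompact_Icc.prod isCompact_Icc :
        IsCompact (Icc y0 b ×ˢ Icc b' m)).exists_isMinOn
      ⟨(y0, b'), ⟨left_mem_Icc.mpr hy0b.le, left_mem_Icc.mpr hb'm.le⟩⟩
      hWcont.continuousOn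
    set κ : ℝ := W p0 with hκdef
    have hκpos : 0 < κ :=
      mul_pos (Real.exp_pos _) (hcb p0.1 hp0mem.1)
    have hvlow : ∀ lam ≤ (0:ℝ), ∀ s ∈ Icc b' m, ∀ y ∈ Icc y0 b,
        Real.exp (-(lam * ε)) * κ ≤ v lam s y := by
      intro lam hlam s hs y hy
      have hym : y ∈ Icc (0:ℝ) m := ⟨hy0.1.trans hy.1, hy.2.trans (hbb'.le.trans hb'm.le)⟩
      have hsm : s ∈ Icc (0:ℝ) m := ⟨hb'mem.1.trans hs.1, hs.2⟩
      have hDge : ε ≤ P s - P y := by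
        have h1 : P y ≤ P b := hPmono.monotoneOn hym hbmem hy.2
        have h2 : P b' ≤ P s := hPmono.monotoneOn hb'mem hsm hs.1
        rw [hεdef]; linarith
      have hWge : κ ≤ W (y, s) := hp0min ⟨hy, hs⟩
      have hexp : Real.exp (-(lam * ε)) ≤ Real.exp (-(lam * (P s - P y))) := by
        apply Real.exp_le_exp.mpr
        have := mul_le_mul_of_nonpos_left hDge hlam
        linarith
      have hfact : v lam s y = Real.exp (-(lam * (P s - P y))) * W (y, s) := by
        rw [hv, hWdef]; dsimp only
        rw [← mul_assoc, ← Real.exp_add]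
        ring_nf
      rw [hfact]
      exact mul_le_mul hexp hWge hκpos.le (Real.exp_pos _).le
    have hJlow : ∀ lam ≤ (0:ℝ), ∀ s ∈ Icc b' m,
        Real.exp (-(lam * ε)) * κ * (b - y0) ≤ J lam s := by
      intro lam hlam s hs
      have hsm : s ∈ Icc (0:ℝ) m := ⟨hb'mem.1.trans hs.1, hs.2⟩
      have h0y0 : (0:ℝ) ≤ y0 := hy0.1
      have hbs : b ≤ s := hbb'.le.trans hs.1
      have hsplit : J lam s = (∫ y in (0:ℝ)..y0, v lam s y)
          + (∫ y in y0..b, v lam s y) + ∫ y in b..s, v lam s y := by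
        rw [hJ]; dsimp only
        rw [integral_add_adjacent_intervals (hvint lam s 0 y0) (hvint lam s y0 b),
          integral_add_adjacent_intervals (hvint lam s 0 b) (hvint lam s b s)]
      have h1 : 0 ≤ ∫ y in (0:ℝ)..y0, v lam s y :=
        intervalIntegral.integral_nonneg h0y0 fun y hy =>
          hvnn lam s y ⟨hy.1, (hy.2.trans hy0.2.le)⟩
      have h3 : 0 ≤ ∫ y in b..s, v lam s y :=
        intervalIntegral.integral_nonneg hbs fun y hy =>
          hvnn lam s y ⟨hbmem.1.trans hy.1, hy.2.trans hsm.2⟩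
      have h2 : Real.exp (-(lam * ε)) * κ * (b - y0) ≤ ∫ y in y0..b, v lam s y := by
        have := intervalIntegral.integral_mono_on (f := fun _ : ℝ => Real.exp (-(lam * ε)) * κ)
          hy0b.le (intervalIntegrable_const) (hvint lam s y0 b)
          (fun y hy => hvlow lam hlam s hs y hy)
        rw [intervalIntegral.integral_const] at this
        calc Real.exp (-(lam * ε)) * κ * (b - y0)
            = (b - y0) • (Real.exp (-(lam * ε)) * κ) := by
              rw [smul_eq_mul]; ring
          _ ≤ _ := this
      linarith [hsplit]
    have hHlow : ∀ lam ≤ (0:ℝ),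
        Real.exp (-(lam * ε)) * (κ * (b - y0) * (m - b')) ≤ H lam := by
      intro lam hlam
      rw [hHJ lam]
      have hsplit : (∫ s in (0:ℝ)..m, J lam s)
          = (∫ s in (0:ℝ)..b', J lam s) + ∫ s in b'..m, J lam s := by
        rw [integral_add_adjacent_intervals (hJint lam 0 b') (hJint lam b' m)]
      have h1 : 0 ≤ ∫ s in (0:ℝ)..b', J lam s :=
        intervalIntegral.integral_nonneg hb'mem.1 fun s hs =>
          hJnn lam s ⟨hs.1, hs.2.trans hb'm.le⟩
      have h2 : Real.exp (-(lam * ε)) * κ * (b - y0) * (m - b')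
          ≤ ∫ s in b'..m, J lam s := by
        have := intervalIntegral.integral_mono_on
          (f := fun _ : ℝ => Real.exp (-(lam * ε)) * κ * (b - y0))
          hb'm.le (intervalIntegrable_const) (hJint lam b' m)
          (fun s hs => hJlow lam hlam s hs)
        rw [intervalIntegral.integral_const] at this
        calc Real.exp (-(lam * ε)) * κ * (b - y0) * (m - b')
            = (m - b') • (Real.exp (-(lam * ε)) * κ * (b - y0)) := by
              rw [smul_eq_mul]; ring
          _ ≤ _ := this
      have : Real.exp (-(lam * ε)) * (κ * (b - y0) * (m - b'))
          = Real.exp (-(lam * ε)) * κ * (b - y0) * (m - b') := by ring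
      linarith [hsplit]
    have hC : 0 < κ * (b - y0) * (m - b') := by
      apply mul_pos (mul_pos hκpos (by linarith)) (by linarith)
    have hlow : Tendsto (fun lam : ℝ =>
        Real.exp (-(lam * ε)) * (κ * (b - y0) * (m - b'))) atBot atTop := by
      have h1 : Tendsto (fun lam : ℝ => lam * ε) atBot atBot :=
        Tendsto.atBot_mul_const hε tendsto_id
      have h2 : Tendsto (fun lam : ℝ => -(lam * ε)) atBot atTop :=
        tendsto_neg_atBot_atTop.comp h1
      exact Tendsto.atTop_mul_const hC (Real.tendsto_exp_atTop.comp h2)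
    apply tendsto_atTop_mono' atBot ?_ hlow
    filter_upwards [eventually_le_atBot (0:ℝ)] with lam hlam using hHlow lam hlam
  refine ⟨hstrict, htop, hbot, ?_⟩
  -- existence and uniqueness of the root
  obtain ⟨A, hA⟩ := (hbot.eventually_gt_atTop 1).exists
  obtain ⟨B, hB⟩ := (htop.eventually_lt_const one_pos).exists
  have hAB : A < B := hstrict.lt_iff_gt.mp (hB.trans hA)
  obtain ⟨lam0, _, hlam0⟩ :=
    intermediate_value_Icc' hAB.le hHcont.continuousOn ⟨hB.le, hA.le⟩
  refine ⟨lam0, hlam0, fun lam hl => hstrict.injective (hl.trans hlam0.symm), ?_⟩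
  constructor
  · intro hneg
    have := hstrict hneg
    rwa [hlam0] at this
  · intro hlt
    rw [← hlam0] at hlt
    exact hstrict.lt_iff_gt.mp hlt

set_option maxHeartbeats 800000 in
/-- The reduced characteristic function `H` (arising when `β2` is constant) is
strictly decreasing, tends to `0` at `+∞` and to `+∞` at `−∞`, the equation
`H(λ) = 1` has a unique real solution `λ0`, and `λ0 < 0` iff `H(0) < 1`. -/
theorem reduced_characteristic_equation (m : ℝ) (hm : 0 < m)
    (γ γ' μ h : ℝ → ℝ)
    (hγd : ∀ s ∈ Icc (0:ℝ) m, HasDerivWithinAt γ (γ' s) (Icc 0 m) s)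
    (hγ'c : ContinuousOn γ' (Icc 0 m))
    (hγpos : ∀ s ∈ Icc (0:ℝ) m, 0 < γ s)
    (hμc : ContinuousOn μ (Icc 0 m)) (hμnn : ∀ s ∈ Icc (0:ℝ) m, 0 ≤ μ s)
    (hhc : ContinuousOn h (Icc 0 m)) (hhnn : ∀ s ∈ Icc (0:ℝ) m, 0 ≤ h s)
    (hhpos : ∃ y0 ∈ Ico (0:ℝ) m, 0 < h y0)
    (H : ℝ → ℝ)
    (hH : ∀ lam, H lam = ∫ s in (0:ℝ)..m, ∫ y in (0:ℝ)..s,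
      Real.exp (-∫ r in y..s, (lam + γ' r + μ r) / γ r) * (h y / γ y)) :
    StrictAnti H ∧
    Tendsto H atTop (nhds 0) ∧
    Tendsto H atBot atTop ∧
    ∃ lam0 : ℝ, H lam0 = 1 ∧ (∀ lam, H lam = 1 → lam = lam0) ∧
      (lam0 < 0 ↔ H 0 < 1) := by
  obtain ⟨y0, hy0, hy0pos⟩ := hhpos
  have hγc : ContinuousOn γ (Icc 0 m) := fun s hs => (hγd s hs).continuousWithinAt
  -- extend all data functions continuously to ℝ
  set gE : ℝ → ℝ := IccExtend hm.le ((Icc (0:ℝ) m).restrict γ) with hgEdef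
  set gE' : ℝ → ℝ := IccExtend hm.le ((Icc (0:ℝ) m).restrict γ') with hgE'def
  set muE : ℝ → ℝ := IccExtend hm.le ((Icc (0:ℝ) m).restrict μ) with hmuEdef
  set hE : ℝ → ℝ := IccExtend hm.le ((Icc (0:ℝ) m).restrict h) with hhEdef
  have hgEc : Continuous gE := (continuousOn_iff_continuous_restrict.mp hγc).Icc_extend'
  have hgE'c : Continuous gE' := (continuousOn_iff_continuous_restrict.mp hγ'c).Icc_extend'
  have hmuEc : Continuous muE := (continuousOn_iff_continuous_restrict.mp hμc).Icc_extend'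
  have hhEc : Continuous hE := (continuousOn_iff_continuous_restrict.mp hhc).Icc_extend'
  have hgEeq : ∀ x ∈ Icc (0:ℝ) m, gE x = γ x := fun x hx => by
    rw [hgEdef, IccExtend_of_mem hm.le _ hx]; rfl
  have hgE'eq : ∀ x ∈ Icc (0:ℝ) m, gE' x = γ' x := fun x hx => by
    rw [hgE'def, IccExtend_of_mem hm.le _ hx]; rfl
  have hmuEeq : ∀ x ∈ Icc (0:ℝ) m, muE x = μ x := fun x hx => by
    rw [hmuEdef, IccExtend_of_mem hm.le _ hx]; rfl
  have hhEeq : ∀ x ∈ Icc (0:ℝ) m, hE x = h x := fun x hx => by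
    rw [hhEdef, IccExtend_of_mem hm.le _ hx]; rfl
  have hgEpos : ∀ x, 0 < gE x := fun x => hγpos _ (projIcc (0:ℝ) m hm.le x).2
  -- primitives
  have hinv_cont : Continuous fun r => 1 / gE r :=
    continuous_const.div hgEc fun x => (hgEpos x).ne'
  have hquot_cont : Continuous fun r => (gE' r + muE r) / gE r :=
    (hgE'c.add hmuEc).div hgEc fun x => (hgEpos x).ne'
  set P : ℝ → ℝ := fun t => ∫ r in (0:ℝ)..t, 1 / gE r with hPdef
  set Q : ℝ → ℝ := fun t => ∫ r in (0:ℝ)..t, (gE' r + muE r) / gE r with hQdef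
  set c : ℝ → ℝ := fun y => hE y / gE y with hcdef
  have hPc : Continuous P :=
    intervalIntegral.continuous_primitive (fun a b => hinv_cont.intervalIntegrable a b) 0
  have hQc : Continuous Q :=
    intervalIntegral.continuous_primitive (fun a b => hquot_cont.intervalIntegrable a b) 0
  have hcc : Continuous c := hhEc.div hgEc fun x => (hgEpos x).ne'
  have hPsub : ∀ x y : ℝ, P y - P x = ∫ r in x..y, 1 / gE r := fun x y =>
    integral_interval_sub_left (hinv_cont.intervalIntegrable 0 y)
      (hinv_cont.intervalIntegrable 0 x)
  have hQsub : ∀ x y : ℝ, Q y - Q x = ∫ r in x..y, (gE' r + muE r) / gE r := fun x y =>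
    integral_interval_sub_left (hquot_cont.intervalIntegrable 0 y)
      (hquot_cont.intervalIntegrable 0 x)
  have hPmono : StrictMonoOn P (Icc 0 m) := by
    intro x _ y _ hxy
    have hpos : 0 < ∫ r in x..y, 1 / gE r :=
      intervalIntegral_pos_of_pos (hinv_cont.intervalIntegrable x y)
        (fun r => one_div_pos.mpr (hgEpos r)) hxy
    have := hPsub x y
    linarith
  have hcnn : ∀ y ∈ Icc (0:ℝ) m, 0 ≤ c y := by
    intro y hy
    rw [hcdef]; dsimp only
    rw [hhEeq y hy]
    exact div_nonneg (hhnn y hy) (hgEpos y).le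
  have hy0m : y0 ∈ Icc (0:ℝ) m := ⟨hy0.1, hy0.2.le⟩
  have hc0 : 0 < c y0 := by
    rw [hcdef]; dsimp only
    rw [hhEeq y0 hy0m]
    exact div_pos hy0pos (hgEpos y0)
  -- identification of the integrand
  have key : ∀ lam, H lam = ∫ s in (0:ℝ)..m, ∫ y in (0:ℝ)..s,
      Real.exp (-(lam * (P s - P y) + (Q s - Q y))) * c y := by
    intro lam
    rw [hH lam]
    apply intervalIntegral.integral_congr
    intro s hs
    rw [uIcc_of_le hm.le] at hs
    apply intervalIntegral.integral_congr
    intro y hy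
    rw [uIcc_of_le hs.1] at hy
    have hym : y ∈ Icc (0:ℝ) m := ⟨hy.1, hy.2.trans hs.2⟩
    have hsub : uIcc y s ⊆ Icc 0 m := uIcc_subset_Icc hym hs
    have hint_eq : (∫ r in y..s, (lam + γ' r + μ r) / γ r)
        = lam * (P s - P y) + (Q s - Q y) := by
      have step1 : (∫ r in y..s, (lam + γ' r + μ r) / γ r)
          = ∫ r in y..s, (lam * (1 / gE r) + (gE' r + muE r) / gE r) := by
        apply intervalIntegral.integral_congr
        intro r hr
        dsimp only
        have hrm : r ∈ Icc (0:ℝ) m := hsub hr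
        rw [hgEeq r hrm, hgE'eq r hrm, hmuEeq r hrm, mul_one_div, ← add_div,
          ← add_assoc]
      rw [step1, intervalIntegral.integral_add (f := fun r => lam * (1 / gE r))
          ((continuous_const.mul hinv_cont).intervalIntegrable y s)
          (hquot_cont.intervalIntegrable y s),
        intervalIntegral.integral_const_mul, ← hPsub y s, ← hQsub y s]
    dsimp only
    rw [hint_eq]
    congr 1
    rw [hcdef]; dsimp only
    rw [hhEeq y hym, hgEeq y hym]
  exact my_aux_main m hm P Q c hPc hQc hcc hPmono hcnn y0 hy0 hc0 H key
end

section
/- Set Γ(s) = ∫_0^s 1/γ(y) dy. Suppose u : [0,m] × [0,∞) → ℝ is continuously differentiable, satisfies the linear transport equation ∂_t u(s,t) + γ(s) ∂_s u(s,t) + (γ'(s)+μ(s)) u(s,t) = 0 for all (s,t) ∈ [0,m] × (0,∞), and u(0,t) = 0 for all t ≥ 0. Then u(s,t) = 0 whenever t > Γ(s); in particular u(·,t) ≡ 0 for every t > Γ(m), i.e., the semigroup generated by the pure transport-mortality part is nilpotent. -/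
open Set MeasureTheory intervalIntegral Filter
open scoped Topology

/-- Continuous partial derivatives on a box `[0,m] × [0,∞)` give a full Fréchet
derivative (within the box) at interior-time points. -/
lemma hasFDerivWithinAt_of_partials {m : ℝ} (u us ut : ℝ → ℝ → ℝ)
    (husd : ∀ t ∈ Ici (0:ℝ), ∀ s ∈ Icc (0:ℝ) m,
      HasDerivWithinAt (fun σ => u σ t) (us s t) (Icc 0 m) s)
    (hutd : ∀ s ∈ Icc (0:ℝ) m, ∀ t ∈ Ici (0:ℝ),
      HasDerivWithinAt (fun τ => u s τ) (ut s t) (Ici 0) t)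
    (hutc : ContinuousOn (fun q : ℝ × ℝ => ut q.1 q.2) (Icc 0 m ×ˢ Ici 0))
    {p : ℝ × ℝ} (hp : p ∈ Icc (0:ℝ) m ×ˢ Ici (0:ℝ)) (hp2 : 0 < p.2) :
    HasFDerivWithinAt (fun q : ℝ × ℝ => u q.1 q.2)
      (us p.1 p.2 • (ContinuousLinearMap.fst ℝ ℝ ℝ)
        + ut p.1 p.2 • (ContinuousLinearMap.snd ℝ ℝ ℝ))
      (Icc 0 m ×ˢ Ici 0) p := by
  set K : Set (ℝ × ℝ) := Icc (0:ℝ) m ×ˢ Ici (0:ℝ) with hK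
  simp_rw [hasFDerivWithinAt_iff_isLittleO, Asymptotics.isLittleO_iff]
  intro ε hε
  have hε2 : 0 < ε / 2 := by linarith
  -- partial derivative in first variable at p
  have h1 : HasDerivWithinAt (fun σ => u σ p.2) (us p.1 p.2) (Icc 0 m) p.1 :=
    husd p.2 hp.2 p.1 hp.1
  have E1 : ∀ᶠ x in 𝓝[Icc (0:ℝ) m] p.1,
      ‖u x p.2 - u p.1 p.2 - (x - p.1) • us p.1 p.2‖ ≤ ε / 2 * ‖x - p.1‖ := by
    have := (hasDerivWithinAt_iff_isLittleO.mp h1)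
    exact (Asymptotics.isLittleO_iff.mp this) hε2
  have hfst : Tendsto (fun q : ℝ × ℝ => q.1) (𝓝[K] p) (𝓝[Icc (0:ℝ) m] p.1) := by
    apply tendsto_nhdsWithin_of_tendsto_nhds_of_eventually_within
    · exact (continuous_fst.tendsto p).mono_left nhdsWithin_le_nhds
    · exact eventually_mem_nhdsWithin.mono fun q hq => hq.1
  have E1' : ∀ᶠ q in 𝓝[K] p,
      ‖u q.1 p.2 - u p.1 p.2 - (q.1 - p.1) • us p.1 p.2‖ ≤ ε / 2 * ‖q.1 - p.1‖ :=
    hfst.eventually E1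
  -- continuity of ut at p
  obtain ⟨δ, hδpos, hδ⟩ := Metric.continuousWithinAt_iff.mp (hutc p hp) (ε / 2) hε2
  set δ' : ℝ := min δ p.2 with hδ'
  have hδ'pos : 0 < δ' := lt_min hδpos hp2
  have hball : ∀ᶠ q in 𝓝[K] p, dist q p < δ' := by
    have : Metric.ball p δ' ∈ 𝓝[K] p :=
      nhdsWithin_le_nhds (Metric.ball_mem_nhds p hδ'pos)
    exact this
  filter_upwards [E1', hball, eventually_mem_nhdsWithin] with q hq1 hqd hqK
  have hq2pos : 0 < q.2 := by
    have h2 : dist q.2 p.2 ≤ dist q p := by rw [Prod.dist_eq]; exact le_max_right _ _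
    have : |q.2 - p.2| < p.2 := by
      rw [← Real.dist_eq]; exact lt_of_le_of_lt h2 (lt_of_lt_of_le hqd (min_le_right _ _))
    have := abs_lt.mp this
    linarith [this.1]
  -- FTC in the second variable
  have hmin : (0:ℝ) < min p.2 q.2 := lt_min hp2 hq2pos
  have hint : ContinuousOn (fun r => ut q.1 r) (uIcc p.2 q.2) := by
    apply hutc.comp ((continuous_const.prodMk continuous_id).continuousOn)
    intro r hr
    exact ⟨hqK.1, le_trans (le_of_lt hmin) hr.1⟩
  have hderiv : ∀ r ∈ uIcc p.2 q.2, HasDerivAt (fun r => u q.1 r) (ut q.1 r) r := by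
    intro r hr
    have hrpos : 0 < r := lt_of_lt_of_le hmin hr.1
    exact (hutd q.1 hqK.1 r hrpos.le).hasDerivAt (Ici_mem_nhds hrpos)
  have hFTC : ∫ r in p.2..q.2, ut q.1 r = u q.1 q.2 - u q.1 p.2 :=
    intervalIntegral.integral_eq_sub_of_hasDerivAt hderiv
      (hint.intervalIntegrable)
  -- bound the integral error
  have hbound2 : ‖u q.1 q.2 - u q.1 p.2 - (q.2 - p.2) * ut p.1 p.2‖
      ≤ ε / 2 * ‖q.2 - p.2‖ := by
    have hconst : ∫ r in p.2..q.2, ut p.1 p.2 = (q.2 - p.2) * ut p.1 p.2 := by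
      simp [intervalIntegral.integral_const, smul_eq_mul]
    have hsub : u q.1 q.2 - u q.1 p.2 - (q.2 - p.2) * ut p.1 p.2
        = ∫ r in p.2..q.2, (ut q.1 r - ut p.1 p.2) := by
      rw [intervalIntegral.integral_sub hint.intervalIntegrable
        (intervalIntegrable_const), hFTC, hconst]
    rw [hsub]
    have := intervalIntegral.norm_integral_le_of_norm_le_const
      (C := ε / 2) (a := p.2) (b := q.2) (f := fun r => ut q.1 r - ut p.1 p.2) ?_
    · calc ‖∫ r in p.2..q.2, (ut q.1 r - ut p.1 p.2)‖ ≤ ε / 2 * |q.2 - p.2| := this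
        _ = ε / 2 * ‖q.2 - p.2‖ := by rw [Real.norm_eq_abs]
    · intro r hr
      have hr' : r ∈ uIcc p.2 q.2 := Ioc_subset_Icc_self hr
      have hrpos : 0 < r := lt_of_lt_of_le hmin hr'.1
      have hrK : ((q.1, r) : ℝ × ℝ) ∈ K := ⟨hqK.1, hrpos.le⟩
      have hrd : dist r p.2 ≤ dist q.2 p.2 := by
        rw [Real.dist_eq, Real.dist_eq]
        rcases le_total p.2 q.2 with h | h
        · rw [uIcc_of_le h] at hr'
          rw [abs_of_nonneg (by linarith [hr'.1]), abs_of_nonneg (by linarith)]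
          linarith [hr'.2]
        · rw [uIcc_of_ge h] at hr'
          rw [abs_of_nonpos (by linarith [hr'.2]), abs_of_nonpos (by linarith)]
          linarith [hr'.1]
      have hdist : dist ((q.1, r) : ℝ × ℝ) p < δ := by
        have hfst' : dist q.1 p.1 ≤ dist q p := by rw [Prod.dist_eq]; exact le_max_left _ _
        have hsnd' : dist q.2 p.2 ≤ dist q p := by rw [Prod.dist_eq]; exact le_max_right _ _
        have hqdδ : dist q p < δ := lt_of_lt_of_le hqd (min_le_left _ _)
        rw [Prod.dist_eq]
        exact max_lt (lt_of_le_of_lt hfst' hqdδ)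
          (lt_of_le_of_lt (le_trans hrd hsnd') hqdδ)
      have := hδ hrK hdist
      rw [Real.dist_eq] at this
      exact le_of_lt this
  -- assemble
  have hL : (us p.1 p.2 • ContinuousLinearMap.fst ℝ ℝ ℝ
      + ut p.1 p.2 • ContinuousLinearMap.snd ℝ ℝ ℝ) (q - p)
      = us p.1 p.2 * (q.1 - p.1) + ut p.1 p.2 * (q.2 - p.2) := by
    simp [smul_eq_mul]
  have key : u q.1 q.2 - u p.1 p.2
      - (us p.1 p.2 * (q.1 - p.1) + ut p.1 p.2 * (q.2 - p.2))
      = (u q.1 q.2 - u q.1 p.2 - (q.2 - p.2) * ut p.1 p.2)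
        + (u q.1 p.2 - u p.1 p.2 - (q.1 - p.1) • us p.1 p.2) := by
    rw [smul_eq_mul]; ring
  rw [hL, key]
  have n1 : ‖q.1 - p.1‖ ≤ ‖q - p‖ := by
    have := norm_fst_le (q - p); simpa using this
  have n2 : ‖q.2 - p.2‖ ≤ ‖q - p‖ := by
    have := norm_snd_le (q - p); simpa using this
  calc ‖(u q.1 q.2 - u q.1 p.2 - (q.2 - p.2) * ut p.1 p.2)
        + (u q.1 p.2 - u p.1 p.2 - (q.1 - p.1) • us p.1 p.2)‖
      ≤ ‖u q.1 q.2 - u q.1 p.2 - (q.2 - p.2) * ut p.1 p.2‖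
        + ‖u q.1 p.2 - u p.1 p.2 - (q.1 - p.1) • us p.1 p.2‖ := norm_add_le _ _
    _ ≤ ε / 2 * ‖q.2 - p.2‖ + ε / 2 * ‖q.1 - p.1‖ := add_le_add hbound2 hq1
    _ ≤ ε / 2 * ‖q - p‖ + ε / 2 * ‖q - p‖ := by
        gcongr
    _ = ε * ‖q - p‖ := by ring

/-- Nilpotency of the semigroup generated by the pure transport-mortality part:
any continuously differentiable solution of the linear transport equation with
zero boundary condition at `s = 0` vanishes for `t > Γ(s)`, where
`Γ(s) = ∫_0^s 1/γ(y) dy`; in particular `u(·,t) ≡ 0` for every `t > Γ(m)`. -/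
theorem transport_semigroup_nilpotent (m : ℝ) (hm : 0 < m)
    (γ γ' μ : ℝ → ℝ)
    (hγd : ∀ s ∈ Icc (0:ℝ) m, HasDerivWithinAt γ (γ' s) (Icc 0 m) s)
    (hγ'c : ContinuousOn γ' (Icc 0 m))
    (hγpos : ∀ s ∈ Icc (0:ℝ) m, 0 < γ s)
    (hμc : ContinuousOn μ (Icc 0 m))
    (u us ut : ℝ → ℝ → ℝ)
    (huc : ContinuousOn (fun q : ℝ × ℝ => u q.1 q.2) (Icc 0 m ×ˢ Ici 0))
    (husd : ∀ t ∈ Ici (0:ℝ), ∀ s ∈ Icc (0:ℝ) m,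
      HasDerivWithinAt (fun σ => u σ t) (us s t) (Icc 0 m) s)
    (hutd : ∀ s ∈ Icc (0:ℝ) m, ∀ t ∈ Ici (0:ℝ),
      HasDerivWithinAt (fun τ => u s τ) (ut s t) (Ici 0) t)
    (husc : ContinuousOn (fun q : ℝ × ℝ => us q.1 q.2) (Icc 0 m ×ˢ Ici 0))
    (hutc : ContinuousOn (fun q : ℝ × ℝ => ut q.1 q.2) (Icc 0 m ×ˢ Ici 0))
    (hpde : ∀ s ∈ Icc (0:ℝ) m, ∀ t ∈ Ioi (0:ℝ),
      ut s t + γ s * us s t + (γ' s + μ s) * u s t = 0)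
    (hbc : ∀ t ∈ Ici (0:ℝ), u 0 t = 0) :
    (∀ s ∈ Icc (0:ℝ) m, ∀ t : ℝ, (∫ y in (0:ℝ)..s, 1 / γ y) < t → u s t = 0) ∧
    (∀ t : ℝ, (∫ y in (0:ℝ)..m, 1 / γ y) < t → ∀ s ∈ Icc (0:ℝ) m, u s t = 0) := by
  have hγcont : ContinuousOn γ (Icc 0 m) := fun x hx => (hγd x hx).continuousWithinAt
  have hγne : ∀ x ∈ Icc (0:ℝ) m, γ x ≠ 0 := fun x hx => (hγpos x hx).ne'
  -- clamped integrand
  set cl : ℝ → ℝ := fun y => max 0 (min y m) with hcl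
  have hclmem : ∀ y, cl y ∈ Icc (0:ℝ) m :=
    fun y => ⟨le_max_left _ _, max_le hm.le (min_le_right _ _)⟩
  have hclid : ∀ y ∈ Icc (0:ℝ) m, cl y = y := by
    intro y hy
    simp only [hcl]
    rw [min_eq_left hy.2, max_eq_right hy.1]
  set g : ℝ → ℝ := fun y => 1 / γ (cl y) with hg
  have hgc : Continuous g := by
    have h1 : ContinuousOn (fun x => 1 / γ x) (Icc 0 m) :=
      continuousOn_const.div hγcont hγne
    have h2 : Continuous cl := continuous_const.max (continuous_id.min continuous_const)
    exact h1.comp_continuous h2 hclmem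
  have hgpos : ∀ y, 0 < g y := fun y => by
    simp only [hg]
    exact div_pos one_pos (hγpos _ (hclmem y))
  set Γ : ℝ → ℝ := fun x => ∫ y in (0:ℝ)..x, g y with hΓ
  have hΓd : ∀ x, HasDerivAt Γ (g x) x :=
    fun x => (hgc.integral_hasStrictDerivAt 0 x).hasDerivAt
  have hΓc : Continuous Γ := by
    rw [continuous_iff_continuousAt]; exact fun x => (hΓd x).continuousAt
  have hΓeq : ∀ x ∈ Icc (0:ℝ) m, Γ x = ∫ y in (0:ℝ)..x, 1 / γ y := by
    intro x hx
    apply intervalIntegral.integral_congr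
    intro y hy
    rw [uIcc_of_le hx.1] at hy
    simp only [hg]
    rw [hclid y ⟨hy.1, le_trans hy.2 hx.2⟩]
  have hΓmono : ∀ a b : ℝ, a ≤ b → Γ a ≤ Γ b := by
    intro a b hab
    have hadd : Γ a + ∫ y in a..b, g y = Γ b :=
      intervalIntegral.integral_add_adjacent_intervals
        (hgc.intervalIntegrable _ _) (hgc.intervalIntegrable _ _)
    have hnn : 0 ≤ ∫ y in a..b, g y :=
      intervalIntegral.integral_nonneg hab (fun y _ => (hgpos y).le)
    linarith
  have hΓ0 : Γ 0 = 0 := intervalIntegral.integral_same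
  -- the key claim, in terms of Γ
  have key : ∀ s ∈ Icc (0:ℝ) m, ∀ t : ℝ, Γ s < t → u s t = 0 := by
    intro s hs t ht
    set τ : ℝ → ℝ := fun σ => t - Γ s + Γ σ with hτdef
    have hτpos : ∀ σ ∈ Icc (0:ℝ) s, 0 < τ σ := by
      intro σ hσ
      have h0 : Γ 0 ≤ Γ σ := hΓmono 0 σ hσ.1
      simp only [hτdef]
      rw [hΓ0] at h0
      linarith
    have hτle : ∀ σ ∈ Icc (0:ℝ) s, τ σ ≤ t := by
      intro σ hσ
      have := hΓmono σ s hσ.2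
      simp only [hτdef]; linarith
    have hsub : Icc (0:ℝ) s ⊆ Icc (0:ℝ) m := Icc_subset_Icc le_rfl hs.2
    set w : ℝ → ℝ := fun σ => u σ (τ σ) with hw
    have hτd : ∀ σ, HasDerivAt τ (g σ) σ := fun σ => (hΓd σ).const_add (t - Γ s)
    set f' : ℝ → ℝ := fun σ => us σ (τ σ) + ut σ (τ σ) * g σ with hf'
    -- derivative of w
    have hwd : ∀ σ ∈ Icc (0:ℝ) s, HasDerivWithinAt w (f' σ) (Icc 0 s) σ := by
      intro σ hσ
      have hpmem : ((σ, τ σ) : ℝ × ℝ) ∈ Icc (0:ℝ) m ×ˢ Ici (0:ℝ) :=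
        ⟨hsub hσ, (hτpos σ hσ).le⟩
      have hF := hasFDerivWithinAt_of_partials u us ut husd hutd hutc hpmem (hτpos σ hσ)
      have hφ : HasDerivWithinAt (fun σ => ((σ, τ σ) : ℝ × ℝ)) ((1 : ℝ), g σ)
          (Icc 0 s) σ :=
        ((hasDerivAt_id σ).prodMk (hτd σ)).hasDerivWithinAt
      have hmaps : MapsTo (fun σ => ((σ, τ σ) : ℝ × ℝ)) (Icc 0 s)
          (Icc (0:ℝ) m ×ˢ Ici (0:ℝ)) :=
        fun x hx => ⟨hsub hx, (hτpos x hx).le⟩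
      have := hF.comp_hasDerivWithinAt σ hφ hmaps
      refine this.congr_deriv ?_
      simp [hf', smul_eq_mul]
    -- the ODE form of the derivative
    have hode : ∀ σ ∈ Icc (0:ℝ) s, f' σ = -((γ' σ + μ σ) / γ σ) * w σ := by
      intro σ hσ
      have hσm : σ ∈ Icc (0:ℝ) m := hsub hσ
      have hγσ := hγne σ hσm
      have hp := hpde σ hσm (τ σ) (hτpos σ hσ)
      have hgσ : g σ = 1 / γ σ := by simp only [hg]; rw [hclid σ hσm]
      simp only [hf', hw, hgσ]
      field_simp
      linarith
    -- a uniform bound for the coefficient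
    obtain ⟨C, hC⟩ := (isCompact_Icc (a := (0:ℝ)) (b := m)).exists_bound_of_continuousOn
      ((hγ'c.add hμc).div hγcont hγne)
    -- continuity of w
    have hwc : ContinuousOn w (Icc 0 s) := by
      have hτc : Continuous τ := continuous_const.add hΓc
      have hφc : Continuous (fun σ => ((σ, τ σ) : ℝ × ℝ)) :=
        continuous_id.prodMk hτc
      exact huc.comp hφc.continuousOn
        (fun x hx => ⟨hsub hx, (hτpos x hx).le⟩)
    -- Grönwall
    have hg0 : ∀ x ∈ Icc (0:ℝ) s, ‖w x‖ ≤ gronwallBound 0 C 0 (x - 0) := by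
      apply norm_le_gronwallBound_of_norm_deriv_right_le hwc
      · intro x hx
        have hxI : x ∈ Icc (0:ℝ) s := ⟨hx.1, hx.2.le⟩
        have h1 : HasDerivWithinAt w (f' x) (Icc x s) x :=
          (hwd x hxI).mono (Icc_subset_Icc hx.1 le_rfl)
        have h2 : Icc x s = Ici x ∩ Iic s := (Ici_inter_Iic).symm
        rw [h2] at h1
        exact (hasDerivWithinAt_inter (Iic_mem_nhds hx.2)).mp h1
      · have : w 0 = u 0 (t - Γ s) := by simp [hw, hτdef, hΓ0]
        rw [this, hbc (t - Γ s) (by simp; linarith)]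
        simp
      · intro x hx
        have hxI : x ∈ Icc (0:ℝ) s := ⟨hx.1, hx.2.le⟩
        rw [hode x hxI]
        have h1 : ‖(γ' x + μ x) / γ x‖ ≤ C := hC x (hsub hxI)
        calc ‖-((γ' x + μ x) / γ x) * w x‖ = ‖(γ' x + μ x) / γ x‖ * ‖w x‖ := by
              rw [norm_mul, norm_neg]
          _ ≤ C * ‖w x‖ + 0 := by
              nlinarith [norm_nonneg (w x)]
    have hws : ‖w s‖ ≤ 0 := by
      have h := hg0 s ⟨hs.1, le_rfl⟩
      rwa [gronwallBound_ε0, zero_mul] at h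
    have hws0 : w s = 0 := norm_le_zero_iff.mp hws
    have hτs : τ s = t := by simp [hτdef]
    rw [hw] at hws0
    simp only at hws0
    rw [hτs] at hws0
    exact hws0
  -- conclude
  constructor
  · intro s hs t ht
    exact key s hs t (by rw [hΓeq s hs]; exact ht)
  · intro t ht s hs
    apply key s hs t
    have h1 : Γ s ≤ Γ m := hΓmono s m hs.2
    have h2 : Γ m = ∫ y in (0:ℝ)..m, 1 / γ y := hΓeq m ⟨hm.le, le_rfl⟩
    linarith
end

section
/- Let k : [0,m] × [0,m] → ℝ be continuous with k ≥ 0, and set ω = max_{y ∈ [0,m]} ∫_0^m k(s,y) ds. Then for every continuously differentiable u : [0,m] → ℝ with u(0) = 0, one has ∫_0^m 1_{{u(s) > 0}} · ( −(γu)'(s) − μ(s)u(s) + ∫_0^m k(s,y)u(y) dy − ω u(s) ) ds ≤ 0; i.e., the operator u ↦ −(γu)' − μu + ∫_0^m k(·,y)u(y) dy − ωu, with boundary condition u(0)=0, is dispersive on L^1(0,m). -/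
open Set MeasureTheory intervalIntegral Filter Topology

section Aux

lemma phi_cont (n : ℕ) : Continuous (fun t : ℝ => max 0 (min (t * (n+1)) 1)) := by
  exact continuous_const.max ((continuous_id.mul continuous_const).min continuous_const)

lemma phi_nonneg (n : ℕ) (t : ℝ) : 0 ≤ max 0 (min (t * (n+1)) 1) := le_max_left _ _

lemma phi_le_one (n : ℕ) (t : ℝ) : max 0 (min (t * (n+1)) 1) ≤ 1 :=
  max_le zero_le_one (min_le_right _ _)

lemma lemA (m : ℝ) (hm : 0 ≤ m) (v v' : ℝ → ℝ)
    (hvc : ContinuousOn v (Icc 0 m)) (hv'c : ContinuousOn v' (Icc 0 m))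
    (hvd : ∀ s ∈ Icc (0:ℝ) m, HasDerivWithinAt v (v' s) (Icc 0 m) s)
    (hv0 : v 0 = 0) :
    0 ≤ ∫ s in Ioc (0:ℝ) m, (if 0 < v s then v' s else 0) := by
  set φ : ℕ → ℝ → ℝ := fun n t => max 0 (min (t * (n+1)) 1) with hφ
  set Φ : ℕ → ℝ → ℝ := fun n t => ∫ x in (0:ℝ)..t, φ n x with hΦ
  have hΦd : ∀ n t, HasDerivAt (Φ n) (φ n t) t := fun n t =>
    ((phi_cont n).integral_hasStrictDerivAt 0 t).hasDerivAt
  set F : ℕ → ℝ → ℝ := fun n s => φ n (v s) * v' s with hF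
  -- each integral ∫ F n ≥ 0
  have hFint : ∀ n, IntervalIntegrable (F n) volume 0 m := by
    intro n
    apply ContinuousOn.intervalIntegrable
    rw [uIcc_of_le hm]
    exact ((phi_cont n).comp_continuousOn hvc).mul hv'c
  have hkey : ∀ n, ∫ s in (0:ℝ)..m, F n s = Φ n (v m) - Φ n (v 0) := by
    intro n
    apply integral_eq_sub_of_hasDeriv_right_of_le hm
    · have hc : Continuous (Φ n) := continuous_iff_continuousAt.2 fun t => (hΦd n t).continuousAt
      exact (hc.comp_continuousOn hvc : ContinuousOn (Φ n ∘ v) _)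
    · intro x hx
      have h1 : HasDerivAt v (v' x) x :=
        (hvd x (Ioo_subset_Icc_self hx)).hasDerivAt (Icc_mem_nhds hx.1 hx.2)
      exact (((hΦd n (v x)).comp x h1)).hasDerivWithinAt
    · exact hFint n
  have hΦ0 : ∀ n, Φ n (v 0) = 0 := by
    intro n; rw [hv0]; exact intervalIntegral.integral_same
  have hΦnn : ∀ n t, 0 ≤ Φ n t := by
    intro n t
    rcases le_or_gt 0 t with h | h
    · exact intervalIntegral.integral_nonneg h (fun x _ => phi_nonneg n x)
    · have h0 : ∫ x in t..(0:ℝ), φ n x = 0 := by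
        have heq : EqOn (φ n) 0 (uIcc t 0) := by
          intro x hx
          rw [uIcc_of_le h.le] at hx
          have hx0 : x ≤ 0 := hx.2
          have hle : min (x * (n+1)) 1 ≤ 0 := le_trans (min_le_left _ _)
            (mul_nonpos_of_nonpos_of_nonneg hx0 (by positivity))
          simp only [hφ, Pi.zero_apply]
          exact max_eq_left hle
        rw [intervalIntegral.integral_congr heq]
        simp
      have h1 : Φ n t = -∫ x in t..(0:ℝ), φ n x := intervalIntegral.integral_symm t 0
      rw [h1, h0, neg_zero]
  have hnn : ∀ n, 0 ≤ ∫ s in Ioc (0:ℝ) m, F n s := by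
    intro n
    have := hkey n
    rw [intervalIntegral.integral_of_le hm] at this
    rw [this, hΦ0 n, sub_zero]
    exact hΦnn n (v m)
  -- dominated convergence
  have hvm : AEStronglyMeasurable v (volume.restrict (Ioc 0 m)) :=
    (hvc.mono Ioc_subset_Icc_self).aestronglyMeasurable measurableSet_Ioc
  have hv'm : AEStronglyMeasurable v' (volume.restrict (Ioc 0 m)) :=
    (hv'c.mono Ioc_subset_Icc_self).aestronglyMeasurable measurableSet_Ioc
  have hbound : Integrable (fun s => |v' s|) (volume.restrict (Ioc 0 m)) :=
    ((hv'c.integrableOn_Icc).mono_set Ioc_subset_Icc_self).abs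
  have htend : Tendsto (fun n => ∫ s in Ioc (0:ℝ) m, F n s) atTop
      (𝓝 (∫ s in Ioc (0:ℝ) m, (if 0 < v s then v' s else 0))) := by
    apply tendsto_integral_of_dominated_convergence (fun s => |v' s|)
    · intro n
      exact ((phi_cont n).comp_aestronglyMeasurable hvm).mul hv'm
    · exact hbound
    · intro n
      filter_upwards with s
      rw [hF]
      simp only [Real.norm_eq_abs, abs_mul]
      calc |φ n (v s)| * |v' s| ≤ 1 * |v' s| := by
            apply mul_le_mul_of_nonneg_right _ (abs_nonneg _)
            rw [abs_of_nonneg (phi_nonneg n _)]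
            exact phi_le_one n _
        _ = |v' s| := one_mul _
    · filter_upwards with s
      by_cases h : 0 < v s
      · simp only [h, if_pos]
        have : ∀ᶠ n in atTop, F n s = v' s := by
          have hev : ∀ᶠ n : ℕ in atTop, (1:ℝ) ≤ v s * (n+1) := by
            filter_upwards [eventually_ge_atTop (⌈1 / v s⌉₊)] with n hn
            have h1 : 1 / v s ≤ (n:ℝ) := le_trans (Nat.le_ceil _) (by exact_mod_cast hn)
            calc (1:ℝ) = (1 / v s) * v s := by field_simp
              _ ≤ (n:ℝ) * v s := mul_le_mul_of_nonneg_right h1 h.le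
              _ ≤ v s * (n+1) := by nlinarith
          filter_upwards [hev] with n hn
          simp only [hF, hφ]
          rw [min_eq_right hn, max_eq_right zero_le_one, one_mul]
        exact Tendsto.congr' (this.mono fun n hn => hn.symm) tendsto_const_nhds
      · simp only [h, if_neg]
        have : ∀ n, F n s = 0 := by
          intro n
          simp only [hF, hφ]
          have hv0' : v s ≤ 0 := not_lt.1 h
          have : min (v s * (n+1)) 1 ≤ 0 := le_trans (min_le_left _ _)
            (mul_nonpos_of_nonpos_of_nonneg hv0' (by positivity))
          rw [max_eq_left this, zero_mul]
        simp only [this]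
        exact tendsto_const_nhds
  exact ge_of_tendsto htend (Eventually.of_forall hnn)

end Aux

/-- Dispersivity estimate: with `ω` the maximum over `y ∈ [0,m]` of
`∫_0^m k(s,y) ds`, the shifted linearised operator
`u ↦ −(γu)' − μu + ∫_0^m k(·,y)u(y) dy − ωu` with boundary condition `u(0) = 0`
is dispersive on `L¹(0,m)`. -/
theorem dispersivity_estimate (m : ℝ) (hm : 0 < m)
    (γ γ' μ : ℝ → ℝ)
    (hγd : ∀ s ∈ Icc (0:ℝ) m, HasDerivWithinAt γ (γ' s) (Icc 0 m) s)
    (hγ'c : ContinuousOn γ' (Icc 0 m))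
    (hγpos : ∀ s ∈ Icc (0:ℝ) m, 0 < γ s)
    (hμc : ContinuousOn μ (Icc 0 m)) (hμnn : ∀ s ∈ Icc (0:ℝ) m, 0 ≤ μ s)
    (k : ℝ → ℝ → ℝ)
    (hkc : ContinuousOn (fun q : ℝ × ℝ => k q.1 q.2) (Icc 0 m ×ˢ Icc 0 m))
    (hknn : ∀ s ∈ Icc (0:ℝ) m, ∀ y ∈ Icc (0:ℝ) m, 0 ≤ k s y)
    (ω : ℝ)
    (hω : IsGreatest ((fun y => ∫ s in (0:ℝ)..m, k s y) '' Icc (0:ℝ) m) ω)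
    (u u' : ℝ → ℝ)
    (hu'c : ContinuousOn u' (Icc 0 m))
    (hud : ∀ s ∈ Icc (0:ℝ) m, HasDerivWithinAt u (u' s) (Icc 0 m) s)
    (hu0 : u 0 = 0) :
    (∫ s in (0:ℝ)..m, Set.indicator {x : ℝ | 0 < u x}
      (fun s => -(γ' s * u s + γ s * u' s) - μ s * u s
        + (∫ y in (0:ℝ)..m, k s y * u y) - ω * u s) s) ≤ 0 := by
  -- basic continuity facts
  have hIoc : Ioc (0:ℝ) m ⊆ Icc 0 m := Ioc_subset_Icc_self
  have huc : ContinuousOn u (Icc 0 m) := fun s hs => (hud s hs).continuousWithinAt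
  have hγc : ContinuousOn γ (Icc 0 m) := fun s hs => (hγd s hs).continuousWithinAt
  set μv := volume.restrict (Ioc (0:ℝ) m) with hμv
  haveI : IsFiniteMeasure μv := by
    constructor
    rw [hμv, Measure.restrict_apply_univ]
    simp [Real.volume_Ioc]
  -- v = γ * u and its derivative
  set v : ℝ → ℝ := fun s => γ s * u s with hv
  set v' : ℝ → ℝ := fun s => γ' s * u s + γ s * u' s with hv'
  have hvd : ∀ s ∈ Icc (0:ℝ) m, HasDerivWithinAt v (v' s) (Icc 0 m) s := fun s hs =>
    (hγd s hs).mul (hud s hs)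
  have hvc : ContinuousOn v (Icc 0 m) := hγc.mul huc
  have hv'c : ContinuousOn v' (Icc 0 m) := (hγ'c.mul huc).add (hγc.mul hu'c)
  -- positive part
  set up : ℝ → ℝ := fun s => max (u s) 0 with hup
  have hupc : ContinuousOn up (Icc 0 m) := fun s hs => (huc s hs).max continuousWithinAt_const
  have hupnn : ∀ s, 0 ≤ up s := fun s => le_max_right _ _
  have hule : ∀ s, u s ≤ up s := fun s => le_max_left _ _
  -- measurability on μv
  have measOn : ∀ {f : ℝ → ℝ}, ContinuousOn f (Icc 0 m) → AEStronglyMeasurable f μv :=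
    fun {f} hf => (hf.mono hIoc).aestronglyMeasurable measurableSet_Ioc
  -- integrability of continuous-on-Icc functions
  have intOn : ∀ {f : ℝ → ℝ}, ContinuousOn f (Icc 0 m) → Integrable f μv :=
    fun {f} hf => (hf.integrableOn_Icc).mono_set hIoc
  -- kernel integrability on the product
  have hprodeq : μv.prod μv = (volume.prod volume).restrict (Ioc (0:ℝ) m ×ˢ Ioc (0:ℝ) m) :=
    Measure.prod_restrict _ _
  have hIocIcc : (Ioc (0:ℝ) m ×ˢ Ioc (0:ℝ) m) ⊆ (Icc (0:ℝ) m ×ˢ Icc (0:ℝ) m) :=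
    prod_mono hIoc hIoc
  have prodInt : ∀ {g : ℝ → ℝ}, ContinuousOn g (Icc 0 m) →
      Integrable (fun q : ℝ × ℝ => k q.1 q.2 * g q.2) (μv.prod μv) := by
    intro g hg
    have hc : ContinuousOn (fun q : ℝ × ℝ => k q.1 q.2 * g q.2) (Icc 0 m ×ˢ Icc 0 m) := by
      apply hkc.mul
      exact hg.comp continuous_snd.continuousOn (fun q hq => hq.2)
    obtain ⟨C, hC⟩ := (isCompact_Icc.prod isCompact_Icc).exists_bound_of_continuousOn hc
    rw [hprodeq]
    have hmeas : AEStronglyMeasurable (fun q : ℝ × ℝ => k q.1 q.2 * g q.2)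
        ((volume.prod volume).restrict (Ioc (0:ℝ) m ×ˢ Ioc (0:ℝ) m)) :=
      (hc.mono hIocIcc).aestronglyMeasurable (measurableSet_Ioc.prod measurableSet_Ioc)
    haveI : IsFiniteMeasure ((volume.prod volume).restrict (Ioc (0:ℝ) m ×ˢ Ioc (0:ℝ) m)) := by
      rw [← hprodeq]; infer_instance
    apply Integrable.mono' (integrable_const C) hmeas
    filter_upwards [ae_restrict_mem (measurableSet_Ioc.prod measurableSet_Ioc)] with q hq
    exact hC q (hIocIcc hq)
  have hKint := prodInt huc
  have hKpint := prodInt hupc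
  -- integrability of the parametric integrals
  have hHint : Integrable (fun s => ∫ y in Ioc (0:ℝ) m, k s y * u y) μv := by
    have := hKint.integral_prod_left
    simpa using this
  have hHpint : Integrable (fun s => ∫ y in Ioc (0:ℝ) m, k s y * up y) μv := by
    have := hKpint.integral_prod_left
    simpa using this
  -- ω ≥ 0
  obtain ⟨y0, hy0, hy0e⟩ := hω.1
  have hωnn : 0 ≤ ω := by
    rw [← hy0e]
    exact intervalIntegral.integral_nonneg hm.le (fun s hs => hknn s hs y0 hy0)
  -- rewrite all interval integrals as set integrals over Ioc
  simp only [intervalIntegral.integral_of_le hm.le]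
  set F : ℝ → ℝ := fun s => -(γ' s * u s + γ s * u' s) - μ s * u s
    + (∫ y in Ioc (0:ℝ) m, k s y * u y) - ω * u s with hF
  have hFint : Integrable F μv := by
    apply Integrable.sub
    · apply Integrable.add
      · exact ((intOn hv'c).neg.sub (intOn (hμc.mul huc)))
      · exact hHint
    · exact (intOn huc).const_mul ω
  -- integrability of the indicator integrand
  have indmul : ∀ (w : ℝ → ℝ) (g : ℝ → ℝ),
      (fun s => Set.indicator {x : ℝ | 0 < w x} g s)
        = fun s => (Set.indicator (Ioi (0:ℝ)) (fun _ => (1:ℝ)) (w s)) * g s := by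
    intro w g
    funext s
    by_cases h : 0 < w s <;> simp [Set.indicator_apply, h, mem_Ioi, mem_setOf_eq]
  have indMeas : ∀ (w g : ℝ → ℝ), ContinuousOn w (Icc 0 m) → AEStronglyMeasurable g μv →
      AEStronglyMeasurable (fun s => Set.indicator {x : ℝ | 0 < w x} g s) μv := by
    intro w g hw hg
    rw [indmul w g]
    have hw' : AEMeasurable w μv := (hw.mono hIoc).aemeasurable measurableSet_Ioc
    have hm1 : Measurable (Set.indicator (Ioi (0:ℝ)) (fun _ => (1:ℝ))) :=
      measurable_const.indicator measurableSet_Ioi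
    exact ((hm1.comp_aemeasurable hw').aestronglyMeasurable).mul hg
  have hIndFint : Integrable (fun s => Set.indicator {x : ℝ | 0 < u x} F s) μv := by
    apply Integrable.mono' hFint.norm (indMeas u F huc hFint.aestronglyMeasurable)
    filter_upwards with s
    exact norm_indicator_le_norm_self F s
  have hIndVint : Integrable (fun s => if 0 < v s then v' s else 0) μv := by
    have : (fun s => if 0 < v s then v' s else 0)
        = fun s => Set.indicator {x : ℝ | 0 < v x} v' s := by
      funext s; by_cases h : 0 < v s <;> simp [Set.indicator_apply, h, mem_setOf_eq]
    rw [this]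
    apply Integrable.mono' (intOn hv'c).norm (indMeas v v' hvc (measOn hv'c))
    filter_upwards with s
    exact norm_indicator_le_norm_self v' s
  set G : ℝ → ℝ := fun s => -(if 0 < v s then v' s else 0)
    + ((∫ y in Ioc (0:ℝ) m, k s y * up y) - ω * up s) with hG
  have hGint : Integrable G μv :=
    hIndVint.neg.add (hHpint.sub ((intOn hupc).const_mul ω))
  -- pointwise comparison on Icc
  have hpt : ∀ s ∈ Icc (0:ℝ) m, Set.indicator {x : ℝ | 0 < u x} F s ≤ G s := by
    intro s hs
    have hkcy : ContinuousOn (fun y => k s y) (Icc 0 m) :=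
      hkc.comp (Continuous.prodMk_right s).continuousOn (fun y hy => ⟨hs, hy⟩)
    have hint1 : Integrable (fun y => k s y * u y) μv := intOn (hkcy.mul huc)
    have hint2 : Integrable (fun y => k s y * up y) μv := intOn (hkcy.mul hupc)
    have hHle : (∫ y in Ioc (0:ℝ) m, k s y * u y) ≤ ∫ y in Ioc (0:ℝ) m, k s y * up y := by
      apply integral_mono_ae hint1 hint2
      filter_upwards [ae_restrict_mem measurableSet_Ioc] with y hy
      exact mul_le_mul_of_nonneg_left (hule y) (hknn s hs y (hIoc hy))
    have hHpnn : 0 ≤ ∫ y in Ioc (0:ℝ) m, k s y * up y :=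
      setIntegral_nonneg measurableSet_Ioc (fun y hy =>
        mul_nonneg (hknn s hs y (hIoc hy)) (hupnn y))
    by_cases h : 0 < u s
    · have hvpos : 0 < v s := mul_pos (hγpos s hs) h
      have hups : up s = u s := max_eq_left h.le
      rw [Set.indicator_of_mem (by exact h : s ∈ {x : ℝ | 0 < u x})]
      rw [hG]
      simp only [hvpos, if_pos, hups]
      have hμu : 0 ≤ μ s * u s := mul_nonneg (hμnn s hs) h.le
      rw [hF]
      simp only [hv']
      linarith
    · have hvnp : ¬ 0 < v s := by
        rw [hv]
        simp only [not_lt]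
        exact mul_nonpos_of_nonneg_of_nonpos (hγpos s hs).le (not_lt.1 h)
      have hups : up s = 0 := max_eq_right (not_lt.1 h)
      rw [Set.indicator_of_notMem (by exact h : s ∉ {x : ℝ | 0 < u x})]
      rw [hG]
      simp only [hvnp, if_neg, if_false, neg_zero, hups, mul_zero, sub_zero, zero_add]
      exact hHpnn
  -- integral comparison
  have hle1 : (∫ s in Ioc (0:ℝ) m, Set.indicator {x : ℝ | 0 < u x} F s) ≤ ∫ s, G s ∂μv := by
    apply integral_mono_ae hIndFint hGint
    filter_upwards [ae_restrict_mem measurableSet_Ioc] with s hs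
    exact hpt s (hIoc hs)
  -- split ∫ G
  have hsplit : ∫ s, G s ∂μv = -(∫ s, (if 0 < v s then v' s else 0) ∂μv)
      + ((∫ s, (∫ y in Ioc (0:ℝ) m, k s y * up y) ∂μv) - ω * ∫ s, up s ∂μv) := by
    simp only [hG]
    have hA : Integrable (fun s => -(if 0 < v s then v' s else 0)) μv := hIndVint.neg
    have hC : Integrable (fun s => ω * up s) μv := (intOn hupc).const_mul ω
    have hB : Integrable (fun s => (∫ y in Ioc (0:ℝ) m, k s y * up y) - ω * up s) μv :=
      hHpint.sub hC
    rw [integral_add hA hB, integral_sub hHpint hC, MeasureTheory.integral_neg,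
      MeasureTheory.integral_const_mul]
  -- first term ≤ 0 by dispersivity lemma
  have hterm1 : 0 ≤ ∫ s, (if 0 < v s then v' s else 0) ∂μv :=
    lemA m hm.le v v' hvc hv'c hvd (by rw [hv]; simp [hu0])
  -- Fubini for the kernel term
  have hswap : (∫ s, (∫ y in Ioc (0:ℝ) m, k s y * up y) ∂μv)
      = ∫ y, (∫ s, k s y * up y ∂μv) ∂μv := by
    apply integral_integral_swap
    exact hKpint
  have hfact : ∀ y, (∫ s, k s y * up y ∂μv) = (∫ s, k s y ∂μv) * up y := fun y =>
    MeasureTheory.integral_mul_const (up y) (fun s => k s y)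
  have hterm2 : (∫ s, (∫ y in Ioc (0:ℝ) m, k s y * up y) ∂μv) ≤ ω * ∫ s, up s ∂μv := by
    rw [hswap]
    have hint3 : Integrable (fun y => ∫ s, k s y * up y ∂μv) μv := hKpint.integral_prod_right
    have hint4 : Integrable (fun y => ω * up y) μv := (intOn hupc).const_mul ω
    calc (∫ y, (∫ s, k s y * up y ∂μv) ∂μv) ≤ ∫ y, ω * up y ∂μv := by
          apply integral_mono_ae hint3 hint4
          filter_upwards [ae_restrict_mem measurableSet_Ioc] with y hy
          rw [hfact y]
          have hbnd : (∫ s, k s y ∂μv) ≤ ω := by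
            have h' : (∫ s in (0:ℝ)..m, k s y) ≤ ω := hω.2 ⟨y, hIoc hy, rfl⟩
            rw [intervalIntegral.integral_of_le hm.le] at h'
            rw [hμv]
            exact h'
          exact mul_le_mul_of_nonneg_right hbnd (hupnn y)
      _ = ω * ∫ s, up s ∂μv := MeasureTheory.integral_const_mul ω up
  linarith
end
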